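/- arXiv:math/0311319 — 9 statements merged into one kernel-verified Lean document; each statement's English description precedes it below -/
import Mathlib

section
/- For every ideal I of R_∞ there exist an integer b ≥ 0, integers 0 ≤ m₀ < m₁ < ⋯ < m_{b−1}, and polynomials f₀, …, f_{b−1} ∈ ℤ_p[X], each monic and dividing X^n − 1, satisfying the divisibility chain f_{b−1} | f_{b−2} | ⋯ | f₁ | f₀, such that I is the ideal of R_∞ generated by the images of p^{m₀}·f₀, p^{m₁}·f₁, …, p^{m_{b−1}}·f_{b−1} (with b = 0, the empty set of generators, giving the zero ideal). -/
open Polynomial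

/-- The quotient ring `ℤ_p[X]/(X^n - 1)`. -/
abbrev RquotP (p n : ℕ) [Fact p.Prime] :=
  Polynomial ℤ_[p] ⧸ Ideal.span {(X : Polynomial ℤ_[p]) ^ n - 1}

/-- The natural quotient map `ℤ_p[X] → ℤ_p[X]/(X^n - 1)`. -/
noncomputable abbrev pmk (p n : ℕ) [Fact p.Prime] : Polynomial ℤ_[p] →+* RquotP p n :=
  Ideal.Quotient.mk _

namespace Stmt10

variable {p : ℕ} [hp : Fact p.Prime]

/-- a section of `PadicInt.toZMod`. -/
noncomputable def sec (p : ℕ) [Fact p.Prime] (t : ZMod p) : ℤ_[p] := (t.val : ℤ_[p])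

lemma toZMod_sec (t : ZMod p) : PadicInt.toZMod (sec p t) = t := by
  simp [sec, map_natCast, ZMod.natCast_val, ZMod.cast_id]

lemma sec_zero : sec p 0 = 0 := by
  simp [sec, ZMod.val_zero]

lemma sec_one : sec p 1 = 1 := by
  have : (1 : ZMod p).val = 1 := ZMod.val_one_eq_one_mod p ▸ Nat.mod_eq_of_lt hp.out.one_lt
  simp [sec, this]

lemma toZMod_surjective : Function.Surjective (PadicInt.toZMod (p := p)) :=
  fun t => ⟨sec p t, toZMod_sec t⟩

lemma mapToZMod_surjective :
    Function.Surjective (Polynomial.map (PadicInt.toZMod (p := p))) :=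
  Polynomial.map_surjective _ toZMod_surjective

/-- coefficientwise lift of polynomials, preserving degree and monicity. -/
noncomputable def plift (q : (ZMod p)[X]) : (ℤ_[p])[X] :=
  ∑ i ∈ Finset.range (q.natDegree + 1), C (sec p (q.coeff i)) * X ^ i

lemma coeff_plift (q : (ZMod p)[X]) (i : ℕ) : (plift q).coeff i = sec p (q.coeff i) := by
  rw [plift, finset_sum_coeff]
  simp only [coeff_C_mul, coeff_X_pow, mul_ite, mul_one, mul_zero]
  rw [Finset.sum_ite_eq (Finset.range (q.natDegree + 1)) i]
  split
  · rfl
  · next h =>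
    rw [Finset.mem_range, Nat.lt_succ_iff, not_le] at h
    rw [q.coeff_eq_zero_of_natDegree_lt h, sec_zero]

lemma map_plift (q : (ZMod p)[X]) : (plift q).map PadicInt.toZMod = q := by
  ext i
  rw [coeff_map, coeff_plift, toZMod_sec]

lemma natDegree_plift_le (q : (ZMod p)[X]) : (plift q).natDegree ≤ q.natDegree := by
  apply natDegree_le_iff_coeff_eq_zero.2
  intro i hi
  rw [coeff_plift, q.coeff_eq_zero_of_natDegree_lt hi, sec_zero]

lemma degree_plift_le (q : (ZMod p)[X]) : (plift q).degree ≤ q.degree := by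
  rcases eq_or_ne q 0 with rfl | hq
  · have : plift (0 : (ZMod p)[X]) = 0 := by
      ext i; rw [coeff_plift]; simp [sec_zero]
    simp [this]
  · calc (plift q).degree ≤ ((plift q).natDegree : WithBot ℕ) := degree_le_natDegree
      _ ≤ (q.natDegree : WithBot ℕ) := by exact_mod_cast natDegree_plift_le q
      _ = q.degree := (degree_eq_natDegree hq).symm

lemma monic_plift {q : (ZMod p)[X]} (hq : q.Monic) : (plift q).Monic := by
  apply monic_of_natDegree_le_of_coeff_eq_one q.natDegree (natDegree_plift_le q)
  rw [coeff_plift, hq.coeff_natDegree, sec_one]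

/-- If a polynomial reduces to 0 mod p then it is divisible by `C p`. -/
lemma Cp_dvd_of_map_eq_zero {f : (ℤ_[p])[X]} (h : f.map PadicInt.toZMod = 0) :
    C (p : ℤ_[p]) ∣ f := by
  rw [C_dvd_iff_dvd_coeff]
  intro i
  have : PadicInt.toZMod (f.coeff i) = 0 := by
    have := congrArg (fun g => Polynomial.coeff g i) h
    simpa [coeff_map] using this
  have hker : f.coeff i ∈ RingHom.ker (PadicInt.toZMod (p := p)) := this
  rw [PadicInt.ker_toZMod, PadicInt.maximalIdeal_eq_span_p, Ideal.mem_span_singleton] at hker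
  exact hker

lemma map_eq_of_Cp_dvd {f g : (ℤ_[p])[X]} (h : C (p : ℤ_[p]) ∣ f - g) :
    f.map PadicInt.toZMod = g.map PadicInt.toZMod := by
  obtain ⟨c, hc⟩ := h
  have : f = g + C (p : ℤ_[p]) * c := by linear_combination hc
  rw [this]
  simp [Polynomial.map_add, Polynomial.map_mul, map_C]

/-- key unit lemma: in a module-finite `ℤ_[p]`-algebra, `1 + p*x` is invertible,
and more generally anything with inverse mod `p`. -/
lemma isUnit_of_bezout {B : Type*} [CommRing B] [Algebra ℤ_[p] B] [Module.Finite ℤ_[p] B]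
    (b y c : B) (h : b * y = 1 + (p : B) * c) : IsUnit b := by
  have : Algebra.IsIntegral ℤ_[p] B := Algebra.IsIntegral.of_finite _ _
  have hpjac : (p : B) ∈ Ideal.jacobson (⊥ : Ideal B) := by
    rw [Ideal.jacobson]
    refine Ideal.mem_sInf.2 ?_
    rintro m ⟨-, hm⟩
    have : (Ideal.comap (algebraMap ℤ_[p] B) m).IsMaximal :=
      Ideal.isMaximal_comap_of_isIntegral_of_isMaximal m
    have heq : Ideal.comap (algebraMap ℤ_[p] B) m = IsLocalRing.maximalIdeal ℤ_[p] :=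
      IsLocalRing.eq_maximalIdeal this
    have hpm : (p : ℤ_[p]) ∈ Ideal.comap (algebraMap ℤ_[p] B) m := by
      rw [heq, PadicInt.maximalIdeal_eq_span_p]
      exact Ideal.subset_span rfl
    have := hpm
    rwa [Ideal.mem_comap, map_natCast] at this
  have h1 : b * y - 1 ∈ Ideal.jacobson (⊥ : Ideal B) := by
    have : b * y - 1 = (p : B) * c := by linear_combination h
    rw [this]
    exact Ideal.mul_mem_right _ _ hpjac
  have := Ideal.isUnit_of_sub_one_mem_jacobson_bot _ h1
  exact isUnit_of_mul_isUnit_left this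

lemma finite_adjoinRoot {u : (ℤ_[p])[X]} (hu : u.Monic) :
    Module.Finite ℤ_[p] (AdjoinRoot u) :=
  Module.Finite.of_basis (AdjoinRoot.powerBasis' hu).basis

/-- lifting a Bézout relation mod p -/
lemma exists_bezout {x y : (ℤ_[p])[X]}
    (h : IsCoprime (x.map PadicInt.toZMod) (y.map PadicInt.toZMod)) :
    ∃ a b c : (ℤ_[p])[X], a * x + b * y = 1 + C (p : ℤ_[p]) * c := by
  obtain ⟨ab, bb, hab⟩ := h
  obtain ⟨a, ha⟩ := mapToZMod_surjective ab
  obtain ⟨b, hb⟩ := mapToZMod_surjective bb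
  have hz : (a * x + b * y - 1).map PadicInt.toZMod = 0 := by
    simp only [Polynomial.map_sub, Polynomial.map_add, Polynomial.map_mul, Polynomial.map_one,
      ha, hb, hab, sub_self]
  obtain ⟨c, hc⟩ := Cp_dvd_of_map_eq_zero hz
  exact ⟨a, b, c, by linear_combination hc⟩

/-- monic divisibility with equal degrees gives equality -/
lemma monic_dvd_monic_eq {R : Type*} [CommRing R] [IsDomain R] {u v : R[X]}
    (hu : u.Monic) (hv : v.Monic) (hdvd : u ∣ v) (hdeg : v.natDegree ≤ u.natDegree) : u = v :=
  eq_of_dvd_of_natDegree_le_of_leadingCoeff hdvd hdeg (by rw [hu.leadingCoeff, hv.leadingCoeff])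

variable {p : ℕ} [hp : Fact p.Prime]

-- limit machinery over ℤ_[p]
lemma mem_smul_top_iff (m : ℕ) (x : ℤ_[p]) :
    x ∈ (IsLocalRing.maximalIdeal ℤ_[p]) ^ m • (⊤ : Submodule ℤ_[p] ℤ_[p]) ↔
      (p : ℤ_[p]) ^ m ∣ x := by
  rw [smul_eq_mul, Ideal.mul_top, PadicInt.maximalIdeal_eq_span_p,
    Ideal.span_singleton_pow, Ideal.mem_span_singleton]

lemma pow_dvd_of_tail {d : ℕ → ℤ_[p]} (h : ∀ k, (p : ℤ_[p]) ^ (k + 1) ∣ d (k + 1) - d k) :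
    ∀ {m n : ℕ}, m ≤ n → (p : ℤ_[p]) ^ m ∣ d n - d m := by
  intro m n hmn
  induction n, hmn using Nat.le_induction with
  | base => simp
  | succ n hmn ih =>
    have : d (n + 1) - d m = (d (n + 1) - d n) + (d n - d m) := by ring
    rw [this]
    exact dvd_add ((pow_dvd_pow _ (by omega)).trans (h n)) ih

lemma exists_limit {d : ℕ → ℤ_[p]} (h : ∀ {m n : ℕ}, m ≤ n → (p : ℤ_[p]) ^ m ∣ d n - d m) :
    ∃ L, ∀ k, (p : ℤ_[p]) ^ k ∣ L - d k := by
  have hpre : IsPrecomplete (IsLocalRing.maximalIdeal ℤ_[p]) ℤ_[p] := inferInstance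
  obtain ⟨L, hL⟩ := hpre.prec (f := d) (by
    intro m n hmn
    rw [SModEq.sub_mem, mem_smul_top_iff]
    exact dvd_sub_comm.mp (h hmn))
  exact ⟨L, fun k => by
    have := hL k
    rw [SModEq.sub_mem, mem_smul_top_iff] at this
    exact dvd_sub_comm.mp this⟩

lemma eq_zero_of_forall_pow_dvd (x : ℤ_[p]) (h : ∀ k, (p : ℤ_[p]) ^ k ∣ x) : x = 0 := by
  have hh : IsHausdorff (IsLocalRing.maximalIdeal ℤ_[p]) ℤ_[p] := inferInstance
  exact hh.haus x fun k => by
    rw [SModEq.zero, mem_smul_top_iff]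
    exact h k


section Hensel

/-- invariant of the Hensel iteration -/
def Inv (F : (ℤ_[p])[X]) (gb hb : (ZMod p)[X]) (k : ℕ) (G H : (ℤ_[p])[X]) : Prop :=
  G.Monic ∧ H.Monic ∧ G.map PadicInt.toZMod = gb ∧ H.map PadicInt.toZMod = hb ∧
    C ((p : ℤ_[p]) ^ (k + 1)) ∣ (F - G * H)

lemma hensel_step {F : (ℤ_[p])[X]} (hF : F.Monic) {gb hb : (ZMod p)[X]}
    (hgb : gb.Monic) (hhb : hb.Monic) (hfact : F.map PadicInt.toZMod = gb * hb)
    (hcop : IsCoprime gb hb) (k : ℕ) (G H : (ℤ_[p])[X]) (hi : Inv F gb hb k G H) :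
    ∃ G' H', Inv F gb hb (k + 1) G' H' ∧
      C ((p : ℤ_[p]) ^ (k + 1)) ∣ (G' - G) ∧ C ((p : ℤ_[p]) ^ (k + 1)) ∣ (H' - H) := by
  obtain ⟨hGm, hHm, hGmap, hHmap, E, hE⟩ := hi
  have hpne : (p : ℤ_[p]) ≠ 0 := Nat.cast_ne_zero.2 hp.out.ne_zero
  have hpkne : ((p : ℤ_[p]) ^ (k + 1)) ≠ 0 := pow_ne_zero _ hpne
  by_cases h0 : F - G * H = 0
  · refine ⟨G, H, ⟨hGm, hHm, hGmap, hHmap, h0 ▸ dvd_zero _⟩, by simp, by simp⟩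
  -- degrees
  have hdegGk : G.natDegree = gb.natDegree := by
    rw [← hGm.natDegree_map PadicInt.toZMod, hGmap]
  have hdegHk : H.natDegree = hb.natDegree := by
    rw [← hHm.natDegree_map PadicInt.toZMod, hHmap]
  have hFdeg : F.natDegree = gb.natDegree + hb.natDegree := by
    rw [← hF.natDegree_map PadicInt.toZMod, hfact, hgb.natDegree_mul hhb]
  have hGH : (G * H).Monic := hGm.mul hHm
  have hdegGH : (G * H).natDegree = F.natDegree := by
    rw [hGm.natDegree_mul hHm, hdegGk, hdegHk, hFdeg]
  have hsub : (F - G * H).degree < F.degree := by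
    refine degree_sub_lt ?_ hF.ne_zero (by rw [hF.leadingCoeff, hGH.leadingCoeff])
    rw [degree_eq_natDegree hF.ne_zero, degree_eq_natDegree hGH.ne_zero, hdegGH]
  have hEdeg : E.degree < F.degree := by
    have h1 : (F - G * H).degree = E.degree := by
      rw [hE, degree_mul, degree_C hpkne, zero_add]
    exact h1 ▸ hsub
  have hgbne : gb ≠ 0 := hgb.ne_zero
  have hhbne : hb ≠ 0 := hhb.ne_zero
  have hgbbot : gb.degree ≠ ⊥ := degree_ne_bot.mpr hgbne
  have hhbbot : hb.degree ≠ ⊥ := degree_ne_bot.mpr hhbne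
  have hFdeg' : F.degree = gb.degree + hb.degree := by
    rw [degree_eq_natDegree hF.ne_zero, degree_eq_natDegree hgbne,
      degree_eq_natDegree hhbne, hFdeg]
    exact_mod_cast Nat.cast_add _ _
  set Ebar := E.map PadicInt.toZMod with hEbar
  have hEbardeg : Ebar.degree < gb.degree + hb.degree := by
    rw [← hFdeg']
    exact lt_of_le_of_lt degree_map_le hEdeg
  obtain ⟨ab, bb, hab⟩ := hcop
  set q := (Ebar * bb) /ₘ gb with hq
  set r := (Ebar * bb) %ₘ gb with hr
  have hqr : r + gb * q = Ebar * bb := modByMonic_add_div _ gb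
  have hrdeg : r.degree < gb.degree := degree_modByMonic_lt _ hgb
  set dh := Ebar * ab + q * hb with hdh
  have hid : r * hb + dh * gb = Ebar := by
    linear_combination hb * hqr + Ebar * hab
  have hrhb : (r * hb).degree < gb.degree + hb.degree := by
    rcases eq_or_ne r 0 with h | h
    · rw [h, zero_mul, degree_zero]
      exact bot_lt_iff_ne_bot.2 (fun hc => (WithBot.add_eq_bot.mp hc).elim hgbbot hhbbot)
    · rw [degree_mul]
      exact WithBot.add_lt_add_right hhbbot hrdeg
  have hdhdeg : dh.degree < hb.degree := by
    rcases eq_or_ne dh 0 with h | h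
    · rw [h, degree_zero]; exact bot_lt_iff_ne_bot.2 hhbbot
    · have h5 : (dh * gb).degree < gb.degree + hb.degree := by
        have h6 : dh * gb = Ebar - r * hb := by linear_combination hid
        rw [h6]
        exact lt_of_le_of_lt (degree_sub_le _ _) (max_lt hEbardeg hrhb)
      rw [degree_mul, add_comm gb.degree hb.degree] at h5
      exact (WithBot.add_lt_add_iff_right hgbbot).mp h5
  set c1 : ℤ_[p] := (p : ℤ_[p]) ^ (k + 1) with hc1
  have hdegGb : G.degree = gb.degree := by
    rw [degree_eq_natDegree hGm.ne_zero, degree_eq_natDegree hgbne, hdegGk]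
  have hdegHb : H.degree = hb.degree := by
    rw [degree_eq_natDegree hHm.ne_zero, degree_eq_natDegree hhbne, hdegHk]
  have hmapc1 : PadicInt.toZMod c1 = 0 := by
    rw [hc1, map_pow, map_natCast, ZMod.natCast_self, zero_pow (Nat.succ_ne_zero k)]
  have hdegCr : (C c1 * plift r).degree < G.degree := by
    rw [degree_C_mul hpkne, hdegGb]
    exact lt_of_le_of_lt (degree_plift_le r) hrdeg
  have hdegCdh : (C c1 * plift dh).degree < H.degree := by
    rw [degree_C_mul hpkne, hdegHb]
    exact lt_of_le_of_lt (degree_plift_le dh) hdhdeg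
  refine ⟨G + C c1 * plift r, H + C c1 * plift dh,
    ⟨hGm.add_of_left hdegCr, hHm.add_of_left hdegCdh, ?_, ?_, ?_⟩,
    ⟨plift r, by ring⟩, ⟨plift dh, by ring⟩⟩
  · simp [Polynomial.map_add, Polynomial.map_mul, map_C, hmapc1, hGmap]
  · simp [Polynomial.map_add, Polynomial.map_mul, map_C, hmapc1, hHmap]
  · have hkey : F - (G + C c1 * plift r) * (H + C c1 * plift dh)
        = C c1 * (E - (G * plift dh + H * plift r) - C c1 * (plift r * plift dh)) := by
      linear_combination hE
    have hW : C ((p : ℤ_[p])) ∣ (E - (G * plift dh + H * plift r) - C c1 * (plift r * plift dh)) := by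
      apply Cp_dvd_of_map_eq_zero
      simp only [Polynomial.map_sub, Polynomial.map_add, Polynomial.map_mul, map_C, hmapc1,
        map_plift, ← hEbar, hGmap, hHmap, C_0, zero_mul, sub_zero]
      linear_combination - hid
    obtain ⟨V, hV⟩ := hW
    refine ⟨V, ?_⟩
    rw [hkey, hV, ← mul_assoc, ← map_mul C, hc1]
    norm_num [pow_succ]

/-- generic dependent-choice sequence construction -/
noncomputable def mkSeq {α : Type*} (P : ℕ → α → Prop) (Rel : ℕ → α → α → Prop)
    (init : α) (h0 : P 0 init)
    (step : ∀ k a, P k a → ∃ b, P (k + 1) b ∧ Rel k a b) : (k : ℕ) → {a : α // P k a}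
  | 0 => ⟨init, h0⟩
  | (k + 1) =>
    ⟨Classical.choose (step k (mkSeq P Rel init h0 step k).1 (mkSeq P Rel init h0 step k).2),
      (Classical.choose_spec (step k (mkSeq P Rel init h0 step k).1
        (mkSeq P Rel init h0 step k).2)).1⟩

lemma mkSeq_rel {α : Type*} (P : ℕ → α → Prop) (Rel : ℕ → α → α → Prop)
    (init : α) (h0 : P 0 init)
    (step : ∀ k a, P k a → ∃ b, P (k + 1) b ∧ Rel k a b) (k : ℕ) :
    Rel k (mkSeq P Rel init h0 step k).1 (mkSeq P Rel init h0 step (k + 1)).1 :=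
  (Classical.choose_spec (step k (mkSeq P Rel init h0 step k).1
    (mkSeq P Rel init h0 step k).2)).2

theorem hensel_factor (F : (ℤ_[p])[X]) (hF : F.Monic) {gb hb : (ZMod p)[X]}
    (hgb : gb.Monic) (hhb : hb.Monic) (hfact : F.map PadicInt.toZMod = gb * hb)
    (hcop : IsCoprime gb hb) :
    ∃ g h : (ℤ_[p])[X], g.Monic ∧ h.Monic ∧ F = g * h ∧
      g.map PadicInt.toZMod = gb ∧ h.map PadicInt.toZMod = hb := by
  classical
  -- the invariant as a predicate on pairs
  set P : ℕ → (ℤ_[p])[X] × (ℤ_[p])[X] → Prop := fun k a => Inv F gb hb k a.1 a.2 with hP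
  set Rel : ℕ → (ℤ_[p])[X] × (ℤ_[p])[X] → (ℤ_[p])[X] × (ℤ_[p])[X] → Prop := fun k a b =>
    C ((p : ℤ_[p]) ^ (k + 1)) ∣ (b.1 - a.1) ∧ C ((p : ℤ_[p]) ^ (k + 1)) ∣ (b.2 - a.2) with hRel
  have h0 : P 0 (plift gb, plift hb) := by
    refine ⟨monic_plift hgb, monic_plift hhb, map_plift gb, map_plift hb, ?_⟩
    rw [pow_one]
    apply Cp_dvd_of_map_eq_zero
    simp [Polynomial.map_sub, Polynomial.map_mul, map_plift, hfact]
  have hstep : ∀ k a, P k a → ∃ b, P (k + 1) b ∧ Rel k a b := by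
    rintro k ⟨G, H⟩ ha
    obtain ⟨G', H', h1, h2, h3⟩ := hensel_step hF hgb hhb hfact hcop k G H ha
    exact ⟨(G', H'), h1, h2, h3⟩
  set S := mkSeq P Rel (plift gb, plift hb) h0 hstep with hS
  set G : ℕ → (ℤ_[p])[X] := fun k => (S k).1.1 with hG
  set H : ℕ → (ℤ_[p])[X] := fun k => (S k).1.2 with hH
  have hInv : ∀ k, Inv F gb hb k (G k) (H k) := fun k => (S k).2
  have hrel : ∀ k, C ((p : ℤ_[p]) ^ (k + 1)) ∣ (G (k + 1) - G k) ∧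
      C ((p : ℤ_[p]) ^ (k + 1)) ∣ (H (k + 1) - H k) := fun k =>
    mkSeq_rel P Rel (plift gb, plift hb) h0 hstep k
  -- coefficientwise Cauchy property and limits
  have cauchyG : ∀ i : ℕ, ∀ {m n : ℕ}, m ≤ n →
      (p : ℤ_[p]) ^ m ∣ (G n).coeff i - (G m).coeff i := by
    intro i
    apply pow_dvd_of_tail (d := fun k => (G k).coeff i)
    intro k
    have := (hrel k).1
    rw [C_dvd_iff_dvd_coeff] at this
    simpa [coeff_sub] using this i
  have cauchyH : ∀ i : ℕ, ∀ {m n : ℕ}, m ≤ n →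
      (p : ℤ_[p]) ^ m ∣ (H n).coeff i - (H m).coeff i := by
    intro i
    apply pow_dvd_of_tail (d := fun k => (H k).coeff i)
    intro k
    have := (hrel k).2
    rw [C_dvd_iff_dvd_coeff] at this
    simpa [coeff_sub] using this i
  choose Lg hLg using fun i => exists_limit (cauchyG i)
  choose Lh hLh using fun i => exists_limit (cauchyH i)
  -- degree facts
  have hdegG : ∀ k, (G k).natDegree = gb.natDegree := fun k => by
    rw [← ((hInv k).1).natDegree_map PadicInt.toZMod, (hInv k).2.2.1]
  have hdegH : ∀ k, (H k).natDegree = hb.natDegree := fun k => by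
    rw [← ((hInv k).2.1).natDegree_map PadicInt.toZMod, (hInv k).2.2.2.1]
  -- the limit polynomials
  set gL : (ℤ_[p])[X] := ∑ i ∈ Finset.range (gb.natDegree + 1), C (Lg i) * X ^ i with hgL
  set hL : (ℤ_[p])[X] := ∑ i ∈ Finset.range (hb.natDegree + 1), C (Lh i) * X ^ i with hhL
  have coeff_gL : ∀ i, gL.coeff i = if i < gb.natDegree + 1 then Lg i else 0 := by
    intro i
    rw [hgL, finset_sum_coeff]
    simp only [coeff_C_mul, coeff_X_pow, mul_ite, mul_one, mul_zero]
    rw [Finset.sum_ite_eq (Finset.range (gb.natDegree + 1)) i]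
    simp [Finset.mem_range]
  have coeff_hL : ∀ i, hL.coeff i = if i < hb.natDegree + 1 then Lh i else 0 := by
    intro i
    rw [hhL, finset_sum_coeff]
    simp only [coeff_C_mul, coeff_X_pow, mul_ite, mul_one, mul_zero]
    rw [Finset.sum_ite_eq (Finset.range (hb.natDegree + 1)) i]
    simp [Finset.mem_range]
  -- key congruences
  have hGC : ∀ k, C ((p : ℤ_[p]) ^ k) ∣ gL - G k := by
    intro k
    rw [C_dvd_iff_dvd_coeff]
    intro i
    rw [coeff_sub, coeff_gL]
    split
    · exact hLg i k
    · next h =>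
      rw [not_lt] at h
      rw [(G k).coeff_eq_zero_of_natDegree_lt (by rw [hdegG k]; omega)]
      simp
  have hHC : ∀ k, C ((p : ℤ_[p]) ^ k) ∣ hL - H k := by
    intro k
    rw [C_dvd_iff_dvd_coeff]
    intro i
    rw [coeff_sub, coeff_hL]
    split
    · exact hLh i k
    · next h =>
      rw [(H k).coeff_eq_zero_of_natDegree_lt (by rw [hdegH k]; omega)]
      simp
  have hmonicgL : gL.Monic := by
    apply monic_of_natDegree_le_of_coeff_eq_one gb.natDegree
    · apply natDegree_le_iff_coeff_eq_zero.2
      intro i hi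
      rw [coeff_gL, if_neg (by omega)]
    · rw [coeff_gL, if_pos (by omega)]
      have h1 : ∀ k, (G k).coeff gb.natDegree = 1 := fun k => by
        have h2 := ((hInv k).1).coeff_natDegree
        rwa [hdegG k] at h2
      have h3 : Lg gb.natDegree - 1 = 0 := by
        refine eq_zero_of_forall_pow_dvd _ fun k => ?_
        have := hLg gb.natDegree k
        rwa [h1 k] at this
      have := sub_eq_zero.mp h3
      simpa using this
  have hmonichL : hL.Monic := by
    apply monic_of_natDegree_le_of_coeff_eq_one hb.natDegree
    · apply natDegree_le_iff_coeff_eq_zero.2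
      intro i hi
      rw [coeff_hL, if_neg (by omega)]
    · rw [coeff_hL, if_pos (by omega)]
      have h1 : ∀ k, (H k).coeff hb.natDegree = 1 := fun k => by
        have h2 := ((hInv k).2.1).coeff_natDegree
        rwa [hdegH k] at h2
      have h3 : Lh hb.natDegree - 1 = 0 := by
        refine eq_zero_of_forall_pow_dvd _ fun k => ?_
        have := hLh hb.natDegree k
        rwa [h1 k] at this
      have := sub_eq_zero.mp h3
      simpa using this
  have hmapgL : gL.map PadicInt.toZMod = gb := by
    have h1 := hGC 1
    rw [pow_one] at h1
    rw [map_eq_of_Cp_dvd h1, (hInv 1).2.2.1]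
  have hmaphL : hL.map PadicInt.toZMod = hb := by
    have h1 := hHC 1
    rw [pow_one] at h1
    rw [map_eq_of_Cp_dvd h1, (hInv 1).2.2.2.1]
  have hprod : F = gL * hL := by
    have key : ∀ k, C ((p : ℤ_[p]) ^ k) ∣ F - gL * hL := by
      intro k
      have h1 : F - gL * hL = (F - G k * H k) + (G k - gL) * H k + gL * (H k - hL) := by ring
      rw [h1]
      refine dvd_add (dvd_add ?_ ?_) ?_
      · exact dvd_trans (map_dvd C (pow_dvd_pow _ (Nat.le_succ k))) ((hInv k).2.2.2.2)
      · exact (dvd_sub_comm.mp (hGC k)).mul_right _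
      · exact (dvd_sub_comm.mpr (hHC k)).mul_left _
    have hz : ∀ i, (F - gL * hL).coeff i = 0 := fun i => by
      refine eq_zero_of_forall_pow_dvd _ fun k => ?_
      have h2 := key k
      rw [C_dvd_iff_dvd_coeff] at h2
      exact h2 i
    have h0 : F - gL * hL = 0 := Polynomial.ext fun i => by rw [hz i, coeff_zero]
    exact sub_eq_zero.mp h0
  exact ⟨gL, hL, hmonicgL, hmonichL, hprod, hmapgL, hmaphL⟩

end Hensel

lemma exists_monic_lift_divisor {F : (ℤ_[p])[X]} (hF : F.Monic)
    (hsep : (F.map PadicInt.toZMod).Separable) {gb : (ZMod p)[X]} (hgb : gb.Monic)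
    (hdvd : gb ∣ F.map PadicInt.toZMod) :
    ∃ g, g.Monic ∧ g ∣ F ∧ g.map PadicInt.toZMod = gb := by
  obtain ⟨hbb, hfact⟩ := hdvd
  have hmoni : (F.map PadicInt.toZMod).Monic := hF.map _
  have hhb : hbb.Monic := by
    rw [hfact] at hmoni
    exact hgb.of_mul_monic_left hmoni
  have hcop : IsCoprime gb hbb := by
    apply Separable.isCoprime
    rw [← hfact]
    exact hsep
  obtain ⟨g, h, hgm, _, hprod, hgmap, _⟩ := hensel_factor F hF hgb hhb hfact hcop
  exact ⟨g, hgm, ⟨h, hprod⟩, hgmap⟩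

lemma monic_divisor_unique {F u v : (ℤ_[p])[X]}
    (hsep : (F.map PadicInt.toZMod).Separable) (hu : u.Monic) (hv : v.Monic)
    (hud : u ∣ F) (hvd : v ∣ F) (heq : u.map PadicInt.toZMod = v.map PadicInt.toZMod) :
    u = v := by
  obtain ⟨b, hb⟩ := hvd
  have hcop : IsCoprime (u.map PadicInt.toZMod) (b.map PadicInt.toZMod) := by
    rw [heq]
    apply Separable.isCoprime
    rw [← Polynomial.map_mul, ← hb]
    exact hsep
  obtain ⟨x, y, c, hxy⟩ := exists_bezout hcop
  have hfin : Module.Finite ℤ_[p] (AdjoinRoot u) := finite_adjoinRoot hu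
  have hxy' : x * u + y * b = 1 + ((p : ℕ) : (ℤ_[p])[X]) * c := by
    rwa [C_eq_natCast] at hxy
  have hbz : (AdjoinRoot.mk u b) * (AdjoinRoot.mk u y)
      = 1 + (p : AdjoinRoot u) * AdjoinRoot.mk u c := by
    have h2 := congrArg (AdjoinRoot.mk u) hxy'
    simp only [map_add, map_mul, map_one, map_natCast, AdjoinRoot.mk_self,
      mul_zero, zero_add, add_zero] at h2
    rw [← h2]
    ring
  have hbunit : IsUnit (AdjoinRoot.mk u b) := isUnit_of_bezout _ _ _ hbz
  have hmkF : AdjoinRoot.mk u F = 0 := AdjoinRoot.mk_eq_zero.mpr hud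
  have hv0 : AdjoinRoot.mk u v = 0 := by
    have h2 : AdjoinRoot.mk u b * AdjoinRoot.mk u v = AdjoinRoot.mk u b * 0 := by
      rw [mul_zero, mul_comm, ← map_mul, ← hb, hmkF]
    exact hbunit.mul_left_cancel h2
  have hudvdv : u ∣ v := AdjoinRoot.mk_eq_zero.mp hv0
  have hdeg : v.natDegree ≤ u.natDegree := by
    rw [← hv.natDegree_map PadicInt.toZMod, ← heq, hu.natDegree_map]
  exact monic_dvd_monic_eq hu hv hudvdv hdeg

lemma exists_monic_gen (Ib : Ideal ((ZMod p)[X])) {FF : (ZMod p)[X]} (hFF : FF.Monic)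
    (hmem : FF ∈ Ib) : ∃ g : (ZMod p)[X], g.Monic ∧ Ib = Ideal.span {g} ∧ g ∣ FF := by
  have hprin := IsPrincipalIdealRing.principal Ib
  set g0 := Submodule.IsPrincipal.generator Ib with hg0def
  have hg0 : Ideal.span {g0} = Ib := Submodule.IsPrincipal.span_singleton_generator Ib
  have hdvd0 : g0 ∣ FF := by
    rw [← Ideal.mem_span_singleton, hg0]
    exact hmem
  have hg0ne : g0 ≠ 0 := by
    rintro h
    rw [h] at hdvd0
    exact hFF.ne_zero (zero_dvd_iff.mp hdvd0)
  have hunit : IsUnit (C (g0.leadingCoeff)⁻¹) :=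
    isUnit_C.2 (isUnit_iff_ne_zero.2 (inv_ne_zero (leadingCoeff_ne_zero.2 hg0ne)))
  refine ⟨g0 * C (g0.leadingCoeff)⁻¹, monic_mul_leadingCoeff_inv hg0ne, ?_, ?_⟩
  · rw [← hg0]
    have hunit2 : IsUnit (C (g0.leadingCoeff)) :=
      isUnit_C.2 (isUnit_iff_ne_zero.2 (leadingCoeff_ne_zero.2 hg0ne))
    refine (Ideal.span_singleton_eq_span_singleton.mpr ⟨hunit2.unit, ?_⟩).symm
    rw [IsUnit.unit_spec, mul_assoc, ← map_mul C,
      inv_mul_cancel₀ (leadingCoeff_ne_zero.2 hg0ne), map_one, mul_one]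
  · exact dvd_trans ⟨C g0.leadingCoeff, by rw [mul_assoc, ← map_mul C,
      inv_mul_cancel₀ (leadingCoeff_ne_zero.2 hg0ne), map_one, mul_one]⟩ hdvd0

lemma monic_Xn_sub_one {R : Type*} [CommRing R] {n : ℕ} (hn : 0 < n) :
    ((X : R[X]) ^ n - 1).Monic := by
  simpa using monic_X_pow_sub_C (1 : R) hn.ne'

lemma sep_Xn {n : ℕ} (hn : 0 < n) (hpn : ¬ p ∣ n) :
    ((X : (ZMod p)[X]) ^ n - 1).Separable := by
  have h1 : ((n : ZMod p)) ≠ 0 := fun h => hpn ((ZMod.natCast_eq_zero_iff n p).mp h)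
  have := separable_X_pow_sub_C (F := ZMod p) (1 : ZMod p) h1 one_ne_zero
  simpa using this

lemma map_Xn (n : ℕ) : ((X : (ℤ_[p])[X]) ^ n - 1).map PadicInt.toZMod
    = (X : (ZMod p)[X]) ^ n - 1 := by
  simp

lemma finite_Rquot {n : ℕ} (hn : 0 < n) : Module.Finite ℤ_[p] (RquotP p n) :=
  finite_adjoinRoot (monic_Xn_sub_one hn)
-- Krull lemma
lemma ideal_mem_of_approx {n : ℕ} (hn : 0 < n) (T : Ideal (RquotP p n)) (x : RquotP p n)
    (h : ∀ N : ℕ, ∃ t ∈ T, ∃ r, x = t + (p : RquotP p n) ^ N * r) : x ∈ T := by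
  haveI hfin : Module.Finite ℤ_[p] (RquotP p n) := finite_Rquot hn
  haveI hfinq : Module.Finite ℤ_[p] ((RquotP p n) ⧸ (T : Submodule (RquotP p n) (RquotP p n))) :=
    Module.Finite.quotient ℤ_[p] _
  have hkrull := Ideal.iInf_pow_smul_eq_bot_of_isLocalRing
    (M := (RquotP p n) ⧸ (T : Submodule (RquotP p n) (RquotP p n)))
    (IsLocalRing.maximalIdeal ℤ_[p]) (Ideal.IsMaximal.ne_top inferInstance)
  have hmem : Submodule.Quotient.mk (p := (T : Submodule (RquotP p n) (RquotP p n))) x = 0 := by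
    have hbot : Submodule.Quotient.mk (p := (T : Submodule (RquotP p n) (RquotP p n))) x
        ∈ (⊥ : Submodule ℤ_[p] _) := by
      rw [← hkrull]
      refine Submodule.mem_iInf _ |>.mpr fun N => ?_
      obtain ⟨t, ht, r, hr⟩ := h N
      have h1 : (p : RquotP p n) ^ N * r = ((p : ℤ_[p]) ^ N) • r := by
        have h := Algebra.smul_def ((p : ℤ_[p]) ^ N) r
        rw [map_pow, map_natCast] at h
        exact h.symm
      have h2 : Submodule.Quotient.mk (p := (T : Submodule (RquotP p n) (RquotP p n))) x
          = ((p : ℤ_[p]) ^ N) • Submodule.Quotient.mk r := by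
        rw [hr, Submodule.Quotient.mk_add, (Submodule.Quotient.mk_eq_zero _).mpr ht, zero_add,
          h1, Submodule.Quotient.mk_smul]
      rw [h2]
      refine Submodule.smul_mem_smul ?_ trivial
      rw [PadicInt.maximalIdeal_eq_span_p, Ideal.span_singleton_pow]
      exact Ideal.subset_span rfl
    rwa [Submodule.mem_bot] at hbot
  exact (Submodule.Quotient.mk_eq_zero _).mp hmem


/-- the colon ideal `(Itil : p^m)` -/
def Jdeal (Itil : Ideal ((ℤ_[p])[X])) (m : ℕ) : Ideal ((ℤ_[p])[X]) where
  carrier := {f | C ((p : ℤ_[p]) ^ m) * f ∈ Itil}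
  add_mem' := fun ha hb => by
    simp only [Set.mem_setOf_eq, mul_add] at *
    exact Itil.add_mem ha hb
  zero_mem' := by simp only [Set.mem_setOf_eq, mul_zero]; exact Itil.zero_mem
  smul_mem' := fun r f hf => by
    simp only [Set.mem_setOf_eq, smul_eq_mul] at *
    rw [mul_left_comm]
    exact Itil.mul_mem_left r hf

lemma mem_Jdeal {Itil : Ideal ((ℤ_[p])[X])} {m : ℕ} {f : (ℤ_[p])[X]} :
    f ∈ Jdeal Itil m ↔ C ((p : ℤ_[p]) ^ m) * f ∈ Itil := Iff.rfl

end Stmt10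

open Stmt10 in
theorem stmt10 (p : ℕ) [Fact p.Prime] (n : ℕ) (hn : 0 < n) (hpn : ¬ p ∣ n)
    (I : Ideal (RquotP p n)) :
    ∃ (b : ℕ) (m : Fin b → ℕ) (f : Fin b → Polynomial ℤ_[p]),
      StrictMono m ∧
      (∀ i, (f i).Monic) ∧
      (∀ i, f i ∣ (X ^ n - 1)) ∧
      (∀ i j : Fin b, i ≤ j → f j ∣ f i) ∧
      I = Ideal.span (Set.range fun i : Fin b =>
        pmk p n (C ((p : ℤ_[p]) ^ m i) * f i)) := by
  classical
  set F : (ℤ_[p])[X] := X ^ n - 1 with hFdef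
  have hFm : F.Monic := monic_Xn_sub_one hn
  have hFmapXn : F.map PadicInt.toZMod = (X : (ZMod p)[X]) ^ n - 1 := map_Xn n
  have hFsep : (F.map PadicInt.toZMod).Separable := by
    rw [hFmapXn]; exact sep_Xn hn hpn
  have hCp : ∀ k : ℕ, pmk p n (C ((p : ℤ_[p]) ^ k)) = (p : RquotP p n) ^ k := by
    intro k
    have h1 : C ((p : ℤ_[p]) ^ k) = (C (p : ℤ_[p])) ^ k := map_pow C _ _
    rw [h1, C_eq_natCast, map_pow, map_natCast]
  have hmkF : pmk p n F = 0 :=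
    Ideal.Quotient.eq_zero_iff_mem.mpr (Ideal.subset_span rfl)
  set Itil : Ideal ((ℤ_[p])[X]) := I.comap (pmk p n) with hItil
  have hFJ : ∀ m : ℕ, F ∈ Jdeal Itil m := by
    intro m
    rw [mem_Jdeal, hItil, Ideal.mem_comap, map_mul, hmkF, mul_zero]
    exact I.zero_mem
  have hJmono : ∀ {m m' : ℕ}, m ≤ m' → Jdeal Itil m ≤ Jdeal Itil m' := by
    intro m m' hmm f hf
    rw [mem_Jdeal] at *
    have h1 : C ((p : ℤ_[p]) ^ m') * f
        = C ((p : ℤ_[p]) ^ (m' - m)) * (C ((p : ℤ_[p]) ^ m) * f) := by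
      rw [← mul_assoc, ← map_mul C, ← pow_add, Nat.sub_add_cancel hmm]
    rw [h1]
    exact Itil.mul_mem_left _ hf
  set Jbar : ℕ → Ideal ((ZMod p)[X]) :=
    fun m => (Jdeal Itil m).map (mapRingHom PadicInt.toZMod) with hJbardef
  have hFbarJ : ∀ m, ((X : (ZMod p)[X]) ^ n - 1) ∈ Jbar m := by
    intro m
    have := Ideal.mem_map_of_mem (mapRingHom PadicInt.toZMod) (hFJ m)
    rwa [coe_mapRingHom, hFmapXn] at this
  have hgen : ∀ m, ∃ g : (ZMod p)[X], g.Monic ∧ Jbar m = Ideal.span {g} ∧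
      g ∣ ((X : (ZMod p)[X]) ^ n - 1) :=
    fun m => exists_monic_gen _ (monic_Xn_sub_one hn) (hFbarJ m)
  choose gbar hgbarM hgbarSpan hgbarDvd using hgen
  have hgbarDvdF : ∀ m, gbar m ∣ F.map PadicInt.toZMod := fun m => hFmapXn ▸ hgbarDvd m
  have hchainbar : ∀ {m m' : ℕ}, m ≤ m' → gbar m' ∣ gbar m := by
    intro m m' h
    rw [← Ideal.span_singleton_le_span_singleton, ← hgbarSpan, ← hgbarSpan]
    exact Ideal.map_mono (hJmono h)
  have hlift : ∀ m, ∃ g : (ℤ_[p])[X], g.Monic ∧ g ∣ F ∧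
      g.map PadicInt.toZMod = gbar m :=
    fun m => exists_monic_lift_divisor hFm hFsep (hgbarM m) (hgbarDvdF m)
  choose g hgM hgDvd hgMap using hlift
  have hchain : ∀ {m m' : ℕ}, m ≤ m' → g m' ∣ g m := by
    intro m m' h
    obtain ⟨kb, hkb⟩ := hchainbar h
    have hgsep : ((g m).map PadicInt.toZMod).Separable := by
      rw [hgMap m]
      exact hFsep.of_dvd (hgbarDvdF m)
    have hkbM : kb.Monic := by
      have h2 : (gbar m' * kb).Monic := hkb ▸ hgbarM m
      exact (hgbarM m').of_mul_monic_left h2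
    have hcop2 : IsCoprime (gbar m') kb := by
      apply Separable.isCoprime
      rw [← hkb, ← hgMap m]
      exact hgsep
    obtain ⟨w, h', hwM, _, hprod, hwmap, _⟩ :=
      hensel_factor (g m) (hgM m) (hgbarM m') hkbM (by rw [hgMap m, hkb]) hcop2
    have hweq : w = g m' := by
      refine monic_divisor_unique hFsep hwM (hgM m') (dvd_trans ⟨h', hprod⟩ (hgDvd m))
        (hgDvd m') ?_
      rw [hwmap, hgMap m']
    exact hweq ▸ ⟨h', hprod⟩
  -- key membership : p^m * g m ∈ I
  have hkeymem : ∀ m : ℕ, pmk p n (C ((p : ℤ_[p]) ^ m) * g m) ∈ I := by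
    intro m
    have hgbarmem : gbar m ∈ Jbar m := by
      rw [hgbarSpan m]; exact Ideal.subset_span rfl
    obtain ⟨f, hfJ, hfmap⟩ := (Ideal.mem_map_iff_of_surjective _
      (fun q => mapToZMod_surjective q)).mp hgbarmem
    obtain ⟨h, hh⟩ := hgDvd m
    have hcop : IsCoprime ((g m).map PadicInt.toZMod) (h.map PadicInt.toZMod) := by
      apply Separable.isCoprime
      rw [← Polynomial.map_mul, ← hh]
      exact hFsep
    obtain ⟨a, b, c, habc⟩ := exists_bezout hcop
    have hCpdvd : C (p : ℤ_[p]) ∣ f - g m := by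
      apply Cp_dvd_of_map_eq_zero
      rw [Polynomial.map_sub, hgMap m]
      rw [coe_mapRingHom] at hfmap
      rw [hfmap, sub_self]
    obtain ⟨e, he⟩ := hCpdvd
    -- pass to the quotient
    have hγη : pmk p n (g m) * pmk p n h = 0 := by
      rw [← map_mul, ← hh, hmkF]
    have hbez : pmk p n a * pmk p n (g m) + pmk p n b * pmk p n h
        = 1 + (p : RquotP p n) * pmk p n c := by
      have h3 := hCp 1
      rw [pow_one] at h3
      have h2 := congrArg (pmk p n) habc
      simp only [map_add, map_mul, map_one] at h2
      rw [h3] at h2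
      linear_combination h2
    have hf3 : pmk p n f = pmk p n (g m) + (p : RquotP p n) * pmk p n e := by
      have h2 := congrArg (pmk p n) he
      rw [map_sub, map_mul] at h2
      have h3 := hCp 1
      rw [pow_one] at h3
      rw [h3] at h2
      linear_combination h2
    haveI : Module.Finite ℤ_[p] (RquotP p n) := finite_Rquot hn
    set u : RquotP p n := 1 + (p : RquotP p n) * (pmk p n c + pmk p n a * pmk p n e)
      with hu
    have huU : IsUnit u := isUnit_of_bezout u 1 (pmk p n c + pmk p n a * pmk p n e)
      (by rw [mul_one, hu])
    have hXI : pmk p n (C ((p : ℤ_[p]) ^ m) * f) ∈ I := by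
      rw [mem_Jdeal, hItil, Ideal.mem_comap] at hfJ
      exact hfJ
    have hmain : ((p : RquotP p n) ^ m * pmk p n (g m)) * u
        = (pmk p n a * pmk p n (g m)) * pmk p n (C ((p : ℤ_[p]) ^ m) * f) := by
      rw [map_mul, hCp m, hu]
      linear_combination (-((p : RquotP p n) ^ m * pmk p n (g m))) * hbez
        + ((p : RquotP p n) ^ m * pmk p n b) * hγη
        + (-((p : RquotP p n) ^ m * pmk p n a * pmk p n (g m))) * hf3
    have hIu : ((p : RquotP p n) ^ m * pmk p n (g m)) * u ∈ I := by
      rw [hmain]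
      exact I.mul_mem_left _ hXI
    obtain ⟨v, hv⟩ := huU.exists_right_inv
    have h9 : pmk p n (C ((p : ℤ_[p]) ^ m) * g m)
        = (((p : RquotP p n) ^ m * pmk p n (g m)) * u) * v := by
      rw [map_mul, hCp m, mul_assoc, hv, mul_one]
    rw [h9]
    exact I.mul_mem_right _ hIu
  -- stabilization
  set d : ℕ → ℕ := fun m => (gbar m).natDegree with hddef
  have hdanti : ∀ {m m' : ℕ}, m ≤ m' → d m' ≤ d m := fun h =>
    natDegree_le_of_dvd (hchainbar h) (hgbarM _).ne_zero
  obtain ⟨M, hM⟩ : ∃ M : ℕ, ∀ m, d M ≤ d m := by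
    obtain ⟨M, hMeq⟩ := Nat.sInf_mem (Set.range_nonempty d)
    exact ⟨M, fun m => hMeq ▸ Nat.sInf_le ⟨m, rfl⟩⟩
  have hgbarstab : ∀ m, M ≤ m → gbar m = gbar M := fun m h =>
    monic_dvd_monic_eq (hgbarM m) (hgbarM M) (hchainbar h) (hM m)
  have hgstab : ∀ m, M ≤ m → g m = g M := fun m h =>
    monic_divisor_unique hFsep (hgM m) (hgM M) (hgDvd m) (hgDvd M)
      (by rw [hgMap, hgMap, hgbarstab m h])
  -- conclusion
  refine ⟨M + 1, fun i => (i : ℕ), fun i => g i, fun _ _ h => h,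
    fun i => hgM i, fun i => hgDvd i, fun i j hij => hchain hij, ?_⟩
  set T := Ideal.span (Set.range fun i : Fin (M + 1) =>
    pmk p n (C ((p : ℤ_[p]) ^ (i : ℕ)) * g i)) with hT
  refine le_antisymm ?_ (Ideal.span_le.mpr ?_)
  swap
  · rintro y ⟨i, rfl⟩
    exact hkeymem i
  intro x hx
  have hTgen : ∀ N : ℕ, pmk p n (C ((p : ℤ_[p]) ^ N) * g N) ∈ T := by
    intro N
    by_cases hNM : N ≤ M
    · exact Ideal.subset_span ⟨⟨N, by omega⟩, rfl⟩
    · have h1 : g N = g M := hgstab N (by omega)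
      have h2 : C ((p : ℤ_[p]) ^ N) * g N
          = C ((p : ℤ_[p]) ^ (N - M)) * (C ((p : ℤ_[p]) ^ M) * g M) := by
        rw [h1, ← mul_assoc, ← map_mul C, ← pow_add]
        congr 3
        omega
      rw [h2, map_mul]
      refine Ideal.mul_mem_left _ _ (Ideal.subset_span ⟨⟨M, by omega⟩, ?_⟩)
      rfl
  have hstep : ∀ N : ℕ, ∀ fA ∈ Jdeal Itil N, ∃ r ∈ Jdeal Itil (N + 1),
      pmk p n (C ((p : ℤ_[p]) ^ N) * fA) - pmk p n (C ((p : ℤ_[p]) ^ (N + 1)) * r) ∈ T := by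
    intro N fA hfA
    have h1 : fA.map PadicInt.toZMod ∈ Jbar N := by
      have := Ideal.mem_map_of_mem (mapRingHom PadicInt.toZMod) hfA
      rwa [coe_mapRingHom] at this
    rw [hgbarSpan N, Ideal.mem_span_singleton] at h1
    obtain ⟨cb, hcb⟩ := h1
    obtain ⟨c, hc⟩ := mapToZMod_surjective cb
    have h2 : C (p : ℤ_[p]) ∣ fA - g N * c := by
      apply Cp_dvd_of_map_eq_zero
      rw [Polynomial.map_sub, Polynomial.map_mul, hgMap, hc, hcb, sub_self]
    obtain ⟨r, hr⟩ := h2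
    have hCC : C ((p : ℤ_[p]) ^ (N + 1)) = C ((p : ℤ_[p]) ^ N) * C (p : ℤ_[p]) := by
      rw [← map_mul, ← pow_succ]
    have h3 : C ((p : ℤ_[p]) ^ (N + 1)) * r
        = C ((p : ℤ_[p]) ^ N) * fA - (C ((p : ℤ_[p]) ^ N) * g N) * c := by
      rw [hCC]
      linear_combination (-(C ((p : ℤ_[p]) ^ N))) * hr
    have hgNI : C ((p : ℤ_[p]) ^ N) * g N ∈ Itil := by
      rw [hItil, Ideal.mem_comap]
      exact hkeymem N
    refine ⟨r, ?_, ?_⟩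
    · rw [mem_Jdeal, h3]
      exact Itil.sub_mem hfA (Itil.mul_mem_right c hgNI)
    · have h4 : pmk p n (C ((p : ℤ_[p]) ^ N) * fA) - pmk p n (C ((p : ℤ_[p]) ^ (N + 1)) * r)
          = pmk p n (C ((p : ℤ_[p]) ^ N) * g N) * pmk p n c := by
        rw [← map_mul]
        have h5 := congrArg (pmk p n) h3
        rw [map_sub] at h5
        linear_combination - h5
      rw [h4]
      exact Ideal.mul_mem_right _ _ (hTgen N)
  obtain ⟨f0, hf0⟩ := Ideal.Quotient.mk_surjective x
  have hf0I : f0 ∈ Jdeal Itil 0 := by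
    rw [mem_Jdeal, pow_zero, map_one, one_mul, hItil, Ideal.mem_comap]
    show pmk p n f0 ∈ I
    rw [hf0]
    exact hx
  have hind : ∀ N : ℕ, ∃ r ∈ Jdeal Itil N, x - pmk p n (C ((p : ℤ_[p]) ^ N) * r) ∈ T := by
    intro N
    induction N with
    | zero =>
      refine ⟨f0, hf0I, ?_⟩
      rw [pow_zero, map_one, one_mul, ← hf0, sub_self]
      exact T.zero_mem
    | succ N ih =>
      obtain ⟨r, hrJ, hrT⟩ := ih
      obtain ⟨r', hr'J, hr'T⟩ := hstep N r hrJ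
      refine ⟨r', hr'J, ?_⟩
      have := T.add_mem hrT hr'T
      have heq : (x - pmk p n (C ((p : ℤ_[p]) ^ N) * r))
          + (pmk p n (C ((p : ℤ_[p]) ^ N) * r) - pmk p n (C ((p : ℤ_[p]) ^ (N + 1)) * r'))
          = x - pmk p n (C ((p : ℤ_[p]) ^ (N + 1)) * r') := by ring
      rwa [heq] at this
  apply ideal_mem_of_approx hn T x
  intro N
  obtain ⟨r, hrJ, hrT⟩ := hind N
  refine ⟨x - pmk p n (C ((p : ℤ_[p]) ^ N) * r), hrT, pmk p n r, ?_⟩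
  rw [map_mul, hCp N]
  ring
end

section
/- Every ideal of R_a is principal; that is, R_a = (ZMod p^a)[X]/(X^n − 1) is a principal ideal ring. -/
open Polynomial

/-- A commutative ring with a nilpotent element `t` such that `(t)` is maximal is a
principal ideal ring (a chain ring). -/
lemma chain_pir {B : Type*} [CommRing B] (t : B) (a : ℕ) (h : t ^ a = 0)
    (hm : (Ideal.span {t}).IsMaximal) : IsPrincipalIdealRing B := by
  classical
  constructor
  intro I
  by_cases hI : I = ⊥
  · exact hI ▸ ⟨0, (Submodule.span_zero_singleton B).symm⟩
  have hmax : ∀ m : Ideal B, m.IsMaximal → m = Ideal.span {t} := by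
    intro m hm'
    have ht : t ∈ m := hm'.isPrime.mem_of_pow_mem a (h ▸ m.zero_mem)
    exact (hm.eq_of_le hm'.ne_top (Ideal.span_le.mpr (Set.singleton_subset_iff.mpr ht))).symm
  have hunit : ∀ u : B, u ∉ Ideal.span {t} → IsUnit u := by
    intro u hu
    by_contra h'
    obtain ⟨m, hm', hum⟩ := Ideal.exists_le_maximal (Ideal.span {u})
      (by rwa [Ne, Ideal.span_singleton_eq_top])
    exact hu ((hmax m hm') ▸ hum (Ideal.subset_span rfl))
  have hP : ∃ k, ¬ I ≤ Ideal.span {t ^ k} :=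
    ⟨a, by rw [h, show Ideal.span {(0:B)} = ⊥ from Submodule.span_zero_singleton B]; exact fun hle => hI (le_bot_iff.mp hle)⟩
  have hspec := Nat.find_spec hP
  have hk0pos : 0 < Nat.find hP := by
    rcases Nat.eq_zero_or_pos (Nat.find hP) with h0 | h0
    · exfalso
      apply Nat.find_spec hP
      rw [h0, pow_zero, Ideal.span_singleton_one]
      exact le_top
    · exact h0
  have hle : I ≤ Ideal.span {t ^ (Nat.find hP - 1)} := by
    have := Nat.find_min hP (m := Nat.find hP - 1) (Nat.sub_lt hk0pos one_pos)
    exact not_not.mp this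
  obtain ⟨x, hxI, hxn⟩ := SetLike.not_le_iff_exists.mp hspec
  obtain ⟨u, hu⟩ := Ideal.mem_span_singleton'.mp (hle hxI)
  have hunot : u ∉ Ideal.span {t} := by
    intro husp
    obtain ⟨v, hv⟩ := Ideal.mem_span_singleton'.mp husp
    apply hxn
    rw [Ideal.mem_span_singleton']
    refine ⟨v, ?_⟩
    have : Nat.find hP = (Nat.find hP - 1) + 1 := (Nat.succ_pred_eq_of_pos hk0pos).symm
    rw [this, pow_succ, ← hu, ← hv]
    ring
  have huu : IsUnit u := hunit u hunot
  have htk : t ^ (Nat.find hP - 1) ∈ I := by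
    have : (↑huu.unit⁻¹ : B) * x = t ^ (Nat.find hP - 1) := by
      rw [← hu, ← mul_assoc, IsUnit.val_inv_mul, one_mul]
    exact this ▸ I.mul_mem_left _ hxI
  exact ⟨t ^ (Nat.find hP - 1), le_antisymm hle (by
    rw [Submodule.span_le, Set.singleton_subset_iff]; exact htk)⟩

/-- A finite product of commutative principal ideal rings is a principal ideal ring. -/
lemma pi_pir {ι : Type*} [Finite ι] (R : ι → Type*) [∀ i, CommRing (R i)]
    [∀ i, IsPrincipalIdealRing (R i)] : IsPrincipalIdealRing (∀ i, R i) := by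
  classical
  cases nonempty_fintype ι
  constructor
  intro I
  have hsurj : ∀ i, Function.Surjective (Pi.evalRingHom R i) := fun i y =>
    ⟨Pi.single i y, Pi.single_eq_same i y⟩
  set g : ∀ i, R i := fun i => Submodule.IsPrincipal.generator (I.map (Pi.evalRingHom R i)) with hg
  have hgen : ∀ i, Ideal.span {g i} = I.map (Pi.evalRingHom R i) := fun i =>
    Submodule.IsPrincipal.span_singleton_generator _
  have hx : ∀ i, ∃ x, x ∈ I ∧ x i = g i := by
    intro i
    have : g i ∈ I.map (Pi.evalRingHom R i) := (hgen i) ▸ Ideal.subset_span rfl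
    exact Ideal.mem_map_iff_of_surjective _ (hsurj i) |>.mp this
  choose x hxI hxi using hx
  have hgI : g ∈ I := by
    have hsingle : ∀ i, Pi.single i (g i) = Pi.single i 1 * x i := by
      intro i
      funext j
      by_cases hj : j = i
      · subst hj; simp [hxi]
      · simp [Pi.single_eq_of_ne hj]
    have : g = ∑ i, Pi.single i 1 * x i := by
      rw [← Finset.univ_sum_single g]
      exact Finset.sum_congr rfl fun i _ => hsingle i
    rw [this]
    exact Ideal.sum_mem I fun i _ => I.mul_mem_left _ (hxI i)
  refine ⟨g, le_antisymm ?_ ?_⟩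
  · intro y hy
    have hc : ∀ i, ∃ c, y i = g i * c := by
      intro i
      have : y i ∈ I.map (Pi.evalRingHom R i) := Ideal.mem_map_of_mem _ hy
      rw [← hgen i, Ideal.mem_span_singleton] at this
      exact this
    choose c hc using hc
    exact Ideal.mem_span_singleton.mpr ⟨c, funext hc⟩
  · rw [Submodule.span_le, Set.singleton_subset_iff]; exact hgI



set_option maxHeartbeats 1000000 in
set_option synthInstance.maxHeartbeats 200000 in
/-- If `t` is nilpotent and `B/(t)` is reduced artinian (i.e. a finite product of fields),
then `B` is a principal ideal ring. -/
lemma main_pir {B : Type*} [CommRing B] (t : B) (a : ℕ) (ht : t ^ a = 0)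
    [IsArtinianRing (B ⧸ Ideal.span {t})] [IsReduced (B ⧸ Ideal.span {t})] :
    IsPrincipalIdealRing B := by
  classical
  haveI hfin : Finite (MaximalSpectrum (B ⧸ Ideal.span {t})) :=
    inferInstance
  cases nonempty_fintype (MaximalSpectrum (B ⧸ Ideal.span {t}))
  set Q := B ⧸ Ideal.span {t} with hQ
  set ι := MaximalSpectrum Q with hι
  letI : ∀ i : ι, Field (Q ⧸ i.1) := fun i => @Ideal.Quotient.field _ _ i.1 i.2
  set ρ := IsArtinianRing.equivPi Q with hρ
  set ε : ι → Q := fun i => ρ.symm (Pi.single i 1) with hε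
  have hco : CompleteOrthogonalIdempotents ε :=
    (CompleteOrthogonalIdempotents.single (fun i : ι => Q ⧸ i.1)).map
      (ρ.symm : (∀ i : ι, Q ⧸ i.1) →+* Q)
  have hker : ∀ x ∈ RingHom.ker (Ideal.Quotient.mk (Ideal.span {t})), IsNilpotent x := by
    intro x hx
    rw [Ideal.mk_ker] at hx
    obtain ⟨c, hc⟩ := Ideal.mem_span_singleton'.mp hx
    exact ⟨a, by rw [← hc, mul_pow, ht, mul_zero]⟩
  obtain ⟨e, hco', he⟩ := CompleteOrthogonalIdempotents.lift_of_isNilpotent_ker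
    (Ideal.Quotient.mk (Ideal.span {t})) hker hco
    (fun i => Ideal.Quotient.mk_surjective (ε i))
  haveI : ∀ i : ι, IsPrincipalIdealRing (B ⧸ Ideal.span {1 - e i}) := by
    intro i
    apply chain_pir (Ideal.Quotient.mk (Ideal.span {1 - e i}) t) a
    · rw [← map_pow, ht, map_zero]
    · -- maximality of the image of (t)
      apply Ideal.Quotient.maximal_of_isField
      -- construct a chain of ring equivs to the field `Q ⧸ i.1`
      have h1 : Ideal.span {Ideal.Quotient.mk (Ideal.span {1 - e i}) t}
          = (Ideal.span {t}).map (Ideal.Quotient.mk (Ideal.span {1 - e i})) := by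
        rw [Ideal.map_span, Set.image_singleton]
      have h2 : (Ideal.span {1 - e i}).map (Ideal.Quotient.mk (Ideal.span {t}))
          = Ideal.span {1 - ε i} := by
        rw [Ideal.map_span, Set.image_singleton, map_sub, map_one]
        have : Ideal.Quotient.mk (Ideal.span {t}) (e i) = ε i := congrFun he i
        rw [this]
      have h3 : Ideal.span {(1 : ∀ j : ι, Q ⧸ j.1) - Pi.single i 1}
          = RingHom.ker (Pi.evalRingHom (fun j : ι => Q ⧸ j.1) i) := by
        apply le_antisymm
        · rw [Ideal.span_le, Set.singleton_subset_iff]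
          simp [RingHom.mem_ker]
        · intro x hx
          rw [RingHom.mem_ker] at hx
          rw [Ideal.mem_span_singleton]
          refine ⟨x, ?_⟩
          funext j
          by_cases hj : j = i
          · subst hj
            have hx' : x j = 0 := hx
            simp [hx']
          · simp [Pi.single_eq_of_ne hj]
      have hρε : (ρ : Q →+* (∀ j : ι, Q ⧸ j.1)) (1 - ε i)
          = (1 : ∀ j : ι, Q ⧸ j.1) - Pi.single i 1 := by
        rw [RingHom.map_sub, RingHom.map_one]
        congr 1
        exact ρ.apply_symm_apply _
      have hmapρ : (Ideal.span {1 - ε i}).map (ρ : Q →+* (∀ j : ι, Q ⧸ j.1))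
          = Ideal.span {(1 : ∀ j : ι, Q ⧸ j.1) - Pi.single i 1} := by
        rw [Ideal.map_span, Set.image_singleton, hρε]
      have hevalsurj : Function.Surjective (Pi.evalRingHom (fun j : ι => Q ⧸ j.1) i) :=
        fun y => ⟨Pi.single (M := fun j : ι => Q ⧸ j.1) i y,
          Pi.single_eq_same (M := fun j : ι => Q ⧸ j.1) i y⟩
      have E : ((B ⧸ Ideal.span {1 - e i}) ⧸
          Ideal.span {Ideal.Quotient.mk (Ideal.span {1 - e i}) t}) ≃+* (Q ⧸ i.1) := by
        refine (Ideal.quotEquivOfEq h1).trans ?_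
        refine (DoubleQuot.quotQuotEquivQuotSup _ _).trans ?_
        refine (Ideal.quotEquivOfEq (sup_comm _ _)).trans ?_
        refine ((DoubleQuot.quotQuotEquivQuotSup (Ideal.span {t}) (Ideal.span {1 - e i})).symm).trans ?_
        refine (Ideal.quotEquivOfEq h2).trans ?_
        refine (Ideal.quotientEquiv _ _ ρ.toRingEquiv hmapρ.symm).trans ?_
        refine (Ideal.quotEquivOfEq h3).trans ?_
        exact RingHom.quotientKerEquivOfSurjective hevalsurj
      exact E.toMulEquiv.isField (Field.toIsField (Q ⧸ i.1))
  haveI : IsPrincipalIdealRing (∀ i : ι, B ⧸ Ideal.span {1 - e i}) :=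
    pi_pir (fun i : ι => B ⧸ Ideal.span {1 - e i})
  have hbij := hco'.bijective_pi
  exact IsPrincipalIdealRing.of_surjective
    ((RingEquiv.ofBijective _ hbij).symm : (∀ i : ι, B ⧸ Ideal.span {1 - e i}) →+* B)
    (RingEquiv.ofBijective _ hbij).symm.surjective



set_option maxHeartbeats 1000000 in
set_option synthInstance.maxHeartbeats 400000 in
theorem stmt11 (p : ℕ) [Fact p.Prime] (a n : ℕ) (ha : 0 < a) (hn : 0 < n) (hpn : ¬ p ∣ n) :
    IsPrincipalIdealRing
      (Polynomial (ZMod (p ^ a)) ⧸ Ideal.span {(X : Polynomial (ZMod (p ^ a))) ^ n - 1}) := by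
  classical
  haveI : NeZero p := ⟨(Fact.out : p.Prime).ne_zero⟩
  haveI : NeZero (p ^ a) := ⟨pow_ne_zero a (Fact.out : p.Prime).ne_zero⟩
  have hmon : ((X : Polynomial (ZMod (p ^ a))) ^ n - 1).Monic := by
    have := monic_X_pow_sub_C (1 : ZMod (p ^ a)) hn.ne'
    simpa using this
  -- the ambient ring is finite
  haveI hfinA : Finite (Polynomial (ZMod (p ^ a)) ⧸
      Ideal.span {(X : Polynomial (ZMod (p ^ a))) ^ n - 1}) := by
    haveI : Module.Finite (ZMod (p ^ a)) (AdjoinRoot ((X : Polynomial (ZMod (p ^ a))) ^ n - 1)) :=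
      Module.Finite.of_basis (AdjoinRoot.powerBasis' hmon).basis
    show Finite (AdjoinRoot ((X : Polynomial (ZMod (p ^ a))) ^ n - 1))
    exact Module.finite_of_finite (ZMod (p ^ a))
  set A := Polynomial (ZMod (p ^ a)) ⧸ Ideal.span {(X : Polynomial (ZMod (p ^ a))) ^ n - 1}
    with hA
  have ht : (p : A) ^ a = 0 := by
    rw [← Nat.cast_pow,
      ← map_natCast (Ideal.Quotient.mk (Ideal.span {(X : Polynomial (ZMod (p ^ a))) ^ n - 1}))
        (p ^ a),
      ← map_natCast (C : ZMod (p ^ a) →+* Polynomial (ZMod (p ^ a))) (p ^ a),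
      ZMod.natCast_self, map_zero, map_zero]
  -- the map to `F_p[X]/(X^n-1)`
  set cst : ZMod (p ^ a) →+* ZMod p := ZMod.castHom (dvd_pow_self p ha.ne') (ZMod p) with hcst
  have hcstsurj : Function.Surjective cst := by
    intro c
    exact ⟨((c.val : ℕ) : ZMod (p ^ a)), by
      rw [hcst, map_natCast, ZMod.natCast_val, ZMod.cast_id]⟩
  set f0 : Polynomial (ZMod (p ^ a)) →+*
      (Polynomial (ZMod p) ⧸ Ideal.span {(X : Polynomial (ZMod p)) ^ n - 1}) :=
    (Ideal.Quotient.mk (Ideal.span {(X : Polynomial (ZMod p)) ^ n - 1})).comp (mapRingHom cst)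
    with hf0
  have hmapX : (mapRingHom cst) ((X : Polynomial (ZMod (p ^ a))) ^ n - 1)
      = (X : Polynomial (ZMod p)) ^ n - 1 := by
    simp
  have hf0zero : ∀ u ∈ Ideal.span {(X : Polynomial (ZMod (p ^ a))) ^ n - 1}, f0 u = 0 := by
    intro u hu
    obtain ⟨v, hv⟩ := Ideal.mem_span_singleton'.mp hu
    rw [← hv, map_mul]
    have : f0 ((X : Polynomial (ZMod (p ^ a))) ^ n - 1) = 0 := by
      rw [hf0, RingHom.comp_apply, hmapX, Ideal.Quotient.eq_zero_iff_mem]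
      exact Ideal.subset_span rfl
    rw [this, mul_zero]
  set φ : A →+* (Polynomial (ZMod p) ⧸ Ideal.span {(X : Polynomial (ZMod p)) ^ n - 1}) :=
    Ideal.Quotient.lift _ f0 hf0zero with hφ
  have hφmk : ∀ g : Polynomial (ZMod (p ^ a)),
      φ (Ideal.Quotient.mk _ g) = Ideal.Quotient.mk _ (g.map cst) :=
    fun g => Ideal.Quotient.lift_mk _ _ _
  have hφsurj : Function.Surjective φ := by
    intro y
    obtain ⟨g, rfl⟩ := Ideal.Quotient.mk_surjective y
    obtain ⟨g', rfl⟩ := (Polynomial.map_surjective cst hcstsurj) g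
    exact ⟨Ideal.Quotient.mk _ g', hφmk g'⟩
  -- coefficients in the kernel of cst are divisible by p
  have hcastker : ∀ c : ZMod (p ^ a), cst c = 0 → c ∈ Ideal.span {((p : ℕ) : ZMod (p ^ a))} := by
    intro c hc
    have h1 : c = ((c.val : ℕ) : ZMod (p ^ a)) := by rw [ZMod.natCast_val, ZMod.cast_id]
    have h2 : ((c.val : ℕ) : ZMod p) = 0 := by
      rw [← map_natCast cst c.val, ← h1, hc]
    rw [ZMod.natCast_eq_zero_iff] at h2
    obtain ⟨m, hm⟩ := h2
    rw [Ideal.mem_span_singleton]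
    exact ⟨(m : ZMod (p ^ a)), by rw [h1, hm, Nat.cast_mul]⟩
  have hker : RingHom.ker φ = Ideal.span {(p : A)} := by
    apply le_antisymm
    · intro x hx
      obtain ⟨g, rfl⟩ := Ideal.Quotient.mk_surjective x
      rw [RingHom.mem_ker, hφmk, Ideal.Quotient.eq_zero_iff_mem,
        Ideal.mem_span_singleton'] at hx
      obtain ⟨v, hv⟩ := hx
      obtain ⟨v', rfl⟩ := (Polynomial.map_surjective cst hcstsurj) v
      have hd : (g - v' * ((X : Polynomial (ZMod (p ^ a))) ^ n - 1)).map cst = 0 := by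
        rw [Polynomial.map_sub, Polynomial.map_mul]
        rw [show ((X : Polynomial (ZMod (p ^ a))) ^ n - 1).map cst
          = (X : Polynomial (ZMod p)) ^ n - 1 from hmapX]
        rw [hv]
        ring
      have hcoeff : ∀ m : ℕ, (g - v' * ((X : Polynomial (ZMod (p ^ a))) ^ n - 1)).coeff m
          ∈ Ideal.span {((p : ℕ) : ZMod (p ^ a))} := by
        intro m
        apply hcastker
        rw [← Polynomial.coeff_map, hd, Polynomial.coeff_zero]
      have hdmem : g - v' * ((X : Polynomial (ZMod (p ^ a))) ^ n - 1)
          ∈ Ideal.span {(C ((p : ℕ) : ZMod (p ^ a)) : Polynomial (ZMod (p ^ a)))} := by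
        have := Ideal.mem_map_C_iff.mpr hcoeff
        rwa [Ideal.map_span, Set.image_singleton] at this
      obtain ⟨w, hw⟩ := Ideal.mem_span_singleton'.mp hdmem
      -- now compute mk g
      have hmkg : (Ideal.Quotient.mk (Ideal.span {(X : Polynomial (ZMod (p ^ a))) ^ n - 1})) g
          = (Ideal.Quotient.mk _) (w * C ((p : ℕ) : ZMod (p ^ a))) := by
        rw [Ideal.Quotient.eq]
        rw [hw]
        refine Ideal.mem_span_singleton'.mpr ⟨v', by ring⟩
      rw [hmkg, map_mul]
      refine Ideal.mul_mem_left _ _ ?_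
      rw [Ideal.mem_span_singleton]
      refine ⟨1, ?_⟩
      rw [mul_one, map_natCast (C : ZMod (p ^ a) →+* Polynomial (ZMod (p ^ a))) p,
        map_natCast (Ideal.Quotient.mk (Ideal.span {(X : Polynomial (ZMod (p ^ a))) ^ n - 1})) p]
    · rw [Ideal.span_le, Set.singleton_subset_iff]
      rw [SetLike.mem_coe, RingHom.mem_ker, map_natCast]
      rw [show ((p : ℕ) : (Polynomial (ZMod p) ⧸ Ideal.span {(X : Polynomial (ZMod p)) ^ n - 1}))
        = (Ideal.Quotient.mk _) (C ((p : ℕ) : ZMod p)) by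
          rw [map_natCast (C : ZMod p →+* Polynomial (ZMod p)) p,
            map_natCast (Ideal.Quotient.mk (Ideal.span {(X : Polynomial (ZMod p)) ^ n - 1})) p]]
      rw [ZMod.natCast_self, map_zero, map_zero]
  -- the quotient mod p is reduced and artinian
  haveI hred' : IsReduced (Polynomial (ZMod p) ⧸ Ideal.span {(X : Polynomial (ZMod p)) ^ n - 1}) := by
    have hn' : ((n : ZMod p) ≠ 0) := by
      rw [Ne, ZMod.natCast_eq_zero_iff]
      exact hpn
    have hsf : Squarefree ((X : Polynomial (ZMod p)) ^ n - 1) := by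
      have := (Polynomial.separable_X_pow_sub_C (1 : ZMod p) hn' one_ne_zero).squarefree
      simpa using this
    constructor
    intro x hx
    obtain ⟨g, rfl⟩ := Ideal.Quotient.mk_surjective x
    obtain ⟨m, hm⟩ := hx
    rw [← map_pow, Ideal.Quotient.eq_zero_iff_mem, Ideal.mem_span_singleton] at hm
    have := hsf.isRadical m g hm
    rw [Ideal.Quotient.eq_zero_iff_mem, Ideal.mem_span_singleton]
    exact this
  set ψ : (A ⧸ Ideal.span {(p : A)}) ≃+*
      (Polynomial (ZMod p) ⧸ Ideal.span {(X : Polynomial (ZMod p)) ^ n - 1}) :=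
    (Ideal.quotEquivOfEq hker.symm).trans (RingHom.quotientKerEquivOfSurjective hφsurj) with hψ
  haveI : Finite (A ⧸ Ideal.span {(p : A)}) :=
    Finite.of_surjective _ Ideal.Quotient.mk_surjective
  haveI : IsArtinianRing (A ⧸ Ideal.span {(p : A)}) := isArtinian_of_finite
  haveI : IsReduced (A ⧸ Ideal.span {(p : A)}) :=
    isReduced_of_injective ψ.toRingHom ψ.injective
  exact main_pir (p : A) a ht
end

section
/- Every ideal of R_∞ is principal; that is, R_∞ = ℤ_p[X]/(X^n − 1) is a principal ideal ring. -/
open Polynomial IsLocalRing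
set_option maxHeartbeats 2000000
set_option synthInstance.maxHeartbeats 400000

section Aux
variable {p : ℕ} [hp : Fact p.Prime]

private lemma mem_span_p_pow' {R : Type*} [CommRing R] [Algebra ℤ_[p] R] {d : ℕ}
    (b : Module.Basis (Fin d) ℤ_[p] R) (k : ℕ) (x : R) :
    x ∈ Ideal.span {((p:ℕ) : R)} ^ k ↔ ∀ i, ((p:ℤ_[p]))^k ∣ b.repr x i := by
  rw [Ideal.span_singleton_pow, Ideal.mem_span_singleton]
  constructor
  · rintro ⟨y, rfl⟩ i
    refine ⟨b.repr y i, ?_⟩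
    have hsm : ((p:ℕ):R)^k * y = ((p:ℤ_[p])^k) • y := by
      rw [Algebra.smul_def, map_pow, map_natCast]
    rw [hsm, map_smul, Finsupp.smul_apply, smul_eq_mul]
  · intro hdvd
    choose c hc using hdvd
    refine ⟨∑ i, c i • b i, ?_⟩
    calc x = ∑ i, (b.repr x i) • b i := (b.sum_repr x).symm
    _ = ∑ i, ((p:ℤ_[p])^k * c i) • b i := Finset.sum_congr rfl fun i _ => by rw [hc i]
    _ = ((p:ℕ):R)^k * ∑ i, c i • b i := by
        rw [Finset.mul_sum]
        refine Finset.sum_congr rfl fun i _ => ?_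
        rw [mul_smul, Algebra.smul_def ((p:ℤ_[p])^k), map_pow, map_natCast]

private lemma smod_iff' {R : Type*} [CommRing R] (I : Ideal R) (k : ℕ) (x y : R) :
    (x ≡ y [SMOD (I ^ k • ⊤ : Submodule R R)]) ↔ x - y ∈ I ^ k := by
  rw [SModEq.sub_mem, ← Ideal.one_eq_top, smul_eq_mul, mul_one]

private lemma hZmem' (k : ℕ) (r : ℤ_[p]) :
    r ∈ (maximalIdeal ℤ_[p]) ^ k ↔ (p:ℤ_[p])^k ∣ r := by
  rw [PadicInt.maximalIdeal_eq_span_p, Ideal.span_singleton_pow, Ideal.mem_span_singleton]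

private lemma adic_complete' {R : Type*} [CommRing R] [Algebra ℤ_[p] R] {d : ℕ}
    (b : Module.Basis (Fin d) ℤ_[p] R) : IsAdicComplete (Ideal.span {((p:ℕ) : R)}) R := by
  refine { toIsHausdorff := ⟨?_⟩, toIsPrecomplete := ⟨?_⟩ }
  · intro x hx
    have h1 : ∀ i, b.repr x i = 0 := by
      intro i
      refine IsHausdorff.haus' (I := maximalIdeal ℤ_[p]) (b.repr x i) fun k => ?_
      rw [smod_iff', sub_zero, hZmem']
      refine (mem_span_p_pow' b k x).mp ?_ i
      have := hx k
      rwa [smod_iff', sub_zero] at this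
    have h0 : b.repr x = 0 := Finsupp.ext h1
    exact b.repr.injective (by simpa using h0)
  · intro f hf
    have key : ∀ i, ∃ L : ℤ_[p], ∀ k, (p:ℤ_[p])^k ∣ b.repr (f k) i - L := by
      intro i
      obtain ⟨L, hL⟩ := IsPrecomplete.prec' (I := maximalIdeal ℤ_[p])
        (f := fun k => b.repr (f k) i) (by
          intro m k hmk
          rw [smod_iff', hZmem']
          have h0 := hf hmk
          rw [smod_iff'] at h0
          have := (mem_span_p_pow' b m _).mp h0 i
          simpa [map_sub] using this)
      refine ⟨L, fun k => ?_⟩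
      have := hL k
      rwa [smod_iff', hZmem'] at this
    choose L hL using key
    refine ⟨∑ i, L i • b i, fun k => ?_⟩
    rw [smod_iff', mem_span_p_pow' b]
    intro i
    have hrepr : b.repr (∑ j, L j • b j) i = L i := by
      simp [map_sum, Finsupp.finset_sum_apply, Module.Basis.repr_self, Finsupp.single_apply]
    rw [map_sub, Finsupp.sub_apply, hrepr]
    exact hL i k

end Aux

theorem stmt12 (p : ℕ) [Fact p.Prime] (n : ℕ) (hn : 0 < n) (hpn : ¬ p ∣ n) :
    IsPrincipalIdealRing
      (Polynomial ℤ_[p] ⧸ Ideal.span {(X : Polynomial ℤ_[p]) ^ n - 1}) := by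
  classical
  set q : Polynomial ℤ_[p] := X ^ n - 1 with hqdef
  have hq : q.Monic := by simpa [hqdef] using monic_X_pow_sub_C (1 : ℤ_[p]) hn.ne'
  have hq0 : q ≠ 0 := hq.ne_zero
  have hqdeg : q.natDegree = n := by
    simpa [hqdef] using (natDegree_X_pow_sub_C (n := n) (r := (1:ℤ_[p])))
  haveI hRnt : Nontrivial (Polynomial ℤ_[p] ⧸ Ideal.span {q}) := by
    refine Ideal.Quotient.nontrivial_iff.mpr ?_
    rw [Ne, Ideal.span_singleton_eq_top]
    exact not_isUnit_of_natDegree_pos q (by omega)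
  set mkq : Polynomial ℤ_[p] →+* (Polynomial ℤ_[p] ⧸ Ideal.span {q}) :=
    Ideal.Quotient.mk (Ideal.span {q}) with hmkqdef
  apply IsPrincipalIdealRing.of_prime
  intro P hP
  by_cases hpP : ((p:ℕ) : (Polynomial ℤ_[p] ⧸ Ideal.span {q})) ∈ P
  · -- the maximal case, via Hensel idempotent lifting
    set qbar : Polynomial (ZMod p) := X ^ n - 1 with hqbardef
    have hsqf : Squarefree qbar := by
      have h1 : ((n : ZMod p)) ≠ 0 := by
        simpa [ZMod.natCast_eq_zero_iff] using hpn
      have := Polynomial.separable_X_pow_sub_C (1 : ZMod p) h1 one_ne_zero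
      simpa [hqbardef] using this.squarefree
    set mkS : Polynomial (ZMod p) →+* (Polynomial (ZMod p) ⧸ Ideal.span {qbar}) :=
      Ideal.Quotient.mk (Ideal.span {qbar}) with hmkSdef
    set φ : Polynomial ℤ_[p] →+* (Polynomial (ZMod p) ⧸ Ideal.span {qbar}) :=
      mkS.comp (mapRingHom PadicInt.toZMod) with hφdef
    have hmapq : Polynomial.map PadicInt.toZMod q = qbar := by
      simp [hqdef, hqbardef, Polynomial.map_sub, Polynomial.map_pow, Polynomial.map_one]
    have hq0S : mkS qbar = 0 := Ideal.Quotient.eq_zero_iff_mem.mpr (Ideal.subset_span rfl)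
    have hφqval : φ q = 0 := by
      rw [hφdef]
      simp only [RingHom.comp_apply, coe_mapRingHom, hmapq]
      exact hq0S
    have hφq : ∀ a ∈ Ideal.span {q}, φ a = 0 := by
      intro a ha
      obtain ⟨c, rfl⟩ := Ideal.mem_span_singleton'.mp ha
      rw [map_mul, hφqval, mul_zero]
    set ψ := Ideal.Quotient.lift (Ideal.span {q}) φ hφq with hψdef
    have hψmk : ∀ a, ψ (mkq a) = φ a := fun a => Ideal.Quotient.lift_mk _ _ _
    have hφs : Function.Surjective φ := by
      intro y
      obtain ⟨z, rfl⟩ := Ideal.Quotient.mk_surjective y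
      obtain ⟨w, rfl⟩ := Polynomial.map_surjective _ (ZMod.ringHom_surjective PadicInt.toZMod) z
      exact ⟨w, rfl⟩
    have hψs : Function.Surjective ψ := by
      intro y; obtain ⟨a, ha⟩ := hφs y; exact ⟨mkq a, by rw [hψmk, ha]⟩
    have hmapsurj : Function.Surjective (mapRingHom (PadicInt.toZMod (p := p))) :=
      Polynomial.map_surjective _ (ZMod.ringHom_surjective _)
    have hspanbar : Ideal.span {qbar} =
        Ideal.map (mapRingHom (PadicInt.toZMod (p := p))) (Ideal.span {q}) := by
      rw [Ideal.map_span, Set.image_singleton]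
      simp [hmapq]
    have hkerφ : RingHom.ker φ = Ideal.span {q} ⊔ Ideal.span {C ((p:ℕ):ℤ_[p])} := by
      have h1 : RingHom.ker φ =
          Ideal.comap (mapRingHom (PadicInt.toZMod (p:=p))) (Ideal.span {qbar}) := by
        ext a
        simp only [RingHom.mem_ker, hφdef, RingHom.comp_apply, coe_mapRingHom, Ideal.mem_comap]
        exact Ideal.Quotient.eq_zero_iff_mem
      rw [h1, hspanbar, Ideal.comap_map_of_surjective _ hmapsurj, ← RingHom.ker_eq_comap_bot,
        Polynomial.ker_mapRingHom, PadicInt.ker_toZMod, PadicInt.maximalIdeal_eq_span_p,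
        Ideal.map_span, Set.image_singleton]
    have hmkCp : mkq (C ((p:ℕ):ℤ_[p])) = ((p:ℕ) : Polynomial ℤ_[p] ⧸ Ideal.span {q}) := by
      rw [map_natCast (C : ℤ_[p] →+* Polynomial ℤ_[p]) p, map_natCast]
    have hkerψ : RingHom.ker ψ =
        Ideal.span {((p:ℕ) : Polynomial ℤ_[p] ⧸ Ideal.span {q})} := by
      apply le_antisymm
      · intro x hx
        obtain ⟨a, rfl⟩ := Ideal.Quotient.mk_surjective (I := Ideal.span {q}) x
        have ha : a ∈ RingHom.ker φ := by
          rw [RingHom.mem_ker, ← hψmk]; exact hx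
        rw [hkerφ] at ha
        obtain ⟨y, hy, z, hz, rfl⟩ := Submodule.mem_sup.mp ha
        have h1 : mkq y = 0 := Ideal.Quotient.eq_zero_iff_mem.mpr hy
        have h2 : mkq z ∈ Ideal.span {((p:ℕ) : Polynomial ℤ_[p] ⧸ Ideal.span {q})} := by
          obtain ⟨c, hc⟩ := Ideal.mem_span_singleton'.mp hz
          rw [Ideal.mem_span_singleton]
          exact ⟨mkq c, by rw [← hc, map_mul, hmkCp, mul_comm]⟩
        rw [map_add, h1, zero_add]
        exact h2
      · rw [Ideal.span_le, Set.singleton_subset_iff, SetLike.mem_coe, RingHom.mem_ker,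
          ← map_natCast mkq p, hψmk]
        have hz : ((p:ℕ) : Polynomial ℤ_[p]) = C ((p:ℕ):ℤ_[p]) :=
          (map_natCast (C : ℤ_[p] →+* Polynomial ℤ_[p]) p).symm
        rw [hz, hφdef]
        simp only [RingHom.comp_apply, coe_mapRingHom, Polynomial.map_C]
        have : (PadicInt.toZMod ((p:ℕ):ℤ_[p]) : ZMod p) = 0 := by
          rw [map_natCast, ZMod.natCast_self]
        rw [this, map_zero, map_zero]
    have hIP : Ideal.span {((p:ℕ) : Polynomial ℤ_[p] ⧸ Ideal.span {q})} ≤ P := by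
      rw [Ideal.span_le, Set.singleton_subset_iff]; exact hpP
    set Pbar := P.map ψ with hPbardef
    haveI hPbarp : Pbar.IsPrime :=
      Ideal.map_isPrime_of_surjective hψs (by rw [hkerψ]; exact hIP)
    have hPP : Ideal.comap ψ Pbar = P := by
      rw [hPbardef, Ideal.comap_map_of_surjective _ hψs, ← RingHom.ker_eq_comap_bot, hkerψ]
      exact sup_eq_left.mpr hIP
    set Qbar := Ideal.comap mkS Pbar with hQbardef
    have hqbarQ : qbar ∈ Qbar := by
      rw [hQbardef, Ideal.mem_comap, hq0S]
      exact Pbar.zero_mem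
    haveI hQbarPr : Qbar.IsPrincipal := IsPrincipalIdealRing.principal Qbar
    set g := Submodule.IsPrincipal.generator (Qbar : Ideal (Polynomial (ZMod p))) with hgdef
    have hgspan : Ideal.span {g} = Qbar := Ideal.span_singleton_generator Qbar
    have hgdvd : g ∣ qbar := Ideal.mem_span_singleton.mp (hgspan ▸ hqbarQ)
    obtain ⟨h, hqgh⟩ := hgdvd
    have hcop : IsCoprime g h := by
      rw [← EuclideanDomain.gcd_isUnit_iff]
      apply hsqf
      rw [hqgh]
      exact mul_dvd_mul (EuclideanDomain.gcd_dvd_left g h) (EuclideanDomain.gcd_dvd_right g h)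
    obtain ⟨a, b, hab⟩ := hcop
    set e₀ := mkS (a * g) with he₀def
    obtain ⟨a₀, ha₀⟩ := hψs e₀
    haveI : IsAdicComplete
        (Ideal.span {((p:ℕ) : Polynomial ℤ_[p] ⧸ Ideal.span {q})})
        (Polynomial ℤ_[p] ⧸ Ideal.span {q}) :=
      adic_complete' (AdjoinRoot.powerBasis' hq).basis
    have he₀idem : e₀^2 - e₀ = 0 := by
      have hkey : (a*g)^2 - (a*g) = (-(a*b))*qbar := by
        rw [hqgh]; linear_combination (a*g)*hab
      calc e₀^2 - e₀ = mkS ((a*g)^2 - (a*g)) := by rw [he₀def, map_sub, map_pow]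
      _ = 0 := by rw [hkey, map_mul, hq0S, mul_zero]
    have ha₀I : a₀^2 - a₀ ∈
        Ideal.span {((p:ℕ) : Polynomial ℤ_[p] ⧸ Ideal.span {q})} := by
      rw [← hkerψ, RingHom.mem_ker, map_sub, map_pow, ha₀]
      exact he₀idem
    have hFmonic : ((X : Polynomial (Polynomial ℤ_[p] ⧸ Ideal.span {q}))^2 - X).Monic := by
      apply monic_X_pow_sub
      rw [degree_X]
      decide
    have h₂ : IsUnit ((Ideal.Quotient.mk
        (Ideal.span {((p:ℕ) : Polynomial ℤ_[p] ⧸ Ideal.span {q})}))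
        ((derivative ((X : Polynomial (Polynomial ℤ_[p] ⧸ Ideal.span {q}))^2 - X)).eval a₀)) := by
      have hder : (derivative ((X : Polynomial (Polynomial ℤ_[p] ⧸ Ideal.span {q}))^2 - X)).eval a₀
          = 2*a₀ - 1 := by
        simp [derivative_sub, derivative_X_pow, derivative_X]
        ring
      rw [hder]
      refine isUnit_of_dvd_one ⟨(Ideal.Quotient.mk _) (2*a₀ - 1), Eq.symm ?_⟩
      rw [← map_mul, ← map_one (Ideal.Quotient.mk
        (Ideal.span {((p:ℕ) : Polynomial ℤ_[p] ⧸ Ideal.span {q})}))]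
      rw [Ideal.Quotient.eq]
      have : (2*a₀ - 1) * (2*a₀ - 1) - 1 = 4*(a₀^2 - a₀) := by ring
      rw [this]
      exact Ideal.mul_mem_left _ _ ha₀I
    obtain ⟨e, heroot, hea⟩ := HenselianRing.is_henselian
      (I := Ideal.span {((p:ℕ) : Polynomial ℤ_[p] ⧸ Ideal.span {q})})
      ((X : Polynomial (Polynomial ℤ_[p] ⧸ Ideal.span {q}))^2 - X) hFmonic a₀
      (by simpa [eval_sub, eval_pow, eval_X] using ha₀I) h₂
    have hee : e^2 - e = 0 := by
      have h0 := heroot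
      simp only [IsRoot, eval_sub, eval_pow, eval_X] at h0
      exact h0
    have hψe : ψ e = e₀ := by
      have h0 : e - a₀ ∈ RingHom.ker ψ := by rw [hkerψ]; exact hea
      have h1 := RingHom.mem_ker.mp h0
      rw [map_sub, sub_eq_zero] at h1
      rw [h1, ha₀]
    have heP : e ∈ P := by
      rw [← hPP, Ideal.mem_comap, hψe, he₀def]
      have hmem : a * g ∈ Qbar := by
        rw [← hgspan]
        exact Ideal.mem_span_singleton.mpr (dvd_mul_left g a)
      exact Ideal.mem_comap.mp hmem
    set t := e + ((p:ℕ) : Polynomial ℤ_[p] ⧸ Ideal.span {q}) * (1 - e) with htdef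
    have htP : t ∈ P := P.add_mem heP (P.mul_mem_right _ hpP)
    have hann : ∀ y ∈ Pbar, y * (1 - e₀) = 0 := by
      intro y hy
      obtain ⟨c, rfl⟩ := Ideal.Quotient.mk_surjective (I := Ideal.span {qbar}) y
      have hc : c ∈ Qbar := Ideal.mem_comap.mpr hy
      rw [← hgspan, Ideal.mem_span_singleton'] at hc
      obtain ⟨d, rfl⟩ := hc
      have hkey2 : (d*g) * (1 - a*g) = (d*b)*qbar := by
        rw [hqgh]; linear_combination (-(d*g))*hab
      calc mkS (d*g) * (1 - e₀) = mkS ((d*g) * (1 - a*g)) := by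
            rw [he₀def, ← map_one mkS, ← map_sub, ← map_mul]
      _ = mkS ((d*b)*qbar) := by rw [hkey2]
      _ = 0 := by rw [map_mul, hq0S, mul_zero]
    have hsub : ∀ x ∈ P, x - x * e ∈
        Ideal.span {((p:ℕ) : Polynomial ℤ_[p] ⧸ Ideal.span {q})} := by
      intro x hx
      rw [← hkerψ, RingHom.mem_ker, map_sub, map_mul, hψe]
      have hx' : ψ x ∈ Pbar := Ideal.mem_map_of_mem ψ hx
      have h0 := hann (ψ x) hx'
      linear_combination h0
    have het : e * t = e := by
      rw [htdef]
      linear_combination (1 - ((p:ℕ) : Polynomial ℤ_[p] ⧸ Ideal.span {q})) * hee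
    have hetspan : e ∈ Ideal.span {t} :=
      Ideal.mem_span_singleton.mpr ⟨e, by linear_combination -het⟩
    have htself : t ∈ Ideal.span {t} := Ideal.mem_span_singleton_self t
    have hp1 : ((p:ℕ) : Polynomial ℤ_[p] ⧸ Ideal.span {q}) * (1 - e) ∈ Ideal.span {t} := by
      have hrw : ((p:ℕ) : Polynomial ℤ_[p] ⧸ Ideal.span {q}) * (1 - e) = t - e := by
        rw [htdef]; ring
      rw [hrw]
      exact Ideal.sub_mem _ htself hetspan
    have hp2 : ((p:ℕ) : Polynomial ℤ_[p] ⧸ Ideal.span {q}) * e ∈ Ideal.span {t} := by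
      refine Ideal.mem_span_singleton.mpr ⟨((p:ℕ) : Polynomial ℤ_[p] ⧸ Ideal.span {q}) * e, ?_⟩
      calc ((p:ℕ) : Polynomial ℤ_[p] ⧸ Ideal.span {q}) * e
          = ((p:ℕ) : Polynomial ℤ_[p] ⧸ Ideal.span {q}) * (e * t) := by rw [het]
      _ = t * (((p:ℕ) : Polynomial ℤ_[p] ⧸ Ideal.span {q}) * e) := by ring
    have hpspan : ((p:ℕ) : Polynomial ℤ_[p] ⧸ Ideal.span {q}) ∈ Ideal.span {t} := by
      have hsplit : ((p:ℕ) : Polynomial ℤ_[p] ⧸ Ideal.span {q}) =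
          ((p:ℕ) : Polynomial ℤ_[p] ⧸ Ideal.span {q})*e +
          ((p:ℕ) : Polynomial ℤ_[p] ⧸ Ideal.span {q})*(1-e) := by ring
      rw [hsplit]
      exact Ideal.add_mem _ hp2 hp1
    have hle1 : P ≤ Ideal.span {t} := by
      intro x hx
      obtain ⟨w, hw⟩ := Ideal.mem_span_singleton.mp (hsub x hx)
      have hxe : x = x*e + ((p:ℕ) : Polynomial ℤ_[p] ⧸ Ideal.span {q})*w := by
        linear_combination hw
      rw [hxe]
      exact Ideal.add_mem _ (Ideal.mul_mem_left _ x hetspan) (Ideal.mul_mem_right w _ hpspan)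
    exact ⟨⟨t, by
      rw [Ideal.submodule_span_eq]
      exact le_antisymm hle1 (by rw [Ideal.span_le, Set.singleton_subset_iff]; exact htP)⟩⟩
  · -- P is generated by an irreducible factor of q
    have hQp : (Ideal.comap mkq P).IsPrime := Ideal.IsPrime.comap mkq
    set Q := Ideal.comap mkq P with hQdef
    have hqQ : q ∈ Q := by
      have : mkq q = 0 := Ideal.Quotient.eq_zero_iff_mem.mpr (Ideal.subset_span rfl)
      simpa [hQdef, Ideal.mem_comap, this] using P.zero_mem
    have hassoc := UniqueFactorizationMonoid.factors_prod hq0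
    have hprodQ : (UniqueFactorizationMonoid.factors q).prod ∈ Q := by
      obtain ⟨u, hu⟩ := hassoc
      have : (UniqueFactorizationMonoid.factors q).prod = q * ↑u⁻¹ := by
        rw [Units.eq_mul_inv_iff_mul_eq]; exact hu
      rw [this]
      exact Q.mul_mem_right _ hqQ
    obtain ⟨f, hfmem, hfQ⟩ := (hQp.multiset_prod_mem_iff_exists_mem _).mp hprodQ
    have hfprime : Prime f := UniqueFactorizationMonoid.prime_of_factor f hfmem
    have hfdvdq : f ∣ q := (Multiset.dvd_prod hfmem).trans hassoc.dvd
    obtain ⟨g0, hg0⟩ := hfdvdq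
    have hlc : f.leadingCoeff * g0.leadingCoeff = 1 := by
      rw [← leadingCoeff_mul, ← hg0]; exact hq
    have hC : IsUnit (C g0.leadingCoeff : Polynomial ℤ_[p]) :=
      Polynomial.isUnit_C.mpr (IsUnit.of_mul_eq_one _ (mul_comm f.leadingCoeff _ ▸ hlc))
    set f₁ : Polynomial ℤ_[p] := C g0.leadingCoeff * f with hf₁def
    have hf₁monic : f₁.Monic := by
      have : f₁.leadingCoeff = 1 := by
        rw [hf₁def, leadingCoeff_mul, leadingCoeff_C, mul_comm]
        exact hlc
      exact this
    have hassocf : Associated f f₁ :=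
      ⟨hC.unit, by rw [hC.unit_spec, mul_comm]⟩
    have hf₁prime : Prime f₁ := hassocf.prime hfprime
    have hf₁Q : f₁ ∈ Q := Q.mul_mem_left _ hfQ
    have hle : Ideal.span {f₁} ≤ Q := by
      rw [Ideal.span_le, Set.singleton_subset_iff]; exact hf₁Q
    have hQle : Q ≤ Ideal.span {f₁} := by
      intro x hxQ
      by_contra hxs
      haveI hspf₁ : (Ideal.span {f₁}).IsPrime :=
        (Ideal.span_singleton_prime hf₁prime.ne_zero).mpr hf₁prime
      haveI : Module.Finite ℤ_[p] (Polynomial ℤ_[p] ⧸ Ideal.span {f₁}) :=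
        Module.Finite.of_basis (AdjoinRoot.powerBasis' hf₁monic).basis
      haveI : Algebra.IsIntegral ℤ_[p] (Polynomial ℤ_[p] ⧸ Ideal.span {f₁}) :=
        Algebra.IsIntegral.of_finite _ _
      set mk₁ : Polynomial ℤ_[p] →+* (Polynomial ℤ_[p] ⧸ Ideal.span {f₁}) :=
        Ideal.Quotient.mk (Ideal.span {f₁}) with hmk₁def
      set Q' := Q.map mk₁ with hQ'def
      haveI hQ'p : Q'.IsPrime := Ideal.map_isPrime_of_surjective
        Ideal.Quotient.mk_surjective (by rw [Ideal.mk_ker]; exact hle)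
      have hx' : mk₁ x ∈ Q' := Ideal.mem_map_of_mem _ hxQ
      have hx0 : mk₁ x ≠ 0 := by
        rw [Ne, Ideal.Quotient.eq_zero_iff_mem]; exact hxs
      have hcne : Ideal.comap (algebraMap ℤ_[p] (Polynomial ℤ_[p] ⧸ Ideal.span {f₁})) Q' ≠ ⊥ :=
        Ideal.comap_ne_bot_of_integral_mem hx0 hx' (Algebra.IsIntegral.isIntegral _)
      have hcmax := IsPrime.to_maximal_ideal hcne
      have hceq := IsLocalRing.eq_maximalIdeal hcmax
      have hpmem : ((p:ℕ):ℤ_[p]) ∈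
          Ideal.comap (algebraMap ℤ_[p] (Polynomial ℤ_[p] ⧸ Ideal.span {f₁})) Q' := by
        rw [hceq, PadicInt.maximalIdeal_eq_span_p]
        exact Ideal.mem_span_singleton_self _
      have hpQ' : ((p:ℕ):(Polynomial ℤ_[p] ⧸ Ideal.span {f₁})) ∈ Q' := by
        have := Ideal.mem_comap.mp hpmem
        rwa [map_natCast] at this
      have hpQ : ((p:ℕ):Polynomial ℤ_[p]) ∈ Q := by
        have hcm : Ideal.comap mk₁ Q' = Q := by
          rw [hQ'def, Ideal.comap_map_of_surjective _ Ideal.Quotient.mk_surjective,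
            ← RingHom.ker_eq_comap_bot, Ideal.mk_ker]
          exact sup_eq_left.mpr hle
        rw [← hcm]
        exact Ideal.mem_comap.mpr (by rwa [map_natCast])
      refine hpP ?_
      have := Ideal.mem_comap.mp hpQ
      rwa [map_natCast] at this
    have hQeq : Q = Ideal.span {f₁} := le_antisymm hQle hle
    have hPmap : P = Ideal.map mkq Q :=
      (Ideal.map_comap_of_surjective mkq Ideal.Quotient.mk_surjective P).symm
    exact ⟨⟨mkq f₁, by
      rw [Ideal.submodule_span_eq, hPmap, hQeq, Ideal.map_span, Set.image_singleton]⟩⟩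
end

section
/- Let h be a basic irreducible divisor of X^n − 1 over ZMod p^a and let P be the ideal of R_a generated by h̄ and the image of the constant polynomial p. Then for every integer i with 1 ≤ i ≤ a, the i-th power P^i equals the ideal of R_a generated by h̄ and the image of p^i. In particular P^a is the principal ideal generated by h̄. -/
open Polynomial

/-- The quotient ring `(ZMod p^a)[X]/(X^n - 1)`. -/
abbrev Rquot (p a n : ℕ) :=
  Polynomial (ZMod (p ^ a)) ⧸ Ideal.span {(X : Polynomial (ZMod (p ^ a))) ^ n - 1}

/-- The natural quotient map `(ZMod p^a)[X] → (ZMod p^a)[X]/(X^n - 1)`. -/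
noncomputable abbrev rmk (p a n : ℕ) : Polynomial (ZMod (p ^ a)) →+* Rquot p a n :=
  Ideal.Quotient.mk _

/-- A basic irreducible divisor of `X^n - 1` over `ZMod p^a`: a monic divisor of `X^n - 1`
whose coefficientwise reduction modulo `p` is irreducible. -/
def BasicIrr (p a n : ℕ) [Fact p.Prime] (ha : a ≠ 0) (h : Polynomial (ZMod (p ^ a))) : Prop :=
  h.Monic ∧ h ∣ (X ^ n - 1) ∧
    Irreducible (h.map (ZMod.castHom (dvd_pow_self p ha) (ZMod p)))

/-- `(I ⊔ J)^i ≤ I ⊔ J^i`. -/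
lemma aux_sup_pow_le {R : Type*} [CommRing R] (I J : Ideal R) (i : ℕ) :
    (I ⊔ J) ^ i ≤ I ⊔ J ^ i := by
  induction i with
  | zero => simp
  | succ k ih =>
    rw [pow_succ]
    calc (I ⊔ J) ^ k * (I ⊔ J) ≤ (I ⊔ J ^ k) * (I ⊔ J) := Ideal.mul_mono ih le_rfl
    _ ≤ I ⊔ J ^ (k + 1) := by
        rw [Ideal.sup_mul, Ideal.mul_sup, Ideal.mul_sup, pow_succ]
        refine sup_le (sup_le ?_ ?_) (sup_le ?_ ?_)
        · exact le_sup_of_le_left Ideal.mul_le_right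
        · exact le_sup_of_le_left Ideal.mul_le_left
        · exact le_sup_of_le_left Ideal.mul_le_right
        · exact le_sup_right

theorem stmt13 (p : ℕ) [Fact p.Prime] (a n : ℕ) (ha : 0 < a) (hn : 0 < n) (hpn : ¬ p ∣ n)
    (h : Polynomial (ZMod (p ^ a))) (hh : BasicIrr p a n ha.ne' h) :
    (∀ i : ℕ, 1 ≤ i → i ≤ a →
      (Ideal.span {rmk p a n h, rmk p a n (C (p : ZMod (p ^ a)))}) ^ i =
        Ideal.span {rmk p a n h, rmk p a n (C ((p : ZMod (p ^ a)) ^ i))}) ∧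
    (Ideal.span {rmk p a n h, rmk p a n (C (p : ZMod (p ^ a)))}) ^ a =
      Ideal.span {rmk p a n h} := by
  obtain ⟨hmon, ⟨g, hg⟩, hirr⟩ := hh
  set φ0 := ZMod.castHom (dvd_pow_self p ha.ne') (ZMod p) with hφ0
  set q := rmk p a n with hq
  -- the mod-p factorization and coprimality
  have hsep : (X ^ n - 1 : (ZMod p)[X]).Separable := by
    rw [Polynomial.X_pow_sub_one_separable_iff]
    simpa [ZMod.natCast_eq_zero_iff] using hpn
  have hfact : h.map φ0 * g.map φ0 = (X ^ n - 1 : (ZMod p)[X]) := by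
    rw [← Polynomial.map_mul, ← hg]
    simp
  have hndvd : ¬ h.map φ0 ∣ g.map φ0 := by
    intro hd
    refine hirr.not_isUnit (hsep.squarefree _ ?_)
    rw [← hfact]
    exact mul_dvd_mul_left _ hd
  obtain ⟨u', v', huv⟩ := hirr.coprime_iff_not_dvd.mpr hndvd
  -- lift the Bezout relation
  obtain ⟨u, hu⟩ := Polynomial.map_surjective φ0 (ZMod.ringHom_surjective φ0) u'
  obtain ⟨v, hv⟩ := Polynomial.map_surjective φ0 (ZMod.ringHom_surjective φ0) v'
  have hker : (u * h + v * g - 1).map φ0 = 0 := by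
    simp [Polynomial.map_mul, hu, hv, huv]
  have hmem : u * h + v * g - 1 ∈ Ideal.span {(C (p : ZMod (p ^ a)) : Polynomial (ZMod (p ^ a)))} := by
    have h1 : u * h + v * g - 1 ∈ RingHom.ker (Polynomial.mapRingHom φ0) := by
      simpa [RingHom.mem_ker] using hker
    rw [Polynomial.ker_mapRingHom] at h1
    have h2 : RingHom.ker φ0 ≤ Ideal.span {(p : ZMod (p ^ a))} := by
      intro x hx
      rw [RingHom.mem_ker] at hx
      have hx' : φ0 ((x.val : ℕ) : ZMod (p ^ a)) = 0 := by
        rwa [ZMod.natCast_val, ZMod.cast_id]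
      rw [map_natCast, ZMod.natCast_eq_zero_iff] at hx'
      obtain ⟨k, hk⟩ := hx'
      rw [Ideal.mem_span_singleton]
      refine ⟨(k : ZMod (p ^ a)), ?_⟩
      have : x = ((x.val : ℕ) : ZMod (p ^ a)) := by
        rw [ZMod.natCast_val, ZMod.cast_id]
      rw [this, hk]
      push_cast
      ring
    have h3 : u * h + v * g - 1 ∈
        (Ideal.span {(p : ZMod (p ^ a))}).map (C : ZMod (p ^ a) →+* Polynomial (ZMod (p ^ a))) :=
      Ideal.map_mono h2 h1
    rwa [Ideal.map_span, Set.image_singleton] at h3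
  rw [Ideal.mem_span_singleton] at hmem
  obtain ⟨w, hw⟩ := hmem
  -- key identity in the quotient ring: q h = c * q h with c ∈ P
  have hgh0 : q (h * g) = 0 := by
    rw [hq, ← hg]
    exact Ideal.Quotient.eq_zero_iff_mem.mpr (Ideal.subset_span rfl)
  set c : Rquot p a n := q u * q h - q (C (p : ZMod (p ^ a))) * q w with hc
  have hkey : c * q h = q h := by
    have hmain := congrArg (fun t => q (t * h)) hw
    simp only [sub_mul, add_mul, one_mul, map_sub, map_add, map_mul] at hmain
    have hvg : q v * q g * q h = 0 := by
      rw [mul_assoc, ← map_mul, mul_comm g h, hgh0, mul_zero]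
    linear_combination (q h) * hc + hmain - hvg
  set P : Ideal (Rquot p a n) := Ideal.span {q h, q (C (p : ZMod (p ^ a)))} with hP
  have hcP : c ∈ P := by
    apply sub_mem
    · exact Ideal.mul_mem_left _ _ (Ideal.subset_span (by simp))
    · exact Ideal.mul_mem_right _ _ (Ideal.subset_span (by simp))
  have hhe : ∀ i : ℕ, q h = c ^ i * q h := by
    intro i
    induction i with
    | zero => simp
    | succ k ih => rw [pow_succ, mul_assoc, hkey, ← ih]
  have hhPi : ∀ i : ℕ, q h ∈ P ^ i := by
    intro i
    rw [hhe i]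
    exact Ideal.mul_mem_right _ _ (Ideal.pow_mem_pow hcP i)
  have hPsplit : P = Ideal.span {q h} ⊔ Ideal.span {q (C (p : ZMod (p ^ a)))} := by
    rw [hP, Ideal.span_insert]
  have main : ∀ i : ℕ, P ^ i = Ideal.span {q h, q (C (p : ZMod (p ^ a))) ^ i} := by
    intro i
    apply le_antisymm
    · calc P ^ i ≤ Ideal.span {q h} ⊔ Ideal.span {q (C (p : ZMod (p ^ a)))} ^ i := by
            rw [hPsplit]; exact aux_sup_pow_le _ _ i
      _ = Ideal.span {q h} ⊔ Ideal.span {q (C (p : ZMod (p ^ a))) ^ i} := by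
            rw [Ideal.span_singleton_pow]
      _ = Ideal.span {q h, q (C (p : ZMod (p ^ a))) ^ i} := (Ideal.span_insert _ _).symm
    · rw [Ideal.span_le]
      rintro x (rfl | rfl)
      · exact hhPi i
      · exact Ideal.pow_mem_pow (Ideal.subset_span (by simp)) i
  constructor
  · intro i _ _
    rw [main i]
    congr 2
    rw [← map_pow, ← C_pow]
  · rw [main a]
    have hz : q (C (p : ZMod (p ^ a))) ^ a = 0 := by
      rw [← map_pow, ← C_pow, ← Nat.cast_pow, ZMod.natCast_self, map_zero, map_zero]
    rw [hz]
    have : ({q h, (0 : Rquot p a n)} : Set (Rquot p a n)) = insert 0 {q h} := by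
      rw [Set.pair_comm]
    rw [this, Ideal.span_insert, Ideal.span_singleton_eq_bot.mpr rfl, bot_sup_eq]
end

section
/- Let f₀, f₁, …, f_{a−1} ∈ (ZMod p^a)[X] be monic polynomials dividing X^n − 1 with f_{a−1} | f_{a−2} | ⋯ | f₁ | f₀. Then in R_a the ideal generated by the images of f₀, p·f₁, p²·f₂, …, p^{a−1}·f_{a−1} equals the principal ideal generated by the image of the single polynomial f₀ + p·f₁ + p²·f₂ + ⋯ + p^{a−1}·f_{a−1}. -/
open Polynomial

lemma nilp_ker {p a : ℕ} [Fact p.Prime] (ha : 0 < a) (x : ZMod (p ^ a))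
    (hx : ZMod.castHom (dvd_pow_self p ha.ne') (ZMod p) x = 0) : IsNilpotent x := by
  haveI : NeZero (p ^ a) := ⟨pow_ne_zero a (Nat.Prime.pos Fact.out).ne'⟩
  have h1 : ((x.val : ℕ) : ZMod p) = 0 := by
    rwa [ZMod.castHom_apply, ← ZMod.natCast_val] at hx
  obtain ⟨m, hm⟩ := (ZMod.natCast_eq_zero_iff _ _).mp h1
  have hxval : x = ((x.val : ℕ) : ZMod (p ^ a)) := (ZMod.natCast_zmod_val x).symm
  refine ⟨a, ?_⟩
  rw [hxval, hm]
  push_cast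
  have hp0 : ((p : ZMod (p ^ a)) ^ a) = 0 := by
    have := ZMod.natCast_self (p ^ a)
    push_cast at this
    exact this
  rw [mul_pow, hp0, zero_mul]

lemma coprime_lift {p a : ℕ} [Fact p.Prime] (ha : 0 < a)
    {A B : Polynomial (ZMod (p ^ a))}
    (h : IsCoprime (A.map (ZMod.castHom (dvd_pow_self p ha.ne') (ZMod p)))
      (B.map (ZMod.castHom (dvd_pow_self p ha.ne') (ZMod p)))) : IsCoprime A B := by
  set φ := ZMod.castHom (dvd_pow_self p ha.ne') (ZMod p) with hφdef
  haveI : NeZero p := ⟨(Nat.Prime.pos Fact.out).ne'⟩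
  have hφ : Function.Surjective φ := by
    intro y
    obtain ⟨k, rfl⟩ := ZMod.natCast_zmod_surjective y
    exact ⟨(k : ZMod (p ^ a)), map_natCast φ k⟩
  obtain ⟨u', v', huv⟩ := h
  obtain ⟨U, hU⟩ := Polynomial.map_surjective φ hφ u'
  obtain ⟨V, hV⟩ := Polynomial.map_surjective φ hφ v'
  set E := U * A + V * B - 1 with hE
  have hEmap : E.map φ = 0 := by
    rw [hE, Polynomial.map_sub, Polynomial.map_add, Polynomial.map_mul, Polynomial.map_mul,
      hU, hV, Polynomial.map_one, huv, sub_self]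
  have hEnil : IsNilpotent E := by
    rw [Polynomial.isNilpotent_iff]
    intro i
    apply nilp_ker ha
    have := congrArg (fun q => Polynomial.coeff q i) hEmap
    simp only [Polynomial.coeff_map, Polynomial.coeff_zero] at this; exact this
  obtain ⟨ε, hε⟩ := hEnil.isUnit_one_add
  refine ⟨↑ε⁻¹ * U, ↑ε⁻¹ * V, ?_⟩
  have h1 : U * A + V * B = 1 + E := by rw [hE]; ring
  calc ↑ε⁻¹ * U * A + ↑ε⁻¹ * V * B = ↑ε⁻¹ * (U * A + V * B) := by ring
    _ = (↑ε⁻¹ : Polynomial (ZMod (p ^ a))) * ↑ε := by rw [h1, hε]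
    _ = 1 := by rw [← Units.val_mul]; simp

lemma coprime_of_mul_eq {p a n : ℕ} [Fact p.Prime] (ha : 0 < a) (hn : 0 < n) (hpn : ¬ p ∣ n)
    {A B : Polynomial (ZMod (p ^ a))} (h : A * B = X ^ n - 1) : IsCoprime A B := by
  apply coprime_lift ha
  set φ := ZMod.castHom (dvd_pow_self p ha.ne') (ZMod p)
  have hmul : (A.map φ) * (B.map φ) = X ^ n - 1 := by
    rw [← Polynomial.map_mul, h, Polynomial.map_sub, Polynomial.map_pow, Polynomial.map_X,
      Polynomial.map_one]
  have hsep : ((X : Polynomial (ZMod p)) ^ n - 1).Separable := by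
    have := Polynomial.separable_X_pow_sub_C' p n (1 : ZMod p) hpn one_ne_zero
    simpa using this
  exact Polynomial.Separable.isCoprime (by rw [hmul]; exact hsep)

theorem stmt14 (p : ℕ) [Fact p.Prime] (a n : ℕ) (ha : 0 < a) (hn : 0 < n) (hpn : ¬ p ∣ n)
    (f : Fin a → Polynomial (ZMod (p ^ a)))
    (hmonic : ∀ i, (f i).Monic)
    (hdvd : ∀ i, f i ∣ (X ^ n - 1))
    (hchain : ∀ i j : Fin a, i ≤ j → f j ∣ f i) :
    Ideal.span (Set.range fun i : Fin a =>
        rmk p a n (C ((p : ZMod (p ^ a)) ^ (i : ℕ)) * f i)) =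
      Ideal.span {rmk p a n (∑ i : Fin a, C ((p : ZMod (p ^ a)) ^ (i : ℕ)) * f i)} := by
  classical
  set w : Polynomial (ZMod (p ^ a)) := X ^ n - 1 with hw
  set g : Polynomial (ZMod (p ^ a)) := ∑ i : Fin a, C ((p : ZMod (p ^ a)) ^ (i : ℕ)) * f i
    with hg
  set I : Ideal (Polynomial (ZMod (p ^ a))) := Ideal.span {g, w} with hI
  set f' : ℕ → Polynomial (ZMod (p ^ a)) := fun k => if h : k < a then f ⟨k, h⟩ else 1 with hf'
  have hf'lt : ∀ (k : ℕ) (h : k < a), f' k = f ⟨k, h⟩ := fun k h => dif_pos h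
  have hf'ge : ∀ k : ℕ, a ≤ k → f' k = 1 := fun k h => dif_neg (by omega)
  have hch' : ∀ i j : ℕ, i ≤ j → f' j ∣ f' i := by
    intro i j hij
    by_cases hj : j < a
    · have hi : i < a := lt_of_le_of_lt hij hj
      rw [hf'lt i hi, hf'lt j hj]
      exact hchain ⟨i, hi⟩ ⟨j, hj⟩ hij
    · rw [hf'ge j (by omega)]; exact one_dvd _
  have hdvd' : ∀ i : ℕ, f' i ∣ w := by
    intro i
    by_cases hi : i < a
    · rw [hf'lt i hi, hw]; exact hdvd _
    · rw [hf'ge i (by omega)]; exact one_dvd _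
  have hgsum : g = ∑ i ∈ Finset.range a, C ((p : ZMod (p ^ a)) ^ i) * f' i := by
    rw [hg, ← Fin.sum_univ_eq_sum_range]
    refine Finset.sum_congr rfl fun i _ => ?_
    rw [hf'lt i.1 i.2]
  have hgI : g ∈ I := Ideal.subset_span (by simp)
  have hwI : w ∈ I := Ideal.subset_span (by simp)
  have hpa0 : ((p : ZMod (p ^ a)) ^ a) = 0 := by
    have := ZMod.natCast_self (p ^ a)
    push_cast at this
    exact this
  have trivmem : ∀ k m : ℕ, a ≤ m → C ((p : ZMod (p ^ a)) ^ m) * f' k ∈ I := by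
    intro k m hma
    have h0 : ((p : ZMod (p ^ a)) ^ m) = 0 := by
      rw [show m = a + (m - a) by omega, pow_add, hpa0, zero_mul]
    rw [h0, map_zero, zero_mul]; exact I.zero_mem
  have key : ∀ d k : ℕ, a ≤ k + d → ∀ m : ℕ, k ≤ m →
      C ((p : ZMod (p ^ a)) ^ m) * f' k ∈ I := by
    intro d
    induction d with
    | zero => exact fun k hk m hm => trivmem k m (by omega)
    | succ d IH =>
      intro k hk m hm
      by_cases hka : a ≤ k
      · exact trivmem k m (by omega)
      · push_neg at hka
        have M : ∀ i e : ℕ, k + 1 ≤ e → i ≤ e →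
            C ((p : ZMod (p ^ a)) ^ e) * f' i ∈ I := by
          intro i e he hie
          by_cases hik : k + 1 ≤ i
          · exact IH i (by omega) e hie
          · push_neg at hik
            obtain ⟨c, hc⟩ := hch' i (k + 1) (by omega)
            have h1 : C ((p : ZMod (p ^ a)) ^ (k + 1)) * f' (k + 1) ∈ I :=
              IH (k + 1) (by omega) (k + 1) le_rfl
            have hpow : (p : ZMod (p ^ a)) ^ e
                = (p : ZMod (p ^ a)) ^ (e - (k + 1)) * (p : ZMod (p ^ a)) ^ (k + 1) := by
              rw [← pow_add]; congr 1; omega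
            have heq : C ((p : ZMod (p ^ a)) ^ e) * f' i
                = (C ((p : ZMod (p ^ a)) ^ (e - (k + 1))) * c) *
                  (C ((p : ZMod (p ^ a)) ^ (k + 1)) * f' (k + 1)) := by
              rw [hc, hpow, map_mul]; ring
            rw [heq]; exact Ideal.mul_mem_left _ _ h1
        rcases eq_or_lt_of_le hm with rfl | hlt
        · have inner : ∀ j : ℕ, j ≤ k → C ((p : ZMod (p ^ a)) ^ k) * f' j ∈ I := by
            intro j
            induction j with
            | zero =>
              intro _
              have hsum : C ((p : ZMod (p ^ a)) ^ k) * g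
                  = ∑ i ∈ Finset.range a, C ((p : ZMod (p ^ a)) ^ (k + i)) * f' i := by
                rw [hgsum, Finset.mul_sum]
                refine Finset.sum_congr rfl fun i _ => ?_
                rw [← mul_assoc, ← C_mul, ← pow_add]
              have h0mem : (0 : ℕ) ∈ Finset.range a := Finset.mem_range.mpr ha
              have hsplit := Finset.add_sum_erase _
                (fun i => C ((p : ZMod (p ^ a)) ^ (k + i)) * f' i) h0mem
              have hrest : ∑ i ∈ (Finset.range a).erase 0,
                  C ((p : ZMod (p ^ a)) ^ (k + i)) * f' i ∈ I := by
                refine Ideal.sum_mem _ fun i hi => ?_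
                obtain ⟨h0, _⟩ := Finset.mem_erase.mp hi
                exact M i (k + i) (by omega) (by omega)
              have heq0 : C ((p : ZMod (p ^ a)) ^ (k + 0)) * f' 0
                  = C ((p : ZMod (p ^ a)) ^ k) * g - ∑ i ∈ (Finset.range a).erase 0,
                    C ((p : ZMod (p ^ a)) ^ (k + i)) * f' i :=
                eq_sub_of_add_eq (hsplit.trans hsum.symm)
              have := heq0 ▸ Ideal.sub_mem I (Ideal.mul_mem_left _ _ hgI) hrest
              simpa using this
            | succ j IHj =>
              intro hj1
              obtain ⟨hh, hwhh⟩ := hdvd' j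
              have cop : IsCoprime (f' j) hh := coprime_of_mul_eq ha hn hpn (hwhh.symm.trans hw)
              obtain ⟨u, v, huv⟩ := cop
              have hTsum : (C ((p : ZMod (p ^ a)) ^ (k - (j + 1))) * (v * hh)) * g
                  = ∑ i ∈ Finset.range a,
                    C ((p : ZMod (p ^ a)) ^ (k - (j + 1) + i)) * (v * hh * f' i) := by
                rw [hgsum, Finset.mul_sum]
                refine Finset.sum_congr rfl fun i _ => ?_
                rw [pow_add, map_mul]; ring
              have hj1a : j + 1 ∈ Finset.range a := Finset.mem_range.mpr (by omega)
              have hrest : ∑ i ∈ (Finset.range a).erase (j + 1),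
                  C ((p : ZMod (p ^ a)) ^ (k - (j + 1) + i)) * (v * hh * f' i) ∈ I := by
                refine Ideal.sum_mem _ fun i hi => ?_
                obtain ⟨hne, hir⟩ := Finset.mem_erase.mp hi
                by_cases hij : i ≤ j
                · obtain ⟨c, hc⟩ := hch' i j hij
                  have heqw : C ((p : ZMod (p ^ a)) ^ (k - (j + 1) + i)) * (v * hh * f' i)
                      = (C ((p : ZMod (p ^ a)) ^ (k - (j + 1) + i)) * (v * c)) * w := by
                    rw [hc, hwhh]; ring
                  rw [heqw]; exact Ideal.mul_mem_left _ _ hwI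
                · push_neg at hij
                  have heqm : C ((p : ZMod (p ^ a)) ^ (k - (j + 1) + i)) * (v * hh * f' i)
                      = (v * hh) * (C ((p : ZMod (p ^ a)) ^ (k - (j + 1) + i)) * f' i) := by
                    ring
                  rw [heqm]
                  exact Ideal.mul_mem_left _ _ (M i (k - (j + 1) + i) (by omega) (by omega))
              have hsplit := Finset.add_sum_erase _
                (fun i => C ((p : ZMod (p ^ a)) ^ (k - (j + 1) + i)) * (v * hh * f' i)) hj1a
              have heqterm : C ((p : ZMod (p ^ a)) ^ (k - (j + 1) + (j + 1))) *
                    (v * hh * f' (j + 1))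
                  = (C ((p : ZMod (p ^ a)) ^ (k - (j + 1))) * (v * hh)) * g -
                    ∑ i ∈ (Finset.range a).erase (j + 1),
                      C ((p : ZMod (p ^ a)) ^ (k - (j + 1) + i)) * (v * hh * f' i) :=
                eq_sub_of_add_eq (hsplit.trans hTsum.symm)
              have hterm : C ((p : ZMod (p ^ a)) ^ (k - (j + 1) + (j + 1))) *
                  (v * hh * f' (j + 1)) ∈ I :=
                heqterm ▸ Ideal.sub_mem I (Ideal.mul_mem_left _ _ hgI) hrest
              rw [show k - (j + 1) + (j + 1) = k by omega] at hterm
              have hfirst : (u * f' (j + 1)) * (C ((p : ZMod (p ^ a)) ^ k) * f' j) ∈ I :=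
                Ideal.mul_mem_left _ _ (IHj (by omega))
              have hassemble : C ((p : ZMod (p ^ a)) ^ k) * f' (j + 1)
                  = (u * f' (j + 1)) * (C ((p : ZMod (p ^ a)) ^ k) * f' j) +
                    C ((p : ZMod (p ^ a)) ^ k) * (v * hh * f' (j + 1)) := by
                calc C ((p : ZMod (p ^ a)) ^ k) * f' (j + 1)
                    = (C ((p : ZMod (p ^ a)) ^ k) * f' (j + 1)) * (u * f' j + v * hh) := by
                      rw [huv, mul_one]
                  _ = _ := by ring
              rw [hassemble]
              exact Ideal.add_mem _ hfirst hterm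
          exact inner k le_rfl
        · exact M k m hlt hm
  have keymem : ∀ i : Fin a, C ((p : ZMod (p ^ a)) ^ (i : ℕ)) * f i ∈ I := by
    intro i
    have h := key a i.1 (by omega) i.1 le_rfl
    rwa [hf'lt i.1 i.2, Fin.eta] at h
  apply le_antisymm
  · rw [Ideal.span_le]
    rintro x ⟨i, rfl⟩
    have h1 := keymem i
    rw [hI, Ideal.mem_span_pair] at h1
    obtain ⟨α, β, hab⟩ := h1
    rw [SetLike.mem_coe, Ideal.mem_span_singleton]
    refine ⟨rmk p a n α, ?_⟩
    have hw0 : rmk p a n w = 0 :=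
      Ideal.Quotient.eq_zero_iff_mem.mpr (by rw [hw]; exact Ideal.subset_span rfl)
    calc rmk p a n (C ((p : ZMod (p ^ a)) ^ (i : ℕ)) * f i)
        = rmk p a n (α * g + β * w) := by rw [hab]
      _ = rmk p a n g * rmk p a n α := by
          rw [map_add, map_mul, map_mul, hw0, mul_zero, add_zero, mul_comm]
  · rw [Ideal.span_le]
    intro x hx
    rw [Set.mem_singleton_iff] at hx
    subst hx
    have hgeq : rmk p a n g = ∑ i : Fin a, rmk p a n (C ((p : ZMod (p ^ a)) ^ (i : ℕ)) * f i) := by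
      rw [hg, map_sum]
    rw [SetLike.mem_coe, hgeq]
    exact Ideal.sum_mem _ fun i _ => Ideal.subset_span ⟨i, rfl⟩
end

section
/- Let p be a prime, a and n positive integers, and let C be a ZMod p^a-submodule of (ZMod p^a)^n. Define the dual C^⊥ = {v ∈ (ZMod p^a)^n : Σ_{i=1}^{n} v_i·c_i = 0 for all c ∈ C}, which is again a submodule. Then (the cardinality of C)·(the cardinality of C^⊥) = p^{a·n}, and (C^⊥)^⊥ = C. -/
set_option linter.unusedSectionVars false

-- key div lemma
lemma zmod_mem_span {N : ℕ} [NeZero N] (b x : ZMod N)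
    (h : ∀ c : ZMod N, c * b = 0 → c * x = 0) : ∃ y : ZMod N, x = b * y := by
  have hN : N ≠ 0 := NeZero.ne N
  set d := Nat.gcd b.val N with hd
  have hdN : d ∣ N := Nat.gcd_dvd_right _ _
  have hdb : d ∣ b.val := Nat.gcd_dvd_left _ _
  have hd0 : d ≠ 0 := fun h0 => hN (Nat.eq_zero_of_gcd_eq_zero_right h0)
  obtain ⟨t, ht⟩ := hdb
  -- c := N/d kills b
  have hcb : ((N / d : ℕ) : ZMod N) * b = 0 := by
    have : ((N / d : ℕ) : ZMod N) * b = ((N / d * b.val : ℕ) : ZMod N) := by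
      push_cast
      rw [ZMod.natCast_val, ZMod.cast_id]
    rw [this]
    rw [ZMod.natCast_eq_zero_iff]
    rw [ht, ← mul_assoc, Nat.div_mul_cancel hdN]
    exact Dvd.intro t rfl
  have hcx := h _ hcb
  -- deduce d ∣ x.val
  have hdvd : N ∣ N / d * x.val := by
    have : ((N / d * x.val : ℕ) : ZMod N) = 0 := by
      push_cast
      rw [ZMod.natCast_val, ZMod.cast_id]
      exact hcx
    exact (ZMod.natCast_eq_zero_iff _ _).mp this
  have hNd0 : N / d ≠ 0 := fun h0 => hN (by
    have := Nat.div_mul_cancel hdN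
    rw [h0, zero_mul] at this; exact this.symm)
  have hdx : d ∣ x.val := by
    have h1 : N / d * d ∣ N / d * x.val := by
      rw [Nat.div_mul_cancel hdN]; exact hdvd
    exact (mul_dvd_mul_iff_left hNd0).mp h1
  -- d is a combination of b
  obtain ⟨u, hu⟩ : ∃ u : ZMod N, (d : ZMod N) = b * u := by
    refine ⟨((Nat.gcdA b.val N : ℤ) : ZMod N), ?_⟩
    have := Nat.gcd_eq_gcd_ab b.val N
    have h2 : ((d : ℤ) : ZMod N) = ((b.val * Nat.gcdA b.val N + N * Nat.gcdB b.val N : ℤ) : ZMod N) := by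
      rw [← this]
    push_cast at h2
    rw [ZMod.natCast_val, ZMod.cast_id, ZMod.natCast_self, zero_mul, add_zero] at h2
    exact h2
  obtain ⟨s, hs⟩ := hdx
  refine ⟨u * (s : ZMod N), ?_⟩
  have : x = ((x.val : ℕ) : ZMod N) := by rw [ZMod.natCast_val, ZMod.cast_id]
  rw [this, hs]
  push_cast
  rw [hu]; ring

lemma baer_zmod (N : ℕ) [NeZero N] : Module.Baer (ZMod N) (ZMod N) := by
  have : IsPrincipalIdealRing (ZMod N) :=
    IsPrincipalIdealRing.of_surjective (Int.castRingHom (ZMod N)) ZMod.intCast_surjective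
  intro I g
  obtain ⟨b, hb⟩ := (IsPrincipalIdealRing.principal I).principal
  have hbI : b ∈ I := hb ▸ Ideal.subset_span (Set.mem_singleton b)
  set x := g ⟨b, hbI⟩ with hx
  have hann : ∀ c : ZMod N, c * b = 0 → c * x = 0 := by
    intro c hc
    have : c • (⟨b, hbI⟩ : I) = (0 : I) := by
      apply Subtype.ext
      simpa [smul_eq_mul] using hc
    calc c * x = c • g ⟨b, hbI⟩ := by simp [smul_eq_mul, hx]
    _ = g (c • ⟨b, hbI⟩) := (map_smul g c _).symm
    _ = 0 := by rw [this, map_zero]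
  obtain ⟨y, hy⟩ := zmod_mem_span b x hann
  refine ⟨LinearMap.toSpanSingleton (ZMod N) (ZMod N) y, ?_⟩
  intro z hz
  have hz2 : z ∈ Submodule.span (ZMod N) {b} := by rw [← hb]; exact hz
  obtain ⟨c, hc⟩ := Submodule.mem_span_singleton.mp hz2
  simp only [smul_eq_mul] at hc
  have : (⟨z, hz⟩ : I) = c • ⟨b, hbI⟩ := by
    apply Subtype.ext; simp [smul_eq_mul, hc]
  rw [this, map_smul, ← hx, LinearMap.toSpanSingleton_apply]
  simp only [smul_eq_mul, ← hc, hy]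
  ring

-- torsion subgroup card
lemma card_torsion (m N : ℕ) [NeZero N] (hm : m ∣ N) :
    Nat.card {x : ZMod N // (m : ZMod N) * x = 0} = m := by
  have hN : N ≠ 0 := NeZero.ne N
  have hm0 : m ≠ 0 := by rintro rfl; exact hN (Nat.eq_zero_of_zero_dvd hm)
  have hq0 : N / m ≠ 0 := fun h0 => hN (by
    have := Nat.div_mul_cancel hm; rw [h0, zero_mul] at this; exact this.symm)
  have hNm : N / m * m = N := Nat.div_mul_cancel hm
  have : NeZero m := ⟨hm0⟩
  set e : ZMod m → {x : ZMod N // (m : ZMod N) * x = 0} := fun k =>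
    ⟨((N / m * k.val : ℕ) : ZMod N), by
      rw [show (m : ZMod N) * ((N / m * k.val : ℕ) : ZMod N) = ((m * (N / m * k.val) : ℕ) : ZMod N) by push_cast; ring]
      rw [ZMod.natCast_eq_zero_iff]
      exact ⟨k.val, by rw [← mul_assoc, mul_comm m (N/m), hNm]⟩⟩ with he
  have hbij : Function.Bijective e := by
    constructor
    · intro k j h
      have h1 : ((N / m * k.val : ℕ) : ZMod N) = ((N / m * j.val : ℕ) : ZMod N) := congrArg Subtype.val h
      have hk : N / m * k.val < N := by
        calc N / m * k.val < N / m * m := by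
              exact (Nat.mul_lt_mul_left (Nat.pos_of_ne_zero hq0)).mpr (ZMod.val_lt k)
        _ = N := hNm
      have hj : N / m * j.val < N := by
        calc N / m * j.val < N / m * m := by
              exact (Nat.mul_lt_mul_left (Nat.pos_of_ne_zero hq0)).mpr (ZMod.val_lt j)
        _ = N := hNm
      have h2 := congrArg ZMod.val h1
      rw [ZMod.val_cast_of_lt hk, ZMod.val_cast_of_lt hj] at h2
      have hkj : k.val = j.val := Nat.eq_of_mul_eq_mul_left (Nat.pos_of_ne_zero hq0) h2
      exact ZMod.val_injective _ hkj
    · rintro ⟨x, hx⟩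
      have hdvd : N ∣ m * x.val := by
        rw [show (m : ZMod N) * x = ((m * x.val : ℕ) : ZMod N) by push_cast; rw [ZMod.natCast_val, ZMod.cast_id]] at hx
        exact (ZMod.natCast_eq_zero_iff _ _).mp hx
      have hqx : N / m ∣ x.val := by
        have h1 : m * (N / m) ∣ m * x.val := by rw [mul_comm m (N/m), hNm]; exact hdvd
        exact (mul_dvd_mul_iff_left hm0).mp h1
      obtain ⟨j, hj⟩ := hqx
      have hjm : j < m := by
        have hlt : x.val < N := ZMod.val_lt x
        rw [hj] at hlt
        have hlt2 : N / m * j < N / m * m := by rw [hNm]; exact hlt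
        exact (Nat.mul_lt_mul_left (Nat.pos_of_ne_zero hq0)).mp hlt2
      refine ⟨(j : ZMod m), Subtype.ext ?_⟩
      show ((N / m * (j : ZMod m).val : ℕ) : ZMod N) = x
      rw [ZMod.val_cast_of_lt hjm, ← hj, ZMod.natCast_val, ZMod.cast_id]
  calc Nat.card {x : ZMod N // (m : ZMod N) * x = 0} = Nat.card (ZMod m) :=
        (Nat.card_eq_of_bijective e hbij).symm
  _ = m := Nat.card_zmod m

lemma card_hom_zmod (m N : ℕ) [NeZero N] (hm : m ∣ N) :
    Nat.card (ZMod m →+ ZMod N) = m := by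
  have hN : N ≠ 0 := NeZero.ne N
  have hm0 : m ≠ 0 := by rintro rfl; exact hN (Nat.eq_zero_of_zero_dvd hm)
  have : NeZero m := ⟨hm0⟩
  have e1 : (ZMod m →+ ZMod N) ≃ {f : ℤ →+ ZMod N // f (m : ℤ) = 0} := (ZMod.lift m).symm
  have e2 : {f : ℤ →+ ZMod N // f (m : ℤ) = 0} ≃ {x : ZMod N // (m : ZMod N) * x = 0} := by
    refine ((zmultiplesHom (ZMod N)).symm.subtypeEquiv ?_)
    intro f
    show f (m : ℤ) = 0 ↔ (m : ZMod N) * ((zmultiplesHom (ZMod N)).symm f) = 0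
    have h1 : ((zmultiplesHom (ZMod N)).symm f) = f 1 := rfl
    have h2 : f (m : ℤ) = (m : ℤ) • f 1 := by
      conv_lhs => rw [show (m : ℤ) = (m : ℤ) • (1 : ℤ) by simp]
      rw [map_zsmul]
    rw [h1, h2, zsmul_eq_mul]
    push_cast
    rfl
  rw [Nat.card_congr (e1.trans e2), card_torsion m N hm]


lemma card_dual_eq (A : Type) [AddCommGroup A] [Finite A] (N : ℕ) [NeZero N]
    (hN : ∀ x : A, N • x = 0) : Nat.card (A →+ ZMod N) = Nat.card A := by
  classical
  obtain ⟨ι, hι, q, hq, ⟨e0⟩⟩ := AddCommGroup.equiv_directSum_zmod_of_finite' A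
  let E : A ≃+ ((i : ι) → ZMod (q i)) := e0.trans (DirectSum.addEquivProd _)
  have hqN : ∀ i, q i ∣ N := by
    intro i
    have : NeZero (q i) := ⟨by have := hq i; omega⟩
    have h1 := hN (E.symm (Pi.single i 1))
    have h2 : N • (Pi.single i (1 : ZMod (q i)) : (j : ι) → ZMod (q j)) = 0 := by
      have := congrArg E h1
      rw [map_nsmul, AddEquiv.apply_symm_apply, map_zero] at this
      exact this
    have h3 : N • (1 : ZMod (q i)) = 0 := by
      have := congrArg (fun f => f i) h2
      simpa using this
    rw [nsmul_eq_mul, mul_one] at h3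
    exact (ZMod.natCast_eq_zero_iff _ _).mp h3
  have e1 : (A →+ ZMod N) ≃ (((i : ι) → ZMod (q i)) →+ ZMod N) :=
    AddEquiv.addMonoidHomCongrLeftEquiv E
  have e2 : (((i : ι) → ZMod (q i)) →+ ZMod N) ≃ ((i : ι) → (ZMod (q i) →+ ZMod N)) :=
    (Pi.addMonoidHomAddEquiv _ _).toEquiv
  rw [Nat.card_congr (e1.trans e2), Nat.card_pi]
  have : Nat.card A = ∏ i, (q i) := by
    rw [Nat.card_congr E.toEquiv, Nat.card_pi]
    congr 1
    ext i
    exact Nat.card_zmod (q i)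
  rw [this]
  congr 1
  ext i
  exact card_hom_zmod (q i) N (hqN i)


section X
variable {N : ℕ} [NeZero N] {A B : Type} [AddCommGroup A] [AddCommGroup B]
  [Module (ZMod N) A] [Module (ZMod N) B]

/-- linear maps and additive maps coincide over ZMod N -/
def linEquivAdd : (A →ₗ[ZMod N] B) ≃ (A →+ B) where
  toFun f := f.toAddMonoidHom
  invFun f :=
    { toFun := f
      map_add' := f.map_add
      map_smul' := by
        intro z x
        simp only [RingHom.id_apply]
        have h1 : z • x = z.val • x := by
          rw [← Nat.cast_smul_eq_nsmul (ZMod N) z.val x, ZMod.natCast_val, ZMod.cast_id]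
        have h2 : z • f x = z.val • f x := by
          rw [← Nat.cast_smul_eq_nsmul (ZMod N) z.val (f x), ZMod.natCast_val, ZMod.cast_id]
        rw [h1, h2, map_nsmul] }
  left_inv f := by ext x; rfl
  right_inv f := by ext x; rfl

lemma card_lin_eq (hA : Finite A) (htors : ∀ x : A, N • x = 0) :
    Nat.card (A →ₗ[ZMod N] ZMod N) = Nat.card A := by
  rw [Nat.card_congr (linEquivAdd (N := N))]
  exact card_dual_eq A N htors
end X


section Main
variable (N n : ℕ) [NeZero N]

abbrev Mo := Fin n → ZMod N

/-- the dual submodule -/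
def dualSub (C : Submodule (ZMod N) (Mo N n)) : Submodule (ZMod N) (Mo N n) where
  carrier := {v | ∀ c ∈ C, ∑ i, v i * c i = 0}
  add_mem' := by
    intro v w hv hw c hc
    simp only [Pi.add_apply, add_mul]
    rw [Finset.sum_add_distrib, hv c hc, hw c hc, add_zero]
  zero_mem' := by intro c hc; simp
  smul_mem' := by
    intro r v hv c hc
    simp only [Pi.smul_apply, smul_eq_mul, mul_assoc, ← Finset.mul_sum]
    rw [hv c hc, mul_zero]

lemma mem_dualSub {C : Submodule (ZMod N) (Mo N n)} {v : Mo N n} :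
    v ∈ dualSub N n C ↔ ∀ c ∈ C, ∑ i, v i * c i = 0 := Iff.rfl

/-- pairing map into the dual of C -/
def Psi (C : Submodule (ZMod N) (Mo N n)) : Mo N n →ₗ[ZMod N] (C →ₗ[ZMod N] ZMod N) where
  toFun v :=
    { toFun := fun c => ∑ i, v i * c.1 i
      map_add' := by
        intro c d
        simp only [Submodule.coe_add, Pi.add_apply, mul_add]
        rw [Finset.sum_add_distrib]
      map_smul' := by
        intro r c
        simp only [SetLike.val_smul, Pi.smul_apply, smul_eq_mul, RingHom.id_apply]
        rw [Finset.mul_sum]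
        congr 1; ext i; ring }
  map_add' := by
    intro v w; ext c
    simp only [Pi.add_apply, add_mul, LinearMap.coe_mk, AddHom.coe_mk, LinearMap.add_apply]
    rw [Finset.sum_add_distrib]
  map_smul' := by
    intro r v; ext c
    simp only [Pi.smul_apply, smul_eq_mul, LinearMap.coe_mk, AddHom.coe_mk, RingHom.id_apply,
      LinearMap.smul_apply]
    rw [Finset.mul_sum]
    congr 1; ext i; ring

lemma ker_Psi (C : Submodule (ZMod N) (Mo N n)) :
    LinearMap.ker (Psi N n C) = dualSub N n C := by
  ext v
  simp only [LinearMap.mem_ker, mem_dualSub]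
  constructor
  · intro h c hc
    exact congrArg (fun f => f ⟨c, hc⟩) h
  · intro h
    ext c
    exact h c.1 c.2

lemma surj_Psi (C : Submodule (ZMod N) (Mo N n)) : Function.Surjective (Psi N n C) := by
  intro f
  obtain ⟨g, hg⟩ := (baer_zmod N).extension_property C.subtype
    (Submodule.injective_subtype C) f
  refine ⟨fun i => g (Pi.single i 1), ?_⟩
  ext c
  show ∑ i, g (Pi.single i 1) * c.1 i = f c
  have hc : (c : Mo N n) = ∑ i, c.1 i • (Pi.single i (1 : ZMod N) : Mo N n) := by
    ext j
    rw [Finset.sum_apply]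
    simp [Pi.single_apply]
  calc ∑ i, g (Pi.single i 1) * c.1 i
      = ∑ i, g (c.1 i • (Pi.single i (1 : ZMod N) : Mo N n)) := by
        congr 1; ext i; rw [map_smul, smul_eq_mul]; ring
  _ = g (∑ i, c.1 i • (Pi.single i (1 : ZMod N) : Mo N n)) := (map_sum g _ _).symm
  _ = g (c : Mo N n) := by rw [← hc]
  _ = f c := by
        have := congrArg (fun h => h c) hg
        simpa using this


lemma counting (C : Submodule (ZMod N) (Mo N n)) :
    Nat.card (dualSub N n C) * Nat.card C = N ^ n := by
  have hfin : Finite (Mo N n) := inferInstance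
  have hCfin : Finite C := inferInstance
  have htors : ∀ x : C, N • x = 0 := by
    intro x
    have : ((N : ZMod N)) • x = 0 := by
      rw [ZMod.natCast_self, zero_smul]
    rwa [Nat.cast_smul_eq_nsmul] at this
  have hdual : Nat.card (C →ₗ[ZMod N] ZMod N) = Nat.card C := card_lin_eq hCfin htors
  have hquot : Nat.card (Mo N n ⧸ dualSub N n C) = Nat.card (C →ₗ[ZMod N] ZMod N) := by
    rw [← ker_Psi]
    exact Nat.card_congr (LinearMap.quotKerEquivOfSurjective _ (surj_Psi N n C)).toEquiv
  have htot := Submodule.card_eq_card_quotient_mul_card (dualSub N n C)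
  rw [hquot, hdual] at htot
  have hM : Nat.card (Mo N n) = N ^ n := by
    rw [Nat.card_pi]
    simp [Nat.card_zmod]
  rw [← hM, htot]

lemma dual_antitone_refl (C : Submodule (ZMod N) (Mo N n)) :
    C ≤ dualSub N n (dualSub N n C) := by
  intro c hc
  rw [mem_dualSub]
  intro w hw
  rw [mem_dualSub] at hw
  rw [show ∑ i, c i * w i = ∑ i, w i * c i from by congr 1; ext i; ring]
  exact hw c hc

lemma double_dual (C : Submodule (ZMod N) (Mo N n)) :
    dualSub N n (dualSub N n C) = C := by
  have h1 := counting N n C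
  have h2 := counting N n (dualSub N n C)
  have hle := dual_antitone_refl N n C
  have hC : Finite C := inferInstance
  have hpos : 0 < Nat.card (dualSub N n C) := Nat.card_pos
  have hcards : Nat.card (dualSub N n (dualSub N n C)) = Nat.card C := by
    have h3 : Nat.card (dualSub N n (dualSub N n C)) * Nat.card (dualSub N n C)
        = Nat.card C * Nat.card (dualSub N n C) := by
      rw [h2, ← h1]; ring
    exact Nat.eq_of_mul_eq_mul_right hpos h3
  -- inclusion is bijective
  apply le_antisymm _ hle
  intro v hv
  have hinj : Function.Injective (Submodule.inclusion hle) :=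
    Submodule.inclusion_injective hle
  have hbij : Function.Bijective (Submodule.inclusion hle) := by
    rw [Nat.bijective_iff_injective_and_card]
    exact ⟨hinj, by rw [hcards]⟩
  obtain ⟨⟨c, hc⟩, hcv⟩ := hbij.2 ⟨v, hv⟩
  have : c = v := congrArg Subtype.val hcv
  rwa [← this]

end Main

theorem stmt15 (p : ℕ) [Fact p.Prime] (a n : ℕ) (ha : 0 < a) (hn : 0 < n)
    (C : Submodule (ZMod (p ^ a)) (Fin n → ZMod (p ^ a)))
    (Cdual : Submodule (ZMod (p ^ a)) (Fin n → ZMod (p ^ a)))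
    (hCdual : ∀ v, v ∈ Cdual ↔ ∀ c ∈ C, ∑ i, v i * c i = 0) :
    Nat.card C * Nat.card Cdual = p ^ (a * n) ∧
    (∀ v, v ∈ C ↔ ∀ w ∈ Cdual, ∑ i, v i * w i = 0) := by
  haveI : NeZero (p ^ a) := ⟨pow_ne_zero a (Nat.Prime.ne_zero Fact.out)⟩
  have hC : Cdual = dualSub (p ^ a) n C := by
    ext v
    rw [mem_dualSub]
    exact hCdual v
  constructor
  · rw [hC, mul_comm, counting (p ^ a) n C, ← pow_mul]
  · intro v
    conv_lhs => rw [← double_dual (p ^ a) n C]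
    rw [mem_dualSub, ← hC]
end

section
/- There exists s ∈ ℤ_2 with s² = −n. For any such s, the numbers α = (n+1)/(2n), β = (1+s)/(2n), γ = (1−s)/(2n) and α' = (n−1)/(2n), β' = (−1+s)/(2n), γ' = (−1−s)/(2n) are well-defined elements of ℤ_2 (the numerators are divisible by 2 and n is a unit), and both elements e = α + β·f_Q(X) + γ·f_N(X) and e' = α' + β'·f_Q(X) + γ'·f_N(X) of R are idempotent: e² = e and e'² = e'. -/
open Polynomial
open scoped Classical

/-- `f_Q(X) = ∑_{k ∈ Q} X^k`, where `Q` is the set of `k` with `1 ≤ k ≤ n-1` that are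
quadratic residues modulo `n`, as a polynomial over the 2-adic integers. -/
noncomputable def fQpoly (n : ℕ) : Polynomial ℤ_[2] :=
  ∑ k ∈ (Finset.Ico 1 n).filter (fun k : ℕ => IsSquare ((k : ZMod n))), X ^ k

/-- `f_N(X) = ∑_{k ∈ N} X^k`, where `N` is the set of `k` with `1 ≤ k ≤ n-1` that are
quadratic nonresidues modulo `n`, as a polynomial over the 2-adic integers. -/
noncomputable def fNpoly (n : ℕ) : Polynomial ℤ_[2] :=
  ∑ k ∈ (Finset.Ico 1 n).filter (fun k : ℕ => ¬ IsSquare ((k : ZMod n))), X ^ k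

section Aux

variable {n : ℕ} [hFn : Fact n.Prime]

/-- The quadratic character of `ZMod n`, valued in `ℤ_[2]`. -/
noncomputable def chiP (n : ℕ) [Fact n.Prime] (a : ZMod n) : ℤ_[2] :=
  ((quadraticChar (ZMod n) a : ℤ) : ℤ_[2])

/-- Indicator of `0` in `ZMod n`, valued in `ℤ_[2]`. -/
noncomputable def deltaP (n : ℕ) (a : ZMod n) : ℤ_[2] := if a = 0 then 1 else 0

/-- A rescaled coefficient function. -/
noncomputable def Wf (n : ℕ) [Fact n.Prime] (s : ℤ_[2]) (a : ZMod n) : ℤ_[2] :=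
  1 + s * chiP n a + n * deltaP n a

lemma key_char_sum (hn2 : n ≠ 2) (c : ZMod n) :
    ∑ a : ZMod n, (quadraticChar (ZMod n) a) * (quadraticChar (ZMod n) (c - a))
      = (quadraticChar (ZMod n) (-1)) * (if c = 0 then (n : ℤ) - 1 else -1) := by
  have hchar : ringChar (ZMod n) ≠ 2 := by
    rw [ZMod.ringChar_zmod_n]; exact hn2
  by_cases hc : c = 0
  · subst hc
    have h1 : ∀ a : ZMod n,
        quadraticChar (ZMod n) a * quadraticChar (ZMod n) (0 - a)
          = quadraticChar (ZMod n) (-1) * (quadraticChar (ZMod n) a) ^ 2 := by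
      intro a
      have : (0 : ZMod n) - a = -1 * a := by ring
      rw [this, map_mul]; ring
    rw [Finset.sum_congr rfl (fun a _ => h1 a), ← Finset.mul_sum]
    have h2 : ∀ a : ZMod n, (quadraticChar (ZMod n) a) ^ 2
        = 1 - (if a = 0 then (1 : ℤ) else 0) := by
      intro a
      by_cases ha : a = 0
      · simp [ha, quadraticChar_zero]
      · rw [quadraticChar_sq_one ha, if_neg ha]; ring
    rw [Finset.sum_congr rfl (fun a _ => h2 a), Finset.sum_sub_distrib]
    simp [Finset.card_univ, ZMod.card, if_pos rfl]
  · rw [if_neg hc]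
    have hzero : quadraticChar (ZMod n) 0 * quadraticChar (ZMod n) (c - 0) = 0 := by
      simp [quadraticChar_zero]
    rw [← Finset.sum_erase (f := fun a : ZMod n =>
      quadraticChar (ZMod n) a * quadraticChar (ZMod n) (c - a)) Finset.univ hzero]
    have key : ∑ a ∈ Finset.univ.erase (0 : ZMod n),
        quadraticChar (ZMod n) a * quadraticChar (ZMod n) (c - a)
        = ∑ y ∈ Finset.univ.erase (-1 : ZMod n), quadraticChar (ZMod n) y := by
      refine Finset.sum_nbij' (fun a => c * a⁻¹ - 1) (fun y => c * (y + 1)⁻¹) ?_ ?_ ?_ ?_ ?_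
      · intro a ha
        rw [Finset.mem_erase] at ha ⊢
        refine ⟨?_, Finset.mem_univ _⟩
        intro h
        have : c * a⁻¹ = 0 := by linear_combination h
        rcases mul_eq_zero.mp this with h' | h'
        · exact hc h'
        · exact ha.1 (by simpa using inv_eq_zero.mp h')
      · intro y hy
        rw [Finset.mem_erase] at hy ⊢
        refine ⟨?_, Finset.mem_univ _⟩
        have hy1 : y + 1 ≠ 0 := fun h => hy.1 (by linear_combination h)
        exact mul_ne_zero hc (inv_ne_zero hy1)
      · intro a ha
        rw [Finset.mem_erase] at ha
        have ha0 : a ≠ 0 := ha.1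
        field_simp
        rw [sub_add_cancel, div_self hc]
      · intro y hy
        rw [Finset.mem_erase] at hy
        have hy1 : y + 1 ≠ 0 := fun h => hy.1 (by linear_combination h)
        field_simp
        ring
      · intro a ha
        rw [Finset.mem_erase] at ha
        have ha0 : a ≠ 0 := ha.1
        have hca : c - a = a * (c * a⁻¹ - 1) := by
          field_simp
        rw [hca, map_mul, ← mul_assoc, ← pow_two, quadraticChar_sq_one ha0, one_mul]
    rw [key, Finset.sum_erase_eq_sub (Finset.mem_univ _), quadraticChar_sum_zero hchar]
    ring

lemma chi_neg_one (hn4 : n % 4 = 3) : quadraticChar (ZMod n) (-1) = -1 := by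
  rw [quadraticChar_neg_one_iff_not_isSquare, ZMod.exists_sq_eq_neg_one_iff]
  simp [hn4]

lemma conv_sum (hn2 : n ≠ 2) (hn4 : n % 4 = 3) (s : ℤ_[2]) (hs : s * s = -(n : ℤ_[2]))
    (c : ZMod n) :
    ∑ a : ZMod n, Wf n s a * Wf n s (c - a) = 2 * n * Wf n s c := by
  have hchar : ringChar (ZMod n) ≠ 2 := by rw [ZMod.ringChar_zmod_n]; exact hn2
  have hsumχ : ∑ a : ZMod n, chiP n a = 0 := by
    unfold chiP
    rw [← Int.cast_sum, quadraticChar_sum_zero hchar, Int.cast_zero]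
  have hsumχ' : ∑ a : ZMod n, chiP n (c - a) = 0 := by
    rw [← hsumχ]
    exact Fintype.sum_equiv (Equiv.subLeft c) _ _ (fun a => rfl)
  have hsumδ : ∑ a : ZMod n, deltaP n a = 1 := by
    unfold deltaP; simp
  have hsumδ' : ∑ a : ZMod n, deltaP n (c - a) = 1 := by
    unfold deltaP; simp [sub_eq_zero, eq_comm]
  have hsumχδ : ∑ a : ZMod n, chiP n a * deltaP n (c - a) = chiP n c := by
    unfold deltaP
    simp only [mul_ite, mul_one, mul_zero, sub_eq_zero]
    simp [eq_comm]
  have hsumδχ : ∑ a : ZMod n, deltaP n a * chiP n (c - a) = chiP n c := by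
    unfold deltaP
    simp only [ite_mul, one_mul, zero_mul]
    simp
  have hsumδδ : ∑ a : ZMod n, deltaP n a * deltaP n (c - a) = deltaP n c := by
    unfold deltaP
    simp only [ite_mul, one_mul, zero_mul]
    simp
  have hsumχχ : ∑ a : ZMod n, chiP n a * chiP n (c - a) = 1 - n * deltaP n c := by
    unfold chiP
    have := key_char_sum (n := n) hn2 c
    calc ∑ a : ZMod n, ((quadraticChar (ZMod n) a : ℤ) : ℤ_[2])
          * ((quadraticChar (ZMod n) (c - a) : ℤ) : ℤ_[2])
        = ((∑ a : ZMod n, quadraticChar (ZMod n) a * quadraticChar (ZMod n) (c - a) : ℤ)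
            : ℤ_[2]) := by push_cast; rfl
      _ = (((quadraticChar (ZMod n) (-1)) * (if c = 0 then (n : ℤ) - 1 else -1) : ℤ) : ℤ_[2]) := by
            rw [this]
      _ = 1 - n * deltaP n c := by
            rw [chi_neg_one hn4]
            unfold deltaP
            split_ifs with hc <;> push_cast <;> ring
  have expand : ∀ a : ZMod n, Wf n s a * Wf n s (c - a)
      = 1 + s * chiP n a + s * chiP n (c - a) + n * deltaP n a + n * deltaP n (c - a)
        + (s * s) * (chiP n a * chiP n (c - a)) + (n * s) * (chiP n a * deltaP n (c - a))
        + (n * s) * (deltaP n a * chiP n (c - a)) + (n * n) * (deltaP n a * deltaP n (c - a)) := by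
    intro a; unfold Wf; ring
  rw [Finset.sum_congr rfl (fun a _ => expand a)]
  simp only [Finset.sum_add_distrib, ← Finset.mul_sum]
  rw [hsumχ, hsumχ', hsumδ, hsumδ', hsumχχ, hsumχδ, hsumδχ, hsumδδ]
  have hcard : ∑ _a : ZMod n, (1 : ℤ_[2]) = (n : ℤ_[2]) := by
    simp [Finset.card_univ, ZMod.card]
  rw [hcard, hs]
  unfold Wf
  ring

lemma nat_cast_ne_zero_padic (hn0 : n ≠ 0) : ((n : ℤ_[2]) : ℤ_[2]) ≠ 0 := by
  exact_mod_cast Nat.cast_ne_zero.mpr hn0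

/-- The main idempotency lemma. -/
lemma idem_lemma (hn8 : n % 8 = 7) (s α β γ : ℤ_[2]) (hs : s * s = -(n : ℤ_[2]))
    (hα : 2 * (n : ℤ_[2]) * α = n + 1) (hβ : 2 * (n : ℤ_[2]) * β = 1 + s)
    (hγ : 2 * (n : ℤ_[2]) * γ = 1 - s) :
    (Ideal.Quotient.mk (Ideal.span {(X : Polynomial ℤ_[2]) ^ n - 1})
        (C α + C β * fQpoly n + C γ * fNpoly n)) ^ 2 =
      Ideal.Quotient.mk (Ideal.span {(X : Polynomial ℤ_[2]) ^ n - 1})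
        (C α + C β * fQpoly n + C γ * fNpoly n) := by
  have hn2 : n ≠ 2 := by omega
  have hn4 : n % 4 = 3 := by omega
  have hn0 : n ≠ 0 := by omega
  haveI : NeZero n := ⟨hn0⟩
  set I : Ideal (Polynomial ℤ_[2]) := Ideal.span {(X : Polynomial ℤ_[2]) ^ n - 1} with hI
  set mkq : Polynomial ℤ_[2] →+* (Polynomial ℤ_[2] ⧸ I) := Ideal.Quotient.mk I with hmkq
  set y : Polynomial ℤ_[2] ⧸ I := mkq X with hy
  have hyn : y ^ n = 1 := by
    rw [hy, ← map_pow, show (1 : Polynomial ℤ_[2] ⧸ I) = mkq 1 from (map_one mkq).symm]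
    rw [Ideal.Quotient.eq]
    exact Ideal.subset_span (by simp)
  have hpow : ∀ j : ℕ, y ^ j = y ^ (j % n) := by
    intro j
    conv_lhs => rw [← Nat.div_add_mod j n]
    rw [pow_add, pow_mul, hyn, one_pow, one_mul]
  set ε : ZMod n → Polynomial ℤ_[2] ⧸ I := fun a => y ^ (ZMod.val a) with hε
  have hεmul : ∀ a b : ZMod n, ε a * ε b = ε (a + b) := by
    intro a b
    rw [hε]
    simp only
    rw [← pow_add, hpow (ZMod.val a + ZMod.val b), ZMod.val_add]
  have hε0 : ε 0 = 1 := by rw [hε]; simp [ZMod.val_zero]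
  -- reindexing of fQpoly and fNpoly
  have hre : ∀ P : ZMod n → Prop,
      mkq (∑ k ∈ (Finset.Ico 1 n).filter (fun k : ℕ => P ((k : ZMod n))), X ^ k)
        = ∑ a ∈ Finset.univ.filter (fun a : ZMod n => a ≠ 0 ∧ P a), ε a := by
    intro P
    rw [map_sum]
    refine Finset.sum_nbij' (fun k => ((k : ZMod n))) (fun a => ZMod.val a) ?_ ?_ ?_ ?_ ?_
    · intro k hk
      simp only [Finset.mem_filter, Finset.mem_Ico] at hk
      have hval : (k : ZMod n).val = k := ZMod.val_natCast_of_lt hk.1.2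
      simp only [Finset.mem_filter, Finset.mem_univ, true_and]
      constructor
      · intro h; rw [h, ZMod.val_zero] at hval; omega
      · exact hk.2
    · intro a ha
      simp only [Finset.mem_filter, Finset.mem_univ, true_and] at ha
      simp only [Finset.mem_filter, Finset.mem_Ico]
      have h1 : ZMod.val a ≠ 0 := fun h => ha.1 ((ZMod.val_eq_zero a).mp h)
      refine ⟨⟨by omega, ZMod.val_lt a⟩, ?_⟩
      rw [ZMod.natCast_val, ZMod.cast_id]
      exact ha.2
    · intro k hk
      simp only [Finset.mem_filter, Finset.mem_Ico] at hk
      exact ZMod.val_natCast_of_lt hk.1.2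
    · intro a _
      simp [ZMod.natCast_val, ZMod.cast_id]
    · intro k hk
      simp only [Finset.mem_filter, Finset.mem_Ico] at hk
      rw [map_pow, hε]
      simp only
      rw [ZMod.val_natCast_of_lt hk.1.2, hy]
  have hfQ : mkq (fQpoly n)
      = ∑ a ∈ Finset.univ.filter (fun a : ZMod n => a ≠ 0 ∧ IsSquare a), ε a := by
    have h := hre (fun a => IsSquare a)
    unfold fQpoly
    convert h using 2 <;> congr!
  have hfN : mkq (fNpoly n)
      = ∑ a ∈ Finset.univ.filter (fun a : ZMod n => a ≠ 0 ∧ ¬ IsSquare a), ε a := by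
    have h := hre (fun a => ¬ IsSquare a)
    unfold fNpoly
    convert h using 2 <;> congr!
  -- coefficient function
  set w : ZMod n → ℤ_[2] := fun c => if c = 0 then α else if IsSquare c then β else γ with hw
  have hWf : ∀ a : ZMod n, 2 * (n : ℤ_[2]) * w a = Wf n s a := by
    intro a
    by_cases ha : a = 0
    · have hwa : w a = α := by rw [hw]; simp [ha]
      rw [hwa, hα, ha]
      unfold Wf chiP deltaP
      rw [quadraticChar_zero]
      norm_num
      ring
    · by_cases hsq : IsSquare a
      · have hwa : w a = β := by rw [hw]; simp only [if_neg ha, if_pos hsq]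
        rw [hwa, hβ]
        unfold Wf chiP deltaP
        rw [(quadraticChar_one_iff_isSquare ha).mpr hsq, if_neg ha]
        push_cast
        ring
      · have hwa : w a = γ := by rw [hw]; simp only [if_neg ha, if_neg hsq]
        rw [hwa, hγ]
        unfold Wf chiP deltaP
        rw [quadraticChar_neg_one_iff_not_isSquare.mpr hsq, if_neg ha]
        push_cast
        ring
  have h2n0 : (2 * (n : ℤ_[2])) * (2 * (n : ℤ_[2])) ≠ 0 := by
    have h2 : (2 : ℤ_[2]) ≠ 0 := two_ne_zero
    have hn' : (n : ℤ_[2]) ≠ 0 := nat_cast_ne_zero_padic hn0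
    exact mul_ne_zero (mul_ne_zero h2 hn') (mul_ne_zero h2 hn')
  have hconv : ∀ c : ZMod n, ∑ a : ZMod n, w a * w (c - a) = w c := by
    intro c
    apply mul_left_cancel₀ h2n0
    calc (2 * (n : ℤ_[2])) * (2 * (n : ℤ_[2])) * ∑ a : ZMod n, w a * w (c - a)
        = ∑ a : ZMod n, (2 * (n : ℤ_[2]) * w a) * (2 * (n : ℤ_[2]) * w (c - a)) := by
          rw [Finset.mul_sum]; exact Finset.sum_congr rfl (fun a _ => by ring)
      _ = ∑ a : ZMod n, Wf n s a * Wf n s (c - a) := by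
          exact Finset.sum_congr rfl (fun a _ => by rw [hWf a, hWf (c - a)])
      _ = 2 * (n : ℤ_[2]) * Wf n s c := conv_sum hn2 hn4 s hs c
      _ = 2 * (n : ℤ_[2]) * (2 * (n : ℤ_[2]) * w c) := by rw [hWf c]
      _ = (2 * (n : ℤ_[2])) * (2 * (n : ℤ_[2])) * w c := by ring
  -- expression of e as a sum
  have hA : Finset.univ.filter (fun c : ZMod n => c = 0) = {0} := by
    ext a; simp
  have hB1 : (Finset.univ.filter (fun c : ZMod n => ¬ c = 0)).filter (fun c => IsSquare c)
      = Finset.univ.filter (fun a : ZMod n => a ≠ 0 ∧ IsSquare a) := by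
    ext a; simp [and_comm]
  have hB2 : (Finset.univ.filter (fun c : ZMod n => ¬ c = 0)).filter (fun c => ¬ IsSquare c)
      = Finset.univ.filter (fun a : ZMod n => a ≠ 0 ∧ ¬ IsSquare a) := by
    ext a; simp [and_comm]
  have he : mkq (C α + C β * fQpoly n + C γ * fNpoly n)
      = ∑ c : ZMod n, mkq (C (w c)) * ε c := by
    rw [map_add, map_add, map_mul, map_mul, hfQ, hfN]
    have hsum : ∑ c : ZMod n, mkq (C (w c)) * ε c
        = ∑ c : ZMod n, (if c = 0 then mkq (C α) * ε c
            else if IsSquare c then mkq (C β) * ε c else mkq (C γ) * ε c) := by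
      refine Finset.sum_congr rfl (fun c _ => ?_)
      simp only [hw]
      split_ifs <;> rfl
    rw [hsum, Finset.sum_ite, hA, Finset.sum_singleton, hε0, mul_one, Finset.sum_ite,
      hB1, hB2, ← Finset.mul_sum, ← Finset.mul_sum]
    ring
  rw [he]
  -- now compute the square
  calc (∑ c : ZMod n, mkq (C (w c)) * ε c) ^ 2
      = ∑ a : ZMod n, ∑ b : ZMod n, (mkq (C (w a)) * ε a) * (mkq (C (w b)) * ε b) := by
        rw [pow_two, Finset.sum_mul_sum]
    _ = ∑ a : ZMod n, ∑ c : ZMod n, mkq (C (w a * w (c - a))) * ε c := by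
        refine Finset.sum_congr rfl (fun a _ => ?_)
        rw [← Equiv.sum_comp (Equiv.addLeft a)
          (fun c => mkq (C (w a * w (c - a))) * ε c)]
        refine Finset.sum_congr rfl (fun b _ => ?_)
        simp only [Equiv.coe_addLeft]
        rw [add_sub_cancel_left, map_mul, map_mul]
        rw [← hεmul a b]
        ring
    _ = ∑ c : ZMod n, ∑ a : ZMod n, mkq (C (w a * w (c - a))) * ε c := Finset.sum_comm
    _ = ∑ c : ZMod n, mkq (C (w c)) * ε c := by
        refine Finset.sum_congr rfl (fun c _ => ?_)
        rw [← Finset.sum_mul, ← map_sum, ← map_sum, hconv c]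

end Aux

theorem stmt16 (n : ℕ) (hn : n.Prime) (hn8 : n % 8 = 7) :
    (∃ s : ℤ_[2], s ^ 2 = -(n : ℤ_[2])) ∧
    ∀ s : ℤ_[2], s ^ 2 = -(n : ℤ_[2]) →
      ∃ α β γ α' β' γ' : ℤ_[2],
        2 * (n : ℤ_[2]) * α = n + 1 ∧
        2 * (n : ℤ_[2]) * β = 1 + s ∧
        2 * (n : ℤ_[2]) * γ = 1 - s ∧
        2 * (n : ℤ_[2]) * α' = n - 1 ∧
        2 * (n : ℤ_[2]) * β' = -1 + s ∧
        2 * (n : ℤ_[2]) * γ' = -1 - s ∧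
        (Ideal.Quotient.mk (Ideal.span {(X : Polynomial ℤ_[2]) ^ n - 1})
            (C α + C β * fQpoly n + C γ * fNpoly n)) ^ 2 =
          Ideal.Quotient.mk (Ideal.span {(X : Polynomial ℤ_[2]) ^ n - 1})
            (C α + C β * fQpoly n + C γ * fNpoly n) ∧
        (Ideal.Quotient.mk (Ideal.span {(X : Polynomial ℤ_[2]) ^ n - 1})
            (C α' + C β' * fQpoly n + C γ' * fNpoly n)) ^ 2 =
          Ideal.Quotient.mk (Ideal.span {(X : Polynomial ℤ_[2]) ^ n - 1})
            (C α' + C β' * fQpoly n + C γ' * fNpoly n) := by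
  haveI : Fact n.Prime := ⟨hn⟩
  obtain ⟨k, hk⟩ : ∃ k : ℕ, n + 1 = 2 * k := ⟨(n + 1) / 2, by omega⟩
  constructor
  · -- existence of a square root of -n via Hensel's lemma
    have h8 : ((2 : ℤ) ^ 3 : ℤ) ∣ (1 + n : ℤ) := by
      have : (8 : ℤ) ∣ (1 + n : ℤ) := by
        have : (8 : ℕ) ∣ 1 + n := by omega
        exact_mod_cast Int.natCast_dvd_natCast.mpr this
      simpa using this
    set F : Polynomial ℤ_[2] := X ^ 2 + C (n : ℤ_[2]) with hF
    have heval : F.eval 1 = 1 + (n : ℤ_[2]) := by simp [hF]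
    have hderiv : F.derivative.eval 1 = 2 := by
      simp [hF, derivative_X_pow]
      norm_num
    have hnorm : ‖F.eval 1‖ < ‖F.derivative.eval 1‖ ^ 2 := by
      rw [heval, hderiv]
      have h1 : ‖(1 + (n : ℤ_[2]))‖ ≤ (2 : ℝ) ^ (-(3 : ℕ) : ℤ) := by
        have : (1 + (n : ℤ_[2])) = (((1 + n : ℤ) : ℤ_[2])) := by push_cast; ring
        rw [this]
        exact (PadicInt.norm_int_le_pow_iff_dvd).mpr (by exact_mod_cast h8)
      have h2 : ‖(2 : ℤ_[2])‖ = 2⁻¹ := by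
        have := @PadicInt.norm_p 2 ⟨Nat.prime_two⟩
        simpa using this
      rw [h2]
      calc ‖(1 + (n : ℤ_[2]))‖ ≤ (2 : ℝ) ^ (-(3 : ℕ) : ℤ) := h1
        _ < ((2 : ℝ)⁻¹) ^ 2 := by norm_num
    obtain ⟨z, hz, -⟩ := hensels_lemma hnorm
    refine ⟨z, ?_⟩
    have : z ^ 2 + (n : ℤ_[2]) = 0 := by simpa [hF] using hz
    linear_combination this
  · intro s hs
    have hs' : s * s = -(n : ℤ_[2]) := by rw [← pow_two]; exact hs
    -- n is a unit
    have hnodd : ¬ ((2 : ℤ) ∣ (n : ℤ)) := by omega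
    have hnorm1 : ‖((n : ℤ_[2]))‖ = 1 := by
      have hle : ‖((n : ℤ_[2]))‖ ≤ 1 := PadicInt.norm_le_one _
      have hlt : ¬ ‖((n : ℤ_[2]))‖ < 1 := by
        intro h
        have : ‖(((n : ℤ) : ℤ_[2]))‖ < 1 := by push_cast at h ⊢; exact h
        rw [PadicInt.norm_int_lt_one_iff_dvd] at this
        exact hnodd (by exact_mod_cast this)
      linarith [lt_or_eq_of_le hle]
    obtain ⟨ν, hν⟩ := (PadicInt.isUnit_iff.mpr hnorm1).exists_right_inv
    -- 2 divides 1 + s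
    have hprime2 : Prime (2 : ℤ_[2]) := by
      have := @PadicInt.prime_p 2 ⟨Nat.prime_two⟩
      simpa using this
    have hdvd : (2 : ℤ_[2]) ∣ (s - 1) * (s + 1) := by
      refine ⟨-(k : ℤ_[2]), ?_⟩
      have hkc : ((n : ℤ_[2]) + 1) = 2 * (k : ℤ_[2]) := by exact_mod_cast congrArg (Nat.cast : ℕ → ℤ_[2]) hk
      linear_combination hs' - hkc
    have hdvd1s : (2 : ℤ_[2]) ∣ s + 1 := by
      rcases hprime2.2.2 _ _ hdvd with h | h
      · obtain ⟨u, hu⟩ := h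
        exact ⟨u + 1, by linear_combination hu⟩
      · exact h
    obtain ⟨t, ht⟩ := hdvd1s
    set α : ℤ_[2] := (k : ℤ_[2]) * ν with hαdef
    set β : ℤ_[2] := t * ν with hβdef
    set γ : ℤ_[2] := (t - s) * ν with hγdef
    have hkc : ((n : ℤ_[2]) + 1) = 2 * (k : ℤ_[2]) := by exact_mod_cast congrArg (Nat.cast : ℕ → ℤ_[2]) hk
    have hα : 2 * (n : ℤ_[2]) * α = n + 1 := by
      rw [hαdef]; linear_combination 2 * (k : ℤ_[2]) * hν - hkc
    have hβ : 2 * (n : ℤ_[2]) * β = 1 + s := by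
      rw [hβdef]; linear_combination 2 * t * hν - ht
    have hγ : 2 * (n : ℤ_[2]) * γ = 1 - s := by
      rw [hγdef]; linear_combination 2 * (t - s) * hν - ht
    have hs'' : (-s) * (-s) = -(n : ℤ_[2]) := by linear_combination hs'
    have hβ' : 2 * (n : ℤ_[2]) * γ = 1 + (-s) := by linear_combination hγ
    have hγ' : 2 * (n : ℤ_[2]) * β = 1 - (-s) := by linear_combination hβ
    have hu := idem_lemma (n := n) hn8 (-s) α γ β hs'' hα hβ' hγ'
    refine ⟨α, β, γ, 1 - α, -γ, -β, hα, hβ, hγ, ?_, ?_, ?_, ?_, ?_⟩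
    · linear_combination -hα
    · linear_combination -hγ
    · linear_combination -hβ
    · exact idem_lemma (n := n) hn8 s α β γ hs' hα hβ hγ
    · have hpoly : C (1 - α) + C (-γ) * fQpoly n + C (-β) * fNpoly n
          = 1 - (C α + C γ * fQpoly n + C β * fNpoly n) := by
        rw [map_sub, map_neg, map_neg, map_one]
        ring
      rw [hpoly, map_sub, map_one]
      linear_combination hu
end

section
/- Let s ∈ ℤ_2 satisfy s² = −n, let e = (n+1)/(2n) + ((1+s)/(2n))·f_Q(X) + ((1−s)/(2n))·f_N(X) ∈ R, and let C = {c ∈ ℤ_2^n : the image of Σ_{j=0}^{n−1} c_j X^j in R lies in the ideal of R generated by e}. Let t ∈ ℤ_2 satisfy n·t² = −1, and let C̃ = {(c₀, …, c_{n−1}, t·Σ_{j=0}^{n−1} c_j) : c ∈ C} ⊆ ℤ_2^{n+1}. Then C̃ is self-dual: C̃ = {v ∈ ℤ_2^{n+1} : Σ_{i=0}^{n} v_i·w_i = 0 for all w ∈ C̃}. -/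
open Polynomial
open scoped Classical

/-- The idempotent `α + β f_Q(X) + γ f_N(X)` in `R = ℤ_2[X]/(X^n - 1)`. -/
noncomputable def qrIdempotent (n : ℕ) (α β γ : ℤ_[2]) :
    Polynomial ℤ_[2] ⧸ Ideal.span {(X : Polynomial ℤ_[2]) ^ n - 1} :=
  Ideal.Quotient.mk _ (C α + C β * fQpoly n + C γ * fNpoly n)

/-- The quadratic residue code `C ⊆ ℤ_2^n`: vectors whose associated polynomial lies in the
ideal of `R = ℤ_2[X]/(X^n - 1)` generated by the idempotent `α + β f_Q + γ f_N`. -/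
def qrCode (n : ℕ) (α β γ : ℤ_[2]) : Set (Fin n → ℤ_[2]) :=
  {c | Ideal.Quotient.mk (Ideal.span {(X : Polynomial ℤ_[2]) ^ n - 1})
      (∑ j : Fin n, C (c j) * X ^ (j : ℕ)) ∈ Ideal.span {qrIdempotent n α β γ}}

/-- The extended code `C̃ ⊆ ℤ_2^{n+1}`, obtained by appending `t·Σ c_j` to each codeword. -/
def qrCodeExt (n : ℕ) (α β γ t : ℤ_[2]) : Set (Fin (n + 1) → ℤ_[2]) :=
  {v | ∃ c ∈ qrCode n α β γ, v = Fin.snoc c (t * ∑ j, c j)}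

noncomputable section QRAux

variable (n : ℕ)

abbrev Rq := Polynomial ℤ_[2] ⧸ Ideal.span {(X : Polynomial ℤ_[2]) ^ n - 1}

abbrev Aq := AddMonoidAlgebra ℤ_[2] (ZMod n)

instance : CoeFun (Aq n) (fun _ => ZMod n → ℤ_[2]) := ⟨fun f => f.coeff⟩

abbrev sg (a : ZMod n) (b : ℤ_[2]) : Aq n := AddMonoidAlgebra.single a b

/-- polynomial → monoid algebra -/
def psi : Polynomial ℤ_[2] →ₐ[ℤ_[2]] Aq n :=
  Polynomial.aeval (sg n 1 1)

lemma single_one_pow (k : ℕ) : (sg n 1 1) ^ k = sg n (k : ZMod n) 1 := by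
  rw [AddMonoidAlgebra.single_pow, one_pow, nsmul_eq_mul, mul_one]

lemma psi_X_pow (k : ℕ) : psi n (X ^ k) = sg n (k : ZMod n) 1 := by
  rw [psi, map_pow, aeval_X, single_one_pow]

lemma psi_ker : psi n ((X : Polynomial ℤ_[2]) ^ n - 1) = 0 := by
  rw [map_sub, map_one, psi_X_pow, ZMod.natCast_self, AddMonoidAlgebra.one_def, sub_self]

/-- quotient ring → monoid algebra -/
def psiBar : Rq n →ₐ[ℤ_[2]] Aq n :=
  Ideal.Quotient.liftₐ _ (psi n) (by
    intro a ha
    rw [Ideal.mem_span_singleton] at ha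
    obtain ⟨q, rfl⟩ := ha
    rw [map_mul, psi_ker, zero_mul])

lemma psiBar_mk (p : Polynomial ℤ_[2]) :
    psiBar n (Ideal.Quotient.mk _ p) = psi n p := rfl

abbrev mkq : Polynomial ℤ_[2] →+* Rq n :=
  Ideal.Quotient.mk (Ideal.span {(X : Polynomial ℤ_[2]) ^ n - 1})

lemma mkq_X_pow_n : mkq n (X ^ n) = 1 := by
  have : mkq n (X ^ n - 1) = 0 := by
    rw [Ideal.Quotient.eq_zero_iff_mem]
    exact Ideal.subset_span rfl
  rw [map_sub, map_one, sub_eq_zero] at this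
  exact this

lemma mkq_X_pow_mod (u : ℕ) (hn : 0 < n) : mkq n (X ^ u) = mkq n (X ^ (u % n)) := by
  have h2 : mkq n ((X ^ n) ^ (u / n)) = 1 := by rw [map_pow, mkq_X_pow_n, one_pow]
  conv_lhs => rw [← Nat.mod_add_div u n, pow_add, pow_mul]
  rw [map_mul, h2, mul_one]

variable [NeZero n]

/-- the monoid hom `Multiplicative (ZMod n) →* Rq n` -/
def theta : Multiplicative (ZMod n) →* Rq n where
  toFun k := mkq n (X ^ (Multiplicative.toAdd k).val)
  map_one' := by
    show mkq n (X ^ (Multiplicative.toAdd (1 : Multiplicative (ZMod n))).val) = 1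
    have : (Multiplicative.toAdd (1 : Multiplicative (ZMod n))).val = 0 := by
      simp [ZMod.val_zero]
    rw [this, pow_zero, map_one]
  map_mul' a b := by
    show mkq n (X ^ (Multiplicative.toAdd (a * b)).val)
      = mkq n (X ^ (Multiplicative.toAdd a).val) * mkq n (X ^ (Multiplicative.toAdd b).val)
    have hv : (Multiplicative.toAdd (a * b)).val
        = ((Multiplicative.toAdd a).val + (Multiplicative.toAdd b).val) % n := by
      simp [ZMod.val_add]
    rw [hv, ← map_mul, ← pow_add, ← mkq_X_pow_mod _ _ (Nat.pos_of_ne_zero (NeZero.ne n))]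

def thetaBar : Aq n →ₐ[ℤ_[2]] Rq n :=
  AddMonoidAlgebra.lift ℤ_[2] (Rq n) (ZMod n) (theta n)

lemma thetaBar_single (a : ZMod n) (b : ℤ_[2]) :
    thetaBar n (sg n a b) = b • mkq n (X ^ a.val) := by
  rw [thetaBar, AddMonoidAlgebra.lift_single]
  rfl

lemma psiBar_thetaBar (a : Aq n) : psiBar n (thetaBar n a) = a := by
  have : (psiBar n).comp (thetaBar n) = AlgHom.id ℤ_[2] (Aq n) := by
    apply AddMonoidAlgebra.algHom_ext
    intro x
    rw [AlgHom.comp_apply]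
    rw [show AddMonoidAlgebra.single x (1:ℤ_[2]) = sg n x 1 from rfl, thetaBar_single, one_smul,
      psiBar_mk, psi_X_pow]
    simp [ZMod.natCast_val, ZMod.cast_id]
    exact Subsingleton.elim _ _
  calc psiBar n (thetaBar n a) = ((psiBar n).comp (thetaBar n)) a := rfl
    _ = a := by rw [this]; rfl

lemma thetaBar_psiBar (hn1 : 1 < n) (r : Rq n) : thetaBar n (psiBar n r) = r := by
  have : (thetaBar n).comp (psiBar n) = AlgHom.id ℤ_[2] (Rq n) := by
    apply Ideal.Quotient.algHom_ext
    apply Polynomial.algHom_ext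
    have h1 : ((1 : ℕ) : ZMod n).val = 1 := by
      rw [Nat.cast_one, ZMod.val_one_eq_one_mod, Nat.mod_eq_of_lt hn1]
    simp only [AlgHom.comp_apply, Ideal.Quotient.mkₐ_eq_mk, AlgHom.id_apply]
    calc thetaBar n (psiBar n (Ideal.Quotient.mk _ X))
        = thetaBar n (psi n (X ^ 1)) := by rw [pow_one]; rfl
      _ = Ideal.Quotient.mk _ X := by
          rw [psi_X_pow, thetaBar_single, one_smul, h1, pow_one]
  calc thetaBar n (psiBar n r) = ((thetaBar n).comp (psiBar n)) r := rfl
    _ = r := by rw [this]; rfl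

end QRAux

noncomputable section QRAux2

variable (n : ℕ) [NeZero n]

lemma psiBar_bij (hn1 : 1 < n) : Function.Bijective (psiBar n) :=
  ⟨fun a b h => by
    have := thetaBar_psiBar n hn1 a
    rw [h, thetaBar_psiBar n hn1 b] at this; exact this.symm,
   fun a => ⟨thetaBar n a, psiBar_thetaBar n a⟩⟩

lemma mem_span_iff_psiBar (hn1 : 1 < n) (g r : Rq n) :
    r ∈ Ideal.span {g} ↔ psiBar n r ∈ Ideal.span {psiBar n g} := by
  rw [Ideal.mem_span_singleton, Ideal.mem_span_singleton]
  constructor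
  · rintro ⟨c, rfl⟩; exact ⟨psiBar n c, by rw [map_mul]⟩
  · rintro ⟨c, hc⟩
    refine ⟨thetaBar n c, ?_⟩
    have := congrArg (thetaBar n) hc
    rw [map_mul, thetaBar_psiBar n hn1, thetaBar_psiBar n hn1] at this
    exact this

end QRAux2

noncomputable section QRAux3

variable (n : ℕ) [NeZero n]

lemma mul_apply'' (f g : Aq n) (x : ZMod n) :
    (f * g) x = ∑ i : ZMod n, f i * g (x - i) := by
  classical
  rw [AddMonoidAlgebra.mul_apply]
  rw [Finsupp.sum_fintype]
  · apply Finset.sum_congr rfl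
    intro i _
    rw [Finsupp.sum_fintype]
    · have hcond : ∀ j : ZMod n, (if i + j = x then f i * g j else 0)
          = if j = x - i then f i * g j else 0 := by
        intro j
        apply if_congr _ rfl rfl
        constructor
        · intro h; rw [← h]; ring
        · intro h; rw [h]; ring
      simp_rw [hcond]
      rw [Finset.sum_ite_eq' Finset.univ (x - i) (fun j => f i * g j)]
      simp
    · intro j; simp
  · intro i; simp

lemma sum_sg_apply (c : ZMod n → ℤ_[2]) (m : ZMod n) :
    (∑ k : ZMod n, sg n k (c k)) m = c m := by
  classical
  rw [AddMonoidAlgebra.coeff_sum, Finsupp.finset_sum_apply]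
  simp [AddMonoidAlgebra.coeff_single, Finsupp.single_apply]

def Hq : Aq n := ∑ k : ZMod n, sg n k 1

lemma Hq_apply (m : ZMod n) : Hq n m = 1 := by
  rw [Hq, sum_sg_apply]

end QRAux3

open Polynomial
open scoped Classical

set_option linter.unusedSectionVars false
noncomputable section QRB

variable (n : ℕ) [NeZero n]

abbrev Cc : ℤ_[2] →+* Aq n := algebraMap ℤ_[2] (Aq n)

lemma Cc_mul_apply (r : ℤ_[2]) (f : Aq n) (m : ZMod n) :
    (Cc n r * f) m = r * f m := by
  rw [← Algebra.smul_def, AddMonoidAlgebra.coeff_smul, Finsupp.smul_apply, smul_eq_mul]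

lemma Cc_apply (r : ℤ_[2]) (m : ZMod n) :
    (Cc n r) m = if m = 0 then r else 0 := by
  have : (Cc n r) m = (Cc n r * 1) m := by rw [mul_one]
  rw [this, Cc_mul_apply]
  rw [AddMonoidAlgebra.one_def, AddMonoidAlgebra.coeff_single, Finsupp.single_apply]
  by_cases h : m = 0 <;> simp [h, eq_comm]

/-- scalar cancellation in `Aq n` -/
lemma Cc_cancel {r : ℤ_[2]} (hr : r ≠ 0) {x y : Aq n} (h : Cc n r * x = Cc n r * y) :
    x = y := by
  ext m
  have := congrArg (fun f : Aq n => f m) h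
  simp only [Cc_mul_apply] at this
  exact mul_left_cancel₀ hr this

def eps (f : Aq n) : ℤ_[2] := ∑ m : ZMod n, f m

lemma eps_H : eps n (Hq n) = (n : ℤ_[2]) := by
  rw [eps]
  simp only [Hq_apply]
  rw [Finset.sum_const, Finset.card_univ, ZMod.card, nsmul_eq_mul, mul_one]

lemma eps_Cc (r : ℤ_[2]) : eps n (Cc n r) = r := by
  rw [eps]
  simp only [Cc_apply]
  simp

lemma mulHq (f : Aq n) : f * Hq n = eps n f • Hq n := by
  ext m
  rw [mul_apply'', AddMonoidAlgebra.coeff_smul, Finsupp.smul_apply, Hq_apply, smul_eq_mul, mul_one, eps]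
  apply Finset.sum_congr rfl
  intro i _
  rw [Hq_apply, mul_one]

lemma eps_mul (f g : Aq n) : eps n (f * g) = eps n f * eps n g := by
  have h1 : (f * g) * Hq n = eps n (f * g) • Hq n := mulHq n _
  have h2 : (f * g) * Hq n = (eps n f * eps n g) • Hq n := by
    rw [mul_assoc, mulHq n g, mul_smul_comm, mulHq n f, smul_smul, mul_comm (eps n g)]
  rw [h2] at h1
  have ha : ∀ c : ℤ_[2], (c • Hq n) 0 = c := fun c => by
    rw [AddMonoidAlgebra.coeff_smul, Finsupp.smul_apply, Hq_apply, smul_eq_mul, mul_one]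
  have := congrArg (fun q : Aq n => q 0) h1
  rw [ha, ha] at this
  exact this.symm

lemma eps_smul (r : ℤ_[2]) (f : Aq n) : eps n (r • f) = r * eps n f := by
  rw [eps, eps, Finset.mul_sum]
  apply Finset.sum_congr rfl
  intro i _
  rw [AddMonoidAlgebra.coeff_smul, Finsupp.smul_apply, smul_eq_mul]

/-- the "reversal" algebra automorphism induced by negation on `ZMod n` -/
def barA : Aq n ≃ₐ[ℤ_[2]] Aq n :=
  AddMonoidAlgebra.domCongr ℤ_[2] ℤ_[2] (AddEquiv.neg (ZMod n))

lemma barA_apply (f : Aq n) (m : ZMod n) : barA n f m = f (-m) := by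
  rw [barA, AddMonoidAlgebra.coeff_domCongr]
  rfl

lemma barA_Hq : barA n (Hq n) = Hq n := by
  ext m
  rw [barA_apply, Hq_apply, Hq_apply]

lemma eps_barA (f : Aq n) : eps n (barA n f) = eps n f := by
  rw [eps, eps]
  rw [← Equiv.sum_comp (Equiv.neg (ZMod n)) (fun m => f m)]
  apply Finset.sum_congr rfl
  intro i _
  rw [barA_apply]
  rfl

lemma pair_eq (f g : Aq n) : (f * barA n g) 0 = ∑ m : ZMod n, f m * g m := by
  rw [mul_apply'']
  apply Finset.sum_congr rfl
  intro i _
  rw [barA_apply, zero_sub, neg_neg]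

end QRB

open Polynomial
open scoped Classical

set_option linter.unusedSectionVars false
noncomputable section QRC

variable (n : ℕ) [hp : Fact (Nat.Prime n)]

instance : NeZero n := ⟨hp.out.ne_zero⟩

def chi (k : ZMod n) : ℤ_[2] := ((quadraticChar (ZMod n) k : ℤ) : ℤ_[2])

def Gq : Aq n := ∑ k : ZMod n, sg n k (chi n k)

lemma Gq_apply (m : ZMod n) : Gq n m = chi n m := by
  rw [Gq, sum_sg_apply]

lemma chi_zero : chi n 0 = 0 := by
  rw [chi, quadraticChar_zero, Int.cast_zero]

lemma chi_mul (a b : ZMod n) : chi n (a * b) = chi n a * chi n b := by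
  rw [chi, chi, chi, map_mul, Int.cast_mul]

lemma chi_neg_one_s18 (hn8 : n % 8 = 7) : chi n (-1) = -1 := by
  have h4 : n % 4 = 3 := by omega
  have hns : ¬ IsSquare (-1 : ZMod n) := fun h =>
    (ZMod.exists_sq_eq_neg_one_iff.mp h) h4
  rw [chi, quadraticChar_neg_one_iff_not_isSquare.mpr hns]
  norm_num

lemma chi_neg (hn8 : n % 8 = 7) (a : ZMod n) : chi n (-a) = - chi n a := by
  rw [show -a = -1 * a by ring, chi_mul, chi_neg_one_s18 n hn8, neg_one_mul]

lemma chi_sq (a : ZMod n) (ha : a ≠ 0) : chi n a * chi n a = 1 := by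
  have := quadraticChar_sq_one (F := ZMod n) ha
  rw [pow_two] at this
  rw [chi, ← Int.cast_mul, this, Int.cast_one]

lemma ringChar_ZMod_ne_two (hn8 : n % 8 = 7) : ringChar (ZMod n) ≠ 2 := by
  rw [ZMod.ringChar_zmod_n]; omega

lemma sum_chi (hn8 : n % 8 = 7) : ∑ a : ZMod n, chi n a = 0 := by
  have := quadraticChar_sum_zero (ringChar_ZMod_ne_two n hn8)
  have h2 : ((∑ a : ZMod n, (quadraticChar (ZMod n) a) : ℤ) : ℤ_[2]) = 0 := by
    rw [this]; norm_num
  rw [← h2, Int.cast_sum]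
  rfl

lemma conv_chi (hn8 : n % 8 = 7) (m : ZMod n) :
    ∑ i : ZMod n, chi n i * chi n (m - i)
      = if m = 0 then 1 - (n : ℤ_[2]) else 1 := by
  by_cases hm : m = 0
  · subst hm
    simp only [zero_sub, if_true]
    have hterm : ∀ i : ZMod n, chi n i * chi n (-i) = -(if i = 0 then 0 else 1) := by
      intro i
      rw [chi_neg n hn8, mul_neg]
      by_cases hi : i = 0
      · simp [hi, chi_zero]
      · simp [hi, chi_sq n i hi]
    simp_rw [hterm]
    rw [Finset.sum_neg_distrib]
    have hsum : ∑ i : ZMod n, (if i = 0 then (0:ℤ_[2]) else 1) = (n : ℤ_[2]) - 1 := by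
      have hrw : ∀ i : ZMod n, (if i = 0 then (0:ℤ_[2]) else 1)
          = 1 - (if i = 0 then 1 else 0) := by
        intro i; by_cases h : i = 0 <;> simp [h]
      simp_rw [hrw]
      rw [Finset.sum_sub_distrib, Finset.sum_const, Finset.card_univ, ZMod.card,
        Finset.sum_ite_eq' Finset.univ (0 : ZMod n) (fun _ => (1:ℤ_[2]))]
      simp [nsmul_eq_mul]
    rw [hsum]; ring
  · rw [if_neg hm]
    have hterm : ∀ i ∈ Finset.univ.erase (0 : ZMod n),
        chi n i * chi n (m - i) = chi n (m * i⁻¹ - 1) := by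
      intro i hi
      have hi0 : i ≠ 0 := (Finset.mem_erase.mp hi).1
      have h1 : m - i = i * (m * i⁻¹ - 1) := by
        field_simp
      rw [h1, chi_mul, ← mul_assoc, chi_sq n i hi0, one_mul]
    have h0 : chi n (0 : ZMod n) * chi n (m - 0) = 0 := by rw [chi_zero, zero_mul]
    rw [← Finset.sum_erase (f := fun i => chi n i * chi n (m - i)) Finset.univ h0]
    rw [Finset.sum_congr rfl hterm]
    have hbij : ∑ i ∈ Finset.univ.erase (0 : ZMod n), chi n (m * i⁻¹ - 1)
        = ∑ u ∈ Finset.univ.erase (0 : ZMod n), chi n (u - 1) := by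
      apply Finset.sum_nbij' (fun i => m * i⁻¹) (fun u => m * u⁻¹)
      · intro a ha
        have ha0 : a ≠ 0 := (Finset.mem_erase.mp ha).1
        exact Finset.mem_erase.mpr ⟨mul_ne_zero hm (inv_ne_zero ha0), Finset.mem_univ _⟩
      · intro a ha
        have ha0 : a ≠ 0 := (Finset.mem_erase.mp ha).1
        exact Finset.mem_erase.mpr ⟨mul_ne_zero hm (inv_ne_zero ha0), Finset.mem_univ _⟩
      · intro a ha
        have ha0 : a ≠ 0 := (Finset.mem_erase.mp ha).1
        field_simp
      · intro a ha
        have ha0 : a ≠ 0 := (Finset.mem_erase.mp ha).1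
        field_simp
      · intro a ha
        rfl
    rw [hbij]
    have hins : ∑ u ∈ Finset.univ.erase (0 : ZMod n), chi n (u - 1)
        = (∑ u : ZMod n, chi n (u - 1)) - chi n (0 - 1) := by
      rw [← Finset.add_sum_erase Finset.univ _ (Finset.mem_univ (0 : ZMod n))]
      ring
    rw [hins]
    have hfull : ∑ u : ZMod n, chi n (u - 1) = ∑ w : ZMod n, chi n w :=
      Fintype.sum_equiv (Equiv.subRight (1 : ZMod n)) _ _ (fun x => rfl)
    rw [hfull, sum_chi n hn8, show (0:ZMod n) - 1 = -1 by ring, chi_neg_one_s18 n hn8]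
    ring

lemma eps_G (hn8 : n % 8 = 7) : eps n (Gq n) = 0 := by
  rw [eps]
  simp only [Gq_apply]
  exact sum_chi n hn8

lemma idH : Hq n * Hq n = Cc n (n : ℤ_[2]) * Hq n := by
  ext m
  rw [mul_apply'', Cc_mul_apply, Hq_apply, mul_one]
  simp only [Hq_apply, mul_one]
  rw [Finset.sum_const, Finset.card_univ, ZMod.card, nsmul_eq_mul, mul_one]

lemma idGH (hn8 : n % 8 = 7) : Gq n * Hq n = 0 := by
  ext m
  rw [mul_apply'']
  simp only [Gq_apply, Hq_apply, mul_one]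
  rw [sum_chi n hn8]
  simp

lemma idG2 (hn8 : n % 8 = 7) : Gq n * Gq n = Hq n - Cc n (n : ℤ_[2]) := by
  ext m
  rw [mul_apply'']
  simp only [Gq_apply]
  rw [conv_chi n hn8 m, AddMonoidAlgebra.coeff_sub, Finsupp.sub_apply, Hq_apply, Cc_apply]
  by_cases h : m = 0 <;> simp [h]

lemma barA_Gq (hn8 : n % 8 = 7) : barA n (Gq n) = - Gq n := by
  ext m
  rw [barA_apply, Gq_apply, AddMonoidAlgebra.coeff_neg, Finsupp.neg_apply, Gq_apply, chi_neg n hn8]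

end QRC

open Polynomial
open scoped Classical

set_option linter.unusedSectionVars false
noncomputable section QRD

variable (n : ℕ) [hp : Fact (Nat.Prime n)]

lemma Cc_eq_sg (r : ℤ_[2]) : Cc n r = sg n 0 r := by
  ext m
  rw [Cc_apply, AddMonoidAlgebra.coeff_single, Finsupp.single_apply]
  by_cases h : m = 0 <;> simp [h, eq_comm]

lemma eps_sg (k : ZMod n) (r : ℤ_[2]) : eps n (sg n k r) = r := by
  rw [eps]
  simp [Finsupp.single_apply]

lemma eps_add (f g : Aq n) : eps n (f + g) = eps n f + eps n g := by
  rw [eps, eps, eps, ← Finset.sum_add_distrib]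
  exact Finset.sum_congr rfl (fun m _ => Finsupp.add_apply f.coeff g.coeff m)

lemma mulHqC (f : Aq n) : f * Hq n = Cc n (eps n f) * Hq n := by
  rw [mulHq, Algebra.smul_def]

lemma barA_sg (k : ZMod n) (r : ℤ_[2]) : barA n (sg n k r) = sg n (-k) r := by
  rw [barA, AddMonoidAlgebra.domCongr_single]
  rfl

/-- reindexing sums over `Ico 1 n` by nonzero elements of `ZMod n` -/
lemma sum_Ico_zmod {M : Type*} [AddCommMonoid M] (g : ZMod n → M) :
    ∑ k ∈ Finset.Ico 1 n, g ((k : ZMod n)) = ∑ m ∈ Finset.univ.erase (0 : ZMod n), g m := by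
  refine Finset.sum_nbij' (i := fun k : ℕ => ((k : ZMod n))) (j := fun m : ZMod n => m.val)
    ?_ ?_ ?_ ?_ ?_
  · intro a ha
    rw [Finset.mem_Ico] at ha
    refine Finset.mem_erase.mpr ⟨?_, Finset.mem_univ _⟩
    intro h0
    have h0' : ((a : ZMod n)) = 0 := h0
    have : ((a : ZMod n)).val = a := ZMod.val_cast_of_lt ha.2
    rw [h0', ZMod.val_zero] at this
    omega
  · intro m hm
    have hm0 : m ≠ 0 := (Finset.mem_erase.mp hm).1
    refine Finset.mem_Ico.mpr ⟨?_, ZMod.val_lt m⟩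
    have : m.val ≠ 0 := fun h => hm0 (by rwa [ZMod.val_eq_zero] at h)
    exact Nat.one_le_iff_ne_zero.mpr this
  · intro a ha
    rw [Finset.mem_Ico] at ha
    exact ZMod.val_cast_of_lt ha.2
  · intro m hm
    exact ZMod.natCast_rightInverse m
  · intro a ha
    rfl

lemma psi_fQ : psi n (fQpoly n)
    = ∑ m ∈ Finset.univ.erase (0 : ZMod n), (if IsSquare m then sg n m 1 else 0) := by
  rw [fQpoly, map_sum]
  simp only [psi_X_pow]
  rw [Finset.sum_filter]
  have h := sum_Ico_zmod n (fun m => if IsSquare m then sg n m 1 else 0)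
  convert h using 3

lemma psi_fN : psi n (fNpoly n)
    = ∑ m ∈ Finset.univ.erase (0 : ZMod n), (if ¬ IsSquare m then sg n m 1 else 0) := by
  rw [fNpoly, map_sum]
  simp only [psi_X_pow]
  rw [Finset.sum_filter]
  have h := sum_Ico_zmod n (fun m => if ¬ IsSquare m then sg n m 1 else 0)
  convert h using 3

lemma hFQN : psi n (fQpoly n) + psi n (fNpoly n) = Hq n - 1 := by
  rw [psi_fQ, psi_fN, ← Finset.sum_add_distrib]
  have h1 : ∀ m ∈ Finset.univ.erase (0 : ZMod n),
      ((if IsSquare m then sg n m 1 else 0) + (if ¬ IsSquare m then sg n m 1 else 0))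
        = sg n m 1 := by
    intro m _
    by_cases h : IsSquare m <;> simp [h]
  rw [Finset.sum_congr rfl h1]
  have h2 : Hq n = sg n 0 1 + ∑ m ∈ Finset.univ.erase (0 : ZMod n), sg n m 1 :=
    (Finset.add_sum_erase _ _ (Finset.mem_univ (0 : ZMod n))).symm
  rw [h2, AddMonoidAlgebra.one_def]
  abel

lemma chi_eq_one {m : ZMod n} (hm : m ≠ 0) (h : IsSquare m) : chi n m = 1 := by
  rw [chi, (quadraticChar_one_iff_isSquare hm).mpr h, Int.cast_one]

lemma chi_eq_neg_one {m : ZMod n} (h : ¬ IsSquare m) : chi n m = -1 := by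
  rw [chi, quadraticChar_neg_one_iff_not_isSquare.mpr h]
  norm_num

lemma hFQG : psi n (fQpoly n) - psi n (fNpoly n) = Gq n := by
  rw [psi_fQ, psi_fN, ← Finset.sum_sub_distrib]
  have h1 : ∀ m ∈ Finset.univ.erase (0 : ZMod n),
      ((if IsSquare m then sg n m 1 else 0) - (if ¬ IsSquare m then sg n m 1 else 0))
        = sg n m (chi n m) := by
    intro m hm
    have hm0 : m ≠ 0 := (Finset.mem_erase.mp hm).1
    by_cases h : IsSquare m
    · rw [chi_eq_one n hm0 h]; simp [h]
    · rw [chi_eq_neg_one n h]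
      have hneg : sg n m (-1 : ℤ_[2]) = - sg n m 1 := by
        rw [← AddMonoidAlgebra.single_neg]
      rw [hneg]
      simp [h]
  rw [Finset.sum_congr rfl h1]
  have h2 : Gq n = sg n 0 (chi n 0) + ∑ m ∈ Finset.univ.erase (0 : ZMod n), sg n m (chi n m) :=
    (Finset.add_sum_erase _ _ (Finset.mem_univ (0 : ZMod n))).symm
  rw [h2, chi_zero]
  simp

def iot (c : Fin n → ℤ_[2]) : Aq n := ∑ j : Fin n, sg n ((j : ℕ) : ZMod n) (c j)

lemma iot_apply (c : Fin n → ℤ_[2]) (m : ZMod n) :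
    iot n c m = c ⟨m.val, ZMod.val_lt m⟩ := by
  rw [iot, AddMonoidAlgebra.coeff_sum, Finsupp.finset_sum_apply]
  rw [Finset.sum_eq_single (⟨m.val, ZMod.val_lt m⟩ : Fin n)]
  · rw [AddMonoidAlgebra.coeff_single, Finsupp.single_apply, if_pos]
    exact ZMod.natCast_rightInverse m
  · intro j _ hj
    rw [AddMonoidAlgebra.coeff_single, Finsupp.single_apply, if_neg]
    intro h
    apply hj
    apply Fin.ext
    have := congrArg ZMod.val h
    rwa [ZMod.val_cast_of_lt j.isLt] at this
  · intro h
    exact absurd (Finset.mem_univ _) h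

lemma iot_of_fun (f : Aq n) : iot n (fun j : Fin n => f ((j : ℕ) : ZMod n)) = f := by
  ext m
  rw [iot_apply]
  congr 1
  exact ZMod.natCast_rightInverse m

def finToZMod : Fin n ≃ ZMod n where
  toFun j := ((j : ℕ) : ZMod n)
  invFun m := ⟨m.val, ZMod.val_lt m⟩
  left_inv j := by
    apply Fin.ext
    simp [ZMod.val_cast_of_lt j.isLt]
  right_inv m := ZMod.natCast_rightInverse m

lemma eps_iot (c : Fin n → ℤ_[2]) : eps n (iot n c) = ∑ j, c j := by
  rw [eps]
  rw [← Equiv.sum_comp (finToZMod n) (fun m => iot n c m)]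
  apply Finset.sum_congr rfl
  intro j _
  rw [iot_apply]
  congr 1
  apply Fin.ext
  simp [finToZMod, ZMod.val_cast_of_lt j.isLt]

lemma pair_iot (v w : Fin n → ℤ_[2]) :
    ∑ m : ZMod n, iot n v m * iot n w m = ∑ j, v j * w j := by
  rw [← Equiv.sum_comp (finToZMod n) (fun m => iot n v m * iot n w m)]
  apply Finset.sum_congr rfl
  intro j _
  rw [iot_apply, iot_apply]
  have : (⟨((finToZMod n) j).val, ZMod.val_lt _⟩ : Fin n) = j := by
    apply Fin.ext
    simp [finToZMod, ZMod.val_cast_of_lt j.isLt]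
  rw [this]

lemma iot_eq (c : Fin n → ℤ_[2]) :
    iot n c = psiBar n (Ideal.Quotient.mk _ (∑ j : Fin n, C (c j) * X ^ (j : ℕ))) := by
  rw [psiBar_mk, map_sum, iot]
  apply Finset.sum_congr rfl
  intro j _
  rw [map_mul, psi_X_pow]
  have hC : psi n (C (c j)) = Cc n (c j) := by
    rw [psi, aeval_C]
  rw [hC, Cc_eq_sg, AddMonoidAlgebra.single_mul_single, zero_add, mul_one]

lemma qrCode_iff (α β γ : ℤ_[2]) (c : Fin n → ℤ_[2]) :
    c ∈ qrCode n α β γ ↔ iot n c ∈ Ideal.span {psiBar n (qrIdempotent n α β γ)} := by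
  rw [qrCode, Set.mem_setOf_eq, iot_eq]
  exact mem_span_iff_psiBar n hp.out.one_lt _ _

lemma Eel_expand (α β γ : ℤ_[2]) :
    psiBar n (qrIdempotent n α β γ)
      = Cc n α + Cc n β * psi n (fQpoly n) + Cc n γ * psi n (fNpoly n) := by
  rw [qrIdempotent, psiBar_mk, map_add, map_add, map_mul, map_mul]
  rw [show psi n (C α) = Cc n α from by rw [psi, aeval_C],
    show psi n (C β) = Cc n β from by rw [psi, aeval_C],
    show psi n (C γ) = Cc n γ from by rw [psi, aeval_C]]

end QRD

open Polynomial
open scoped Classical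

theorem stmt18 (n : ℕ) (hn : n.Prime) (hn8 : n % 8 = 7)
    (s : ℤ_[2]) (hs : s ^ 2 = -(n : ℤ_[2]))
    (α β γ : ℤ_[2])
    (hα : 2 * (n : ℤ_[2]) * α = n + 1)
    (hβ : 2 * (n : ℤ_[2]) * β = 1 + s)
    (hγ : 2 * (n : ℤ_[2]) * γ = 1 - s)
    (t : ℤ_[2]) (ht : (n : ℤ_[2]) * t ^ 2 = -1) :
    qrCodeExt n α β γ t =
      {v : Fin (n + 1) → ℤ_[2] | ∀ w ∈ qrCodeExt n α β γ t, ∑ i, v i * w i = 0} := by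
  haveI hp : Fact (Nat.Prime n) := ⟨hn⟩
  have hnz : (n : ℤ_[2]) ≠ 0 := Nat.cast_ne_zero.mpr hn.ne_zero
  have h2nz : (2 : ℤ_[2]) ≠ 0 := by norm_num
  set E : Aq n := psiBar n (qrIdempotent n α β γ) with hEdef
  have hC2 : (Cc n (2 : ℤ_[2])) = (2 : Aq n) := map_ofNat _ 2
  have hC4 : (Cc n (4 : ℤ_[2])) = (4 : Aq n) := map_ofNat _ 4
  -- mapped scalar relations
  have hα' : 2 * Cc n ((n : ℤ_[2])) * Cc n α = Cc n ((n : ℤ_[2])) + 1 := by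
    calc 2 * Cc n ((n : ℤ_[2])) * Cc n α = Cc n (2 * (n : ℤ_[2]) * α) := by
          rw [map_mul, map_mul, hC2]
      _ = Cc n ((n : ℤ_[2]) + 1) := by rw [hα]
      _ = Cc n ((n : ℤ_[2])) + 1 := by rw [map_add, map_one]
  have hβ' : 2 * Cc n ((n : ℤ_[2])) * Cc n β = 1 + Cc n s := by
    calc 2 * Cc n ((n : ℤ_[2])) * Cc n β = Cc n (2 * (n : ℤ_[2]) * β) := by
          rw [map_mul, map_mul, hC2]
      _ = Cc n (1 + s) := by rw [hβ]
      _ = 1 + Cc n s := by rw [map_add, map_one]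
  have hγ' : 2 * Cc n ((n : ℤ_[2])) * Cc n γ = 1 - Cc n s := by
    calc 2 * Cc n ((n : ℤ_[2])) * Cc n γ = Cc n (2 * (n : ℤ_[2]) * γ) := by
          rw [map_mul, map_mul, hC2]
      _ = Cc n (1 - s) := by rw [hγ]
      _ = 1 - Cc n s := by rw [map_sub, map_one]
  have hs' : Cc n s * Cc n s = -(Cc n ((n : ℤ_[2]))) := by
    have h1 : s * s = -((n : ℤ_[2])) := by rw [← pow_two, hs]
    rw [← map_mul, h1, map_neg]
  -- the fundamental identity for the idempotent
  have hKE : 2 * Cc n ((n : ℤ_[2])) * E = Cc n ((n : ℤ_[2])) + Hq n + Cc n s * Gq n := by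
    rw [hEdef, Eel_expand]
    linear_combination hα' + psi n (fQpoly n) * hβ' + psi n (fNpoly n) * hγ'
      + hFQN n + Cc n s * hFQG n
  have hKEbar : 2 * Cc n ((n : ℤ_[2])) * barA n E
      = Cc n ((n : ℤ_[2])) + Hq n - Cc n s * Gq n := by
    have h0 := congrArg (barA n) hKE
    simp only [map_mul, map_add, map_ofNat, AlgEquiv.commutes, barA_Hq,
      barA_Gq n hn8] at h0
    linear_combination h0
  have hplus : Cc n ((n : ℤ_[2])) * (E + barA n E) = Cc n ((n : ℤ_[2])) + Hq n := by
    apply Cc_cancel n h2nz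
    rw [hC2]
    linear_combination hKE + hKEbar
  have hprod : (2 * Cc n ((n : ℤ_[2])) * E) * (2 * Cc n ((n : ℤ_[2])) * barA n E)
      = 4 * Cc n ((n : ℤ_[2])) * Hq n := by
    rw [hKE, hKEbar]
    linear_combination idH n + Cc n ((n : ℤ_[2])) * idG2 n hn8 - Gq n * Gq n * hs'
  have h2n : (2 : ℤ_[2]) * (n : ℤ_[2]) ≠ 0 := mul_ne_zero h2nz hnz
  have epsE : eps n E = 1 := by
    have h0 := congrArg (eps n) hKE
    have e1 : (2 : Aq n) * Cc n ((n : ℤ_[2])) * E = Cc n (2 * (n : ℤ_[2])) * E := by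
      rw [map_mul, hC2]
    rw [e1, eps_mul, eps_Cc] at h0
    have e2 : eps n (Cc n ((n : ℤ_[2])) + Hq n + Cc n s * Gq n) = 2 * (n : ℤ_[2]) := by
      rw [eps_add, eps_add, eps_mul, eps_Cc, eps_Cc, eps_H, eps_G n hn8, mul_zero, add_zero]
      ring
    rw [e2] at h0
    have h0' : 2 * (n : ℤ_[2]) * eps n E = 2 * (n : ℤ_[2]) * 1 := by
      rw [mul_one]; linear_combination h0
    exact mul_left_cancel₀ h2n h0'
  -- now the set equality
  ext v
  simp only [Set.mem_setOf_eq]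
  constructor
  · rintro ⟨c, hc, rfl⟩ w hw
    obtain ⟨d, hd, rfl⟩ := hw
    obtain ⟨a, ha⟩ := Ideal.mem_span_singleton.mp ((qrCode_iff n α β γ c).mp hc)
    obtain ⟨b, hb⟩ := Ideal.mem_span_singleton.mp ((qrCode_iff n α β γ d).mp hd)
    rw [Fin.sum_univ_castSucc]
    simp only [Fin.snoc_castSucc, Fin.snoc_last]
    have hεc : ∑ j, c j = eps n a := by
      rw [← eps_iot, ha, eps_mul, epsE, one_mul]
    have hεd : ∑ j, d j = eps n b := by
      rw [← eps_iot, hb, eps_mul, epsE, one_mul]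
    have hpair : (∑ j : Fin n, c j * d j) = (iot n c * barA n (iot n d)) 0 := by
      rw [pair_eq, pair_iot]
    have hmain : Cc n (4 * (n : ℤ_[2]) ^ 2) * (iot n c * barA n (iot n d))
        = Cc n (4 * (n : ℤ_[2]) * (eps n a * eps n b)) * Hq n := by
      have e1 : Cc n (4 * (n : ℤ_[2]) ^ 2)
          = (2 * Cc n ((n : ℤ_[2]))) * (2 * Cc n ((n : ℤ_[2]))) := by
        rw [show (4 * (n:ℤ_[2])^2) = (2*(n:ℤ_[2]))*(2*(n:ℤ_[2])) from by ring]
        simp only [map_mul, hC2]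
      calc Cc n (4 * (n : ℤ_[2]) ^ 2) * (iot n c * barA n (iot n d))
          = ((2 * Cc n ((n : ℤ_[2])) * E) * (2 * Cc n ((n : ℤ_[2])) * barA n E))
              * (a * barA n b) := by
            rw [e1, ha, hb, map_mul]; ring
        _ = (4 * Cc n ((n : ℤ_[2])) * Hq n) * (a * barA n b) := by rw [hprod]
        _ = 4 * Cc n ((n : ℤ_[2])) * ((a * barA n b) * Hq n) := by ring
        _ = 4 * Cc n ((n : ℤ_[2])) * (Cc n (eps n (a * barA n b)) * Hq n) := by rw [← mulHqC]
        _ = Cc n (4 * (n : ℤ_[2]) * (eps n a * eps n b)) * Hq n := by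
            rw [eps_mul, eps_barA]
            simp only [map_mul, hC2, hC4]
            ring
    have hS := congrArg (fun f : Aq n => f 0) hmain
    rw [Cc_mul_apply, Cc_mul_apply, Hq_apply, mul_one] at hS
    rw [hεc, hεd]
    have h4 : (4 * (n : ℤ_[2]) ^ 2) ≠ 0 := by
      have h4' : (4 : ℤ_[2]) ≠ 0 := by norm_num
      exact mul_ne_zero h4' (pow_ne_zero 2 hnz)
    apply mul_left_cancel₀ h4
    rw [mul_zero]
    rw [hpair]
    linear_combination hS + 4 * (n : ℤ_[2]) * (eps n a) * (eps n b) * ht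
  · intro hv
    have hcoef : ∀ k : ZMod n, ((iot n (Fin.init v)) * barA n E) k
        = -(v (Fin.last n) * t) := by
      intro k
      have hiot : iot n (fun j : Fin n => (E * sg n k 1) ((j : ℕ) : ZMod n)) = E * sg n k 1 :=
        iot_of_fun n _
      have hdk_code : (fun j : Fin n => (E * sg n k 1) ((j : ℕ) : ZMod n)) ∈ qrCode n α β γ := by
        rw [qrCode_iff, hiot]
        exact Ideal.mem_span_singleton.mpr ⟨sg n k 1, rfl⟩
      have hsd : ∑ j : Fin n, (E * sg n k 1) ((j : ℕ) : ZMod n) = 1 := by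
        have h0 := eps_iot n (fun j : Fin n => (E * sg n k 1) ((j : ℕ) : ZMod n))
        rw [hiot] at h0
        rw [← h0, eps_mul, epsE, eps_sg, one_mul]
      have hw := hv _ ⟨_, hdk_code, rfl⟩
      rw [Fin.sum_univ_castSucc] at hw
      simp only [Fin.snoc_castSucc, Fin.snoc_last] at hw
      rw [hsd, mul_one] at hw
      have echain : (∑ j : Fin n, v j.castSucc * (E * sg n k 1) ((j : ℕ) : ZMod n) : ℤ_[2])
          = ((iot n (Fin.init v)) * barA n E) k := by
        calc (∑ j : Fin n, v j.castSucc * (E * sg n k 1) ((j : ℕ) : ZMod n) : ℤ_[2])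
            = ∑ m : ZMod n, iot n (Fin.init v) m
                * iot n (fun j : Fin n => (E * sg n k 1) ((j : ℕ) : ZMod n)) m :=
              (pair_iot n _ _).symm
          _ = (iot n (Fin.init v)
                * barA n (iot n (fun j : Fin n => (E * sg n k 1) ((j : ℕ) : ZMod n)))) 0 :=
              (pair_eq n _ _).symm
          _ = (iot n (Fin.init v) * (barA n E * barA n (sg n k 1))) 0 := by
              rw [hiot, map_mul]
          _ = ((iot n (Fin.init v) * barA n E) * sg n (-k) 1) 0 := by
              rw [barA_sg, mul_assoc]
          _ = ((iot n (Fin.init v) * barA n E)) (0 - (-k)) * 1 :=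
              by rw [AddMonoidAlgebra.coeff_mul_single_apply, sub_eq_add_neg]
          _ = ((iot n (Fin.init v) * barA n E)) k := by
              rw [mul_one, zero_sub, neg_neg]
      rw [echain] at hw
      linear_combination hw
    have hWE : (iot n (Fin.init v)) * barA n E = Cc n (-(v (Fin.last n) * t)) * Hq n := by
      ext m
      rw [Cc_mul_apply, Hq_apply, mul_one, hcoef m]
    have hepsW : eps n (iot n (Fin.init v)) = -(v (Fin.last n) * t) * (n : ℤ_[2]) := by
      have h0 := congrArg (eps n) hWE
      rw [eps_mul, eps_barA, epsE, mul_one, eps_mul, eps_Cc, eps_H] at h0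
      exact h0
    have hEW : E * (iot n (Fin.init v)) = iot n (Fin.init v) := by
      have eq1 : (Cc n ((n : ℤ_[2])) * (E + barA n E)) * (iot n (Fin.init v))
          = (Cc n ((n : ℤ_[2])) + Hq n) * (iot n (Fin.init v)) := by rw [hplus]
      have eq3 : (iot n (Fin.init v)) * Hq n = Cc n (eps n (iot n (Fin.init v))) * Hq n :=
        mulHqC n _
      have eA : Cc n ((n : ℤ_[2])) * ((iot n (Fin.init v)) * barA n E)
          = Cc n (eps n (iot n (Fin.init v))) * Hq n := by
        rw [hWE, hepsW, ← mul_assoc, ← map_mul]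
        have h1 : (n : ℤ_[2]) * -(v (Fin.last n) * t) = -(v (Fin.last n) * t) * (n : ℤ_[2]) := by
          ring
        rw [h1]
      exact Cc_cancel n hnz (by linear_combination eq1 - eA + eq3)
    refine ⟨Fin.init v, (qrCode_iff n α β γ _).mpr
      (Ideal.mem_span_singleton.mpr ⟨iot n (Fin.init v), hEW.symm⟩), ?_⟩
    have hsumc : ∑ j, Fin.init v j = -(v (Fin.last n) * t) * (n : ℤ_[2]) := by
      rw [← eps_iot]; exact hepsW
    have hlast : t * ∑ j, Fin.init v j = v (Fin.last n) := by
      rw [hsumc]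
      linear_combination (-(v (Fin.last n))) * ht
    rw [hlast]
    exact (Fin.snoc_init_self v).symm
end

section
/- There exists λ ∈ ℤ_2 with λ² − λ + 2 = 0, and for any such λ one has the factorization X^7 − 1 = (X − 1)·(X³ + λX² + (λ−1)X − 1)·(X³ − (λ−1)X² − λX − 1) in ℤ_2[X]; moreover both cubic factors X³ + λX² + (λ−1)X − 1 and X³ − (λ−1)X² − λX − 1 are irreducible in ℤ_2[X]. -/
open Polynomial

lemma aux1 (e : ZMod 2) :
    Irreducible (X^3 + C e * X^2 + C (e-1) * X - 1 : (ZMod 2)[X]) := by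
  have hdeg : (X^3 + C e * X^2 + C (e-1) * X - 1 : (ZMod 2)[X]).natDegree = 3 := by
    compute_degree!
  rw [irreducible_iff_roots_eq_zero_of_degree_le_three (by omega) (by omega)]
  rw [Multiset.eq_zero_iff_forall_notMem]
  intro x hx
  rw [mem_roots'] at hx
  obtain ⟨-, hx⟩ := hx
  simp [IsRoot] at hx
  clear hdeg
  revert hx
  revert x
  revert e
  decide

lemma aux2 (e : ZMod 2) :
    Irreducible (X^3 - C (e-1) * X^2 - C e * X - 1 : (ZMod 2)[X]) := by
  have hdeg : (X^3 - C (e-1) * X^2 - C e * X - 1 : (ZMod 2)[X]).natDegree = 3 := by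
    compute_degree!
  rw [irreducible_iff_roots_eq_zero_of_degree_le_three (by omega) (by omega)]
  rw [Multiset.eq_zero_iff_forall_notMem]
  intro x hx
  rw [mem_roots'] at hx
  obtain ⟨-, hx⟩ := hx
  simp [IsRoot] at hx
  clear hdeg
  revert hx
  revert x
  revert e
  decide

theorem stmt19 :
    (∃ lam : ℤ_[2], lam ^ 2 - lam + 2 = 0) ∧
    ∀ lam : ℤ_[2], lam ^ 2 - lam + 2 = 0 →
      ((X ^ 7 - 1 : Polynomial ℤ_[2]) =
        (X - 1) * (X ^ 3 + C lam * X ^ 2 + C (lam - 1) * X - 1) *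
          (X ^ 3 - C (lam - 1) * X ^ 2 - C lam * X - 1)) ∧
      Irreducible (X ^ 3 + C lam * X ^ 2 + C (lam - 1) * X - 1 : Polynomial ℤ_[2]) ∧
      Irreducible (X ^ 3 - C (lam - 1) * X ^ 2 - C lam * X - 1 : Polynomial ℤ_[2]) := by
  constructor
  · -- existence via Hensel's lemma
    have h : ‖(X^2 - X + 2 : Polynomial ℤ_[2]).eval 0‖ <
        ‖(derivative (X^2 - X + 2 : Polynomial ℤ_[2])).eval 0‖ ^ 2 := by
      have h2 : ‖(2 : ℤ_[2])‖ < 1 := by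
        rw [PadicInt.norm_lt_one_iff_dvd]; exact_mod_cast dvd_refl (2:ℤ_[2])
      simpa using h2
    obtain ⟨z, hz, -⟩ := hensels_lemma h
    refine ⟨z, ?_⟩
    simpa using hz
  · intro lam h
    refine ⟨?_, ?_, ?_⟩
    · have hC : (C lam)^2 - C lam + 2 = (0 : Polynomial ℤ_[2]) := by
        have := congrArg C h
        simpa [map_ofNat C] using this
      rw [show (C (lam-1) : Polynomial ℤ_[2]) = C lam - 1 by simp]
      linear_combination ((X-1)*(X^4+2*X^3+X^2) : Polynomial ℤ_[2]) * hC
    · apply Monic.irreducible_of_irreducible_map (PadicInt.toZMod)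
      · monicity!
      · have hmap : (X ^ 3 + C lam * X ^ 2 + C (lam - 1) * X - 1 :
            Polynomial ℤ_[2]).map (PadicInt.toZMod) =
            (X ^ 3 + C (PadicInt.toZMod lam) * X ^ 2 +
              C (PadicInt.toZMod lam - 1) * X - 1) := by
          simp
        rw [hmap]
        exact aux1 _
    · apply Monic.irreducible_of_irreducible_map (PadicInt.toZMod)
      · monicity!
      · have hmap : (X ^ 3 - C (lam - 1) * X ^ 2 - C lam * X - 1 :
            Polynomial ℤ_[2]).map (PadicInt.toZMod) =
            (X ^ 3 - C (PadicInt.toZMod lam - 1) * X ^ 2 -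
              C (PadicInt.toZMod lam) * X - 1) := by
          simp
        rw [hmap]
        exact aux2 _
end
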